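/- arXiv:1410.5067 — 11 statements merged into one kernel-verified Lean document; each statement's English description precedes it below -/
import Mathlib

section
/- Let L/K be a quadratic field extension, E an étale L-algebra of rank n with a K-linear involution σ restricting to the nontrivial automorphism of L/K, and F = E^σ with dim_K F = n. For a ∈ F^×, the determinant of the hermitian form T_a(x,y) = Tr_{E/L}(a x σ(y)) satisfies det(T_a) = N_{F/K}(a) · det(T_1) in K^×/N_{L/K}(L^×). -/
universe u

open Matrix

/-- The `K`-subalgebra of fixed points of a `K`-linear algebra involution. -/
def fixedSubalgebra {K E : Type*} [CommSemiring K] [Semiring E] [Algebra K E]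
    (σ : E →ₐ[K] E) : Subalgebra K E where
  carrier := {x | σ x = x}
  mul_mem' hx hy := by simp_all
  add_mem' hx hy := by simp_all
  one_mem' := by simp
  zero_mem' := by simp
  algebraMap_mem' r := by simp

/-- Scaling the hermitian trace form by `a` multiplies the Gram determinant by the
norm of `a`. -/
lemma det_scaled_gram {L E ι : Type*} [Field L] [CommRing E] [Algebra L E]
    [Module.Finite L E] [Fintype ι] [DecidableEq ι]
    (b : Module.Basis ι L E) (a : E) (σ : E → E) :
    (Matrix.of fun i j => Algebra.trace L E (a * b i * σ (b j))).det
      = Algebra.norm L a * (Matrix.of fun i j => Algebra.trace L E (b i * σ (b j))).det := by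
  have key : (Matrix.of fun i j => Algebra.trace L E (a * b i * σ (b j)))
      = (Algebra.leftMulMatrix b a)ᵀ
        * (Matrix.of fun i j => Algebra.trace L E (b i * σ (b j))) := by
    ext i j
    rw [Matrix.mul_apply]
    have hrepr : a * b i = ∑ k, b.repr (a * b i) k • b k := (b.sum_repr (a * b i)).symm
    calc Algebra.trace L E (a * b i * σ (b j))
        = Algebra.trace L E ((∑ k, b.repr (a * b i) k • b k) * σ (b j)) := by rw [← hrepr]
      _ = ∑ k, b.repr (a * b i) k * Algebra.trace L E (b k * σ (b j)) := by
          rw [Finset.sum_mul]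
          simp [smul_mul_assoc, map_sum]
      _ = ∑ k, (Algebra.leftMulMatrix b a)ᵀ i k
            * (Matrix.of fun i j => Algebra.trace L E (b i * σ (b j))) k j := by
          refine Finset.sum_congr rfl fun k _ => ?_
          rw [Matrix.transpose_apply, Algebra.leftMulMatrix_eq_repr_mul]
          rfl
  rw [key, Matrix.det_mul, Matrix.det_transpose, Algebra.norm_eq_matrix_det b a]

/-- Let `L/K` be a quadratic field extension, `E` an étale `L`-algebra of
rank `n` with a `K`-linear involution `σ` restricting to the nontrivial automorphism `s` of
`L/K`, and `F = E^σ` with `dim_K F = n`.  For `a ∈ F^×`, the determinant of the hermitian form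
`T_a(x,y) = Tr_{E/L}(a x σ(y))` satisfies `det(T_a) = N_{F/K}(a) · det(T_1)` in
`K^×/N_{L/K}(L^×)` (determinants taken with respect to an `L`-basis `b` of `E`). -/
theorem det_hermitian_scaled_trace_form
    (K L : Type u) [Field K] [Field L] [Algebra K L]
    (hKL : Module.finrank K L = 2)
    (s : L ≃ₐ[K] L) (hs : s ≠ AlgEquiv.refl)
    (E : Type u) [CommRing E] [Algebra L E] [Algebra K E] [IsScalarTower K L E]
    [Module.Finite L E] [Algebra.Etale L E] [Module.Finite K E]
    (n : ℕ) (hrank : Module.finrank L E = n)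
    (σ : E →ₐ[K] E) (hσ : ∀ x, σ (σ x) = x)
    (hσL : ∀ l : L, σ (algebraMap L E l) = algebraMap L E (s l))
    (hF : Module.finrank K (fixedSubalgebra σ) = n)
    (a : E) (ha : IsUnit a) (haσ : σ a = a)
    (ι : Type u) [Fintype ι] [DecidableEq ι] (b : Module.Basis ι L E) :
    ∃ l : L, l ≠ 0 ∧
      (Matrix.of fun i j => Algebra.trace L E (a * b i * σ (b j))).det
        = algebraMap K L
            (Algebra.norm K (⟨a, haσ⟩ : fixedSubalgebra σ) * Algebra.norm K l) *
          (Matrix.of fun i j => Algebra.trace L E (b i * σ (b j))).det := by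
  refine ⟨1, one_ne_zero, ?_⟩
  rw [_root_.map_one, mul_one]
  set F := fixedSubalgebra σ with hFdef
  by_cases hE : Subsingleton E
  · -- trivial case: everything is `1`
    haveI : IsEmpty ι := by
      by_contra h
      rw [not_isEmpty_iff] at h
      obtain ⟨i⟩ := h
      have : (Finsupp.single i (1:L)) = 0 := by
        apply b.repr.symm.injective
        exact Subsingleton.elim _ _
      simpa using DFunLike.congr_fun this i
    haveI : Subsingleton F := ⟨fun x y => Subtype.ext (Subsingleton.elim _ _)⟩
    have h1 : (⟨a, haσ⟩ : F) = 1 := Subsingleton.elim _ _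
    rw [h1, _root_.map_one, _root_.map_one, one_mul]
    rw [Matrix.det_isEmpty, Matrix.det_isEmpty]
  · haveI : Nontrivial E := not_subsingleton_iff_nontrivial.mp hE
    haveI : FiniteDimensional K E := ‹Module.Finite K E›
    haveI : FiniteDimensional K F := FiniteDimensional.finiteDimensional_submodule
      (Subalgebra.toSubmodule F)
    rw [det_scaled_gram b a σ]
    congr 1
    -- It remains to show `Algebra.norm L a = algebraMap K L (Algebra.norm K ⟨a, haσ⟩)`.
    have hinj : Function.Injective (algebraMap L E) := (algebraMap L E).injective
    -- `s` is an involution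
    have hss : ∀ l : L, s (s l) = l := by
      intro l
      apply hinj
      rw [← hσL, ← hσL, hσ]
    -- pick `lam` with `s lam ≠ lam`
    obtain ⟨lam, hlam⟩ : ∃ lam : L, s lam ≠ lam := by
      by_contra h
      push_neg at h
      exact hs (AlgEquiv.ext h)
    -- σ commutes with L-scalars via s
    have hsmul : ∀ (c : L) (y : E), σ (c • y) = (s c) • σ y := by
      intro c y
      rw [Algebra.smul_def, _root_.map_mul, hσL, Algebra.smul_def]
    -- a K-basis of F
    let m := Module.finrank K F
    let f : Module.Basis (Fin m) K F := Module.finBasis K F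
    let g : Fin m → E := fun i => (f i : E)
    -- elements of F lie in the L-span of g
    have hFspan : ∀ y : E, σ y = y → y ∈ Submodule.span L (Set.range g) := by
      intro y hy
      have h1 : ((⟨y, hy⟩ : F) : E) = ∑ i, f.repr ⟨y, hy⟩ i • g i := by
        conv_lhs => rw [← f.sum_repr ⟨y, hy⟩]
        push_cast
        rfl
      rw [show y = ((⟨y, hy⟩ : F) : E) from rfl, h1]
      refine Submodule.sum_mem _ fun i _ => ?_
      rw [← algebraMap_smul L (f.repr ⟨y, hy⟩ i) (g i)]
      exact Submodule.smul_mem _ _ (Submodule.subset_span ⟨i, rfl⟩)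
    -- g spans E over L
    have hspan : ⊤ ≤ Submodule.span L (Set.range g) := by
      intro x _
      have hf1 : σ (x + σ x) = x + σ x := by rw [_root_.map_add, hσ]; ring
      have hf2 : σ (lam • x + σ (lam • x)) = lam • x + σ (lam • x) := by
        rw [_root_.map_add, hσ]; ring
      have hkey : (lam - s lam) • x
          = (lam • x + σ (lam • x)) - (s lam) • (x + σ x) := by
        rw [hsmul, smul_add, sub_smul]
        abel
      have hmem : (lam - s lam) • x ∈ Submodule.span L (Set.range g) := by
        rw [hkey]
        exact Submodule.sub_mem _ (hFspan _ hf2) (Submodule.smul_mem _ _ (hFspan _ hf1))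
      have hne : lam - s lam ≠ 0 := sub_ne_zero.mpr (Ne.symm hlam)
      have : x = (lam - s lam)⁻¹ • ((lam - s lam) • x) := by
        rw [smul_smul, inv_mul_cancel₀ hne, one_smul]
      rw [this]
      exact Submodule.smul_mem _ _ hmem
    have hcard : Fintype.card (Fin m) = Module.finrank L E := by
      simp only [Fintype.card_fin, m]
      rw [hF, hrank]
    let b' : Module.Basis (Fin m) L E := basisOfTopLeSpanOfCardEqFinrank g hspan hcard
    have hb' : ∀ i, b' i = F.val (f i) := fun i =>
      congrFun (coe_basisOfTopLeSpanOfCardEqFinrank g hspan hcard) i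
    -- the left multiplication matrix of a on E w.r.t. b' is the image of that on F
    have hmat : Algebra.leftMulMatrix b' a
        = (algebraMap K L).mapMatrix (Algebra.leftMulMatrix f ⟨a, haσ⟩) := by
      ext i j
      rw [RingHom.mapMatrix_apply, Matrix.map_apply,
        Algebra.leftMulMatrix_eq_repr_mul, Algebra.leftMulMatrix_eq_repr_mul]
      have h1 : a * b' j = ∑ k, (algebraMap K L (f.repr ((⟨a, haσ⟩ : F) * f j) k)) • b' k := by
        have h2 : ((⟨a, haσ⟩ : F) * f j : F) = ∑ k, f.repr ((⟨a, haσ⟩ : F) * f j) k • f k :=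
          (f.sum_repr _).symm
        have h3 := congrArg F.val h2
        simp only [map_sum, _root_.map_smul] at h3
        calc a * b' j = F.val ((⟨a, haσ⟩ : F) * f j) := by rw [hb']; rfl
          _ = ∑ k, f.repr ((⟨a, haσ⟩ : F) * f j) k • F.val (f k) := h3
          _ = ∑ k, (algebraMap K L (f.repr ((⟨a, haσ⟩ : F) * f j) k)) • b' k := by
              refine Finset.sum_congr rfl fun k _ => ?_
              rw [hb', algebraMap_smul]
      rw [h1]
      exact congrFun (b'.repr_sum_self _) i
    rw [Algebra.norm_eq_matrix_det b' a, Algebra.norm_eq_matrix_det f (⟨a, haσ⟩ : F), hmat,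
      RingHom.map_det]
end

section
/- Let A be a central simple L-algebra, E a maximal commutative étale subalgebra of A (via an embedding ε : E → A), θ an involution of A such that ε : (E,σ) → (A,θ) respects involutions, and for a in the fixed algebra F = E^σ let θ_a = θ ∘ Int(ε(a)). If α ∈ A^× satisfies: Int(α) : (A,θ_a) → (A,θ_b) is an isomorphism of algebras with involution and Int(α) ∘ ε = ε, then α = ε(y) for some y ∈ E^× and there exists λ ∈ L^× with N_{E/F}(y) = λ a b^{−1}. -/
/-- Let `A` be a central simple `L`-algebra, `ε : E → A` an embedding of a
commutative étale `L`-algebra whose image is a maximal commutative subalgebra (i.e. equal to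
its own centralizer), `θ` an involution of `A` such that `ε : (E,σ) → (A,θ)` respects the
involutions, and for `σ`-fixed units `a, b` of `E` let `θ_a = θ ∘ Int(ε(a))`,
`θ_b = θ ∘ Int(ε(b))`.  If `α ∈ A^×` is such that `Int(α) : (A,θ_a) → (A,θ_b)` is an
isomorphism of algebras with involution and `Int(α) ∘ ε = ε`, then `α = ε(y)` for some
`y ∈ E^×` and there exists `λ ∈ L^×` with `N_{E/F}(y) = λ a b⁻¹`
(equivalently `y·σ(y)·b = λ·a`). -/
theorem unit_of_int_isom_commuting_with_embedding
    (L : Type u) [Field L]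
    (A : Type u) [Ring A] [Algebra L A] [Algebra.IsCentral L A] [IsSimpleRing A]
    [FiniteDimensional L A]
    (E : Type u) [CommRing E] [Algebra L E] [Module.Finite L E] [Algebra.Etale L E]
    (σ : E →ₐ[L] E) (hσ : ∀ x, σ (σ x) = x)
    (ε : E →ₐ[L] A) (hinj : Function.Injective ε)
    (hmaxcomm : ∀ x : A, (∀ e : E, x * ε e = ε e * x) → ∃ e : E, x = ε e)
    (θ : A → A) (hθadd : ∀ x y, θ (x + y) = θ x + θ y)
    (hθmul : ∀ x y, θ (x * y) = θ y * θ x) (hθinv : ∀ x, θ (θ x) = x)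
    (hθcompat : ∀ e : E, θ (ε e) = ε (σ e))
    (a b : E) (haσ : σ a = a) (hbσ : σ b = b)
    (ai bi : E) (hai : a * ai = 1) (hbi : b * bi = 1)
    (α αi : A) (hαi : α * αi = 1) (hαi' : αi * α = 1)
    -- `Int(α) : (A, θ_a) → (A, θ_b)` is an isomorphism of algebras with involution:
    (hiso : ∀ x : A, α * θ (ε a * x * ε ai) * αi = θ (ε b * (α * x * αi) * ε bi))
    -- `Int(α) ∘ ε = ε`:
    (hcomm : ∀ e : E, α * ε e = ε e * α) :
    ∃ y : E, IsUnit y ∧ α = ε y ∧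
      ∃ lam : L, lam ≠ 0 ∧ y * σ y * b = lam • a := by
  -- αi commutes with the image of ε as well
  have hcomm' : ∀ e : E, αi * ε e = ε e * αi := by
    intro e
    calc αi * ε e = αi * ε e * (α * αi) := by rw [hαi, mul_one]
      _ = αi * (ε e * α) * αi := by simp only [mul_assoc]
      _ = αi * (α * ε e) * αi := by rw [hcomm]
      _ = (αi * α) * (ε e * αi) := by simp only [mul_assoc]
      _ = ε e * αi := by rw [hαi', one_mul]
  obtain ⟨y, hy⟩ := hmaxcomm α hcomm
  obtain ⟨y', hy'⟩ := hmaxcomm αi hcomm'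
  have hyy' : y * y' = 1 := hinj (by rw [map_mul, map_one, ← hy, ← hy', hαi])
  have hy'y : y' * y = 1 := hinj (by rw [map_mul, map_one, ← hy, ← hy', hαi'])
  have hσyy' : σ y * σ y' = 1 := by rw [← map_mul, hyy', map_one]
  -- σ fixes ai and bi
  have hσai : σ ai = ai := by
    have h1 : a * σ ai = 1 := by rw [← haσ, ← map_mul, hai, map_one]
    calc σ ai = (ai * a) * σ ai := by rw [mul_comm ai a, hai, one_mul]
      _ = ai * (a * σ ai) := mul_assoc _ _ _
      _ = ai := by rw [h1, mul_one]
  have hσbi : σ bi = bi := by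
    have h1 : b * σ bi = 1 := by rw [← hbσ, ← map_mul, hbi, map_one]
    calc σ bi = (bi * b) * σ bi := by rw [mul_comm bi b, hbi, one_mul]
      _ = bi * (b * σ bi) := mul_assoc _ _ _
      _ = bi := by rw [h1, mul_one]
  -- key identity
  have key : ∀ z : A, ε (y * ai) * z * ε (a * y') = ε (bi * σ y') * z * ε (σ y * b) := by
    intro z
    have h := hiso (θ z)
    simp only [hθmul, hθinv, hθcompat, hσai, hσbi, haσ, hbσ, hy, hy'] at h
    simp only [map_mul, mul_assoc] at h ⊢
    exact h
  -- the element b * σ y * y * ai is central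
  have e2 : (a * y') * (y * ai) = 1 := by
    have h5 : (a * y') * (y * ai) = (a * ai) * (y' * y) := by ring
    rw [h5, hai, hy'y, mul_one]
  have e3 : (b * σ y) * (bi * σ y') = 1 := by
    have h5 : (b * σ y) * (bi * σ y') = (b * bi) * (σ y * σ y') := by ring
    rw [h5, hbi, hσyy', mul_one]
  have central : ∀ z : A, ε (b * σ y * y * ai) * z = z * ε (b * σ y * y * ai) := by
    intro z
    have h2 := congrArg (fun t => ε (b * σ y) * t * ε (y * ai)) (key z)
    calc ε (b * σ y * y * ai) * z
        = ε (b * σ y * y * ai) * z * ε ((a * y') * (y * ai)) := by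
          rw [e2, map_one, mul_one]
      _ = ε (b * σ y) * (ε (y * ai) * z * ε (a * y')) * ε (y * ai) := by
          simp only [map_mul, mul_assoc]
      _ = ε (b * σ y) * (ε (bi * σ y') * z * ε (σ y * b)) * ε (y * ai) := h2
      _ = ε ((b * σ y) * (bi * σ y')) * (z * ε ((σ y * b) * (y * ai))) := by
          simp only [map_mul, mul_assoc]
      _ = z * ε (b * σ y * y * ai) := by
          rw [e3, map_one, one_mul, show (σ y * b) * (y * ai) = b * σ y * y * ai by ring]
  have hεc : ε (b * σ y * y * ai) ∈ Subalgebra.center L A :=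
    Subalgebra.mem_center_iff.mpr fun g => (central g).symm
  obtain ⟨lam, hlam⟩ := Algebra.mem_bot.mp (Algebra.IsCentral.out hεc)
  have hcE : b * σ y * y * ai = algebraMap L E lam :=
    hinj (by rw [AlgHom.commutes]; exact hlam.symm)
  have hinvc : (b * σ y * y * ai) * (bi * σ y' * y' * a) = 1 := by
    have h5 : (b * σ y * y * ai) * (bi * σ y' * y' * a)
        = (b * bi) * ((σ y * σ y') * ((y * y') * (a * ai))) := by ring
    rw [h5, hbi, hσyy', hyy', hai]; ring
  refine ⟨y, ⟨⟨y, y', hyy', hy'y⟩, rfl⟩, hy, lam, ?_, ?_⟩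
  · intro h0
    rw [h0, map_zero] at hcE
    rw [hcE, zero_mul] at hinvc
    have h1 : (1 : A) = 0 := by
      rw [← map_one ε, ← hinvc, map_zero]
    exact one_ne_zero h1
  · have h5 : (b * σ y * y * ai) * a = (y * σ y * b) * (a * ai) := by ring
    rw [hai, mul_one] at h5
    rw [← h5, hcE]
    exact (Algebra.smul_def lam a).symm
end

section
/- Let A = End_L(V) with adjoint involution τ of a nondegenerate hermitian form b over L/K, and let ι : (E,σ) → (A,τ) be an embedding of algebras with involution, where E has rank dim_L V. Then there exists a σ-fixed unit a ∈ F^× such that b is isometric to the form T_a(x,y) = Tr_{E/L}(a x σ(y)) on E. -/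
universe u

lemma mytrace_prod (L : Type u) [Field L] (A B : Type u) [CommRing A] [CommRing B]
    [Algebra L A] [Algebra L B] [Module.Finite L A] [Module.Finite L B] (x : A × B) :
    Algebra.trace L (A × B) x = Algebra.trace L A x.1 + Algebra.trace L B x.2 := by
  have h : (Algebra.lmul L (A × B) x)
      = LinearMap.prodMap (Algebra.lmul L A x.1) (Algebra.lmul L B x.2) :=
    LinearMap.ext fun y => rfl
  rw [Algebra.trace_apply, h, LinearMap.trace_prodMap', Algebra.trace_apply, Algebra.trace_apply]

lemma mytrace_nondeg (L : Type u) [Field L] :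
    ∀ (n : ℕ) (A : Type u) [CommRing A] [Algebra L A]
    [Module.Finite L A] [Algebra.FormallyUnramified L A], Module.finrank L A = n →
    ∀ z : A, z ≠ 0 → ∃ w, Algebra.trace L A (z * w) ≠ 0 := by
  intro n
  induction n using Nat.strong_induction_on with
  | _ n IH =>
  intro A _ _ _ _ hn z hz
  classical
  haveI : Nontrivial A := ⟨z, 0, hz⟩
  haveI : IsReduced A := Algebra.FormallyUnramified.isReduced_of_field L A
  haveI : IsArtinianRing A := isArtinian_of_tower L inferInstance
  by_cases hF : IsField A
  · letI := hF.toField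
    haveI : Algebra.IsSeparable L A := Algebra.FormallyUnramified.isSeparable L A
    by_contra h
    push_neg at h
    exact hz ((traceForm_nondegenerate L A).1 z (fun w => by
      simpa [Algebra.traceForm_apply] using h w))
  · -- get a nontrivial idempotent
    obtain ⟨u, hu2, hu0, hu1⟩ : ∃ u : A, u * u = u ∧ u ≠ 0 ∧ u ≠ 1 := by
      have h2 : ∃ I J : Ideal A, I.IsMaximal ∧ J.IsMaximal ∧ I ≠ J := by
        by_contra hc
        push_neg at hc
        obtain ⟨I₀, hI₀⟩ := Ideal.exists_maximal A
        haveI : IsLocalRing A :=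
          IsLocalRing.of_unique_max_ideal ⟨I₀, hI₀, fun J hJ => hc J I₀ hJ hI₀⟩
        have hnil : IsNilpotent (IsLocalRing.maximalIdeal A) := by
          have hj := IsArtinianRing.isNilpotent_jacobson_bot (R := A)
          rwa [IsLocalRing.jacobson_eq_maximalIdeal ⊥ bot_ne_top] at hj
        have hm : IsLocalRing.maximalIdeal A = ⊥ := by
          obtain ⟨k, hk⟩ := hnil
          ext x
          simp only [Submodule.mem_bot]
          constructor
          · intro hx
            have hxk : x ^ k = 0 := by
              have := Ideal.pow_mem_pow hx k
              rw [hk] at this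
              simpa using this
            exact IsNilpotent.eq_zero ⟨k, hxk⟩
          · rintro rfl; exact zero_mem _
        exact hF (IsLocalRing.isField_iff_maximalIdeal_eq.mpr hm)
      obtain ⟨I, J, hI, hJ, hIJ⟩ := h2
      haveI := Ideal.Quotient.nontrivial_iff.mpr hI.ne_top
      haveI := Ideal.Quotient.nontrivial_iff.mpr hJ.ne_top
      let e := IsArtinianRing.equivPi A
      haveI : Finite (MaximalSpectrum A) := inferInstance
      let v : ∀ P : MaximalSpectrum A, A ⧸ P.asIdeal :=
        fun P => if P.asIdeal = I then 1 else 0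
      refine ⟨e.symm v, ?_, ?_, ?_⟩
      · apply e.injective
        rw [map_mul, e.apply_symm_apply]
        funext P
        by_cases hP : P.asIdeal = I <;> simp [v, hP]
      · intro h0
        have : v = 0 := by rw [← e.apply_symm_apply v, h0, map_zero]
        have := congrFun this ⟨I, hI⟩
        simp [v] at this
      · intro h1
        have : v = 1 := by rw [← e.apply_symm_apply v, h1, map_one]
        have := congrFun this ⟨J, hJ⟩
        simp [v, hIJ, Ne.symm hIJ] at this
    -- split A into two factors
    set P : Ideal A := Ideal.span {1 - u} with hPdef
    set Q : Ideal A := Ideal.span {u} with hQdef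
    have hPne : P ≠ ⊤ := by
      intro htop
      have h1 : (1 - u) ∣ 1 := Ideal.mem_span_singleton.mp (by rw [← hPdef, htop]; exact Submodule.mem_top)
      have hunit : IsUnit (1 - u) := isUnit_of_dvd_one h1
      have hid : (1 - u) * (1 - u) = (1 - u) * 1 := by rw [mul_one]; linear_combination hu2
      have := hunit.mul_left_cancel hid
      exact hu0 (by linear_combination -this)
    have hQne : Q ≠ ⊤ := by
      intro htop
      have h1 : u ∣ 1 := Ideal.mem_span_singleton.mp (by rw [← hQdef, htop]; exact Submodule.mem_top)
      have hunit : IsUnit u := isUnit_of_dvd_one h1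
      have hid : u * u = u * 1 := by rw [mul_one]; exact hu2
      exact hu1 (hunit.mul_left_cancel hid)
    haveI := Ideal.Quotient.nontrivial_iff.mpr hPne
    haveI := Ideal.Quotient.nontrivial_iff.mpr hQne
    haveI : Module.Finite L (A ⧸ P) :=
      Module.Finite.of_surjective (Ideal.Quotient.mkₐ L P).toLinearMap
        Ideal.Quotient.mk_surjective
    haveI : Module.Finite L (A ⧸ Q) :=
      Module.Finite.of_surjective (Ideal.Quotient.mkₐ L Q).toLinearMap
        Ideal.Quotient.mk_surjective
    let g : A →ₐ[L] (A ⧸ P) × (A ⧸ Q) :=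
      AlgHom.prod (Ideal.Quotient.mkₐ L P) (Ideal.Quotient.mkₐ L Q)
    have hginj : Function.Injective g := by
      intro x y hxy
      have h1 : x - y ∈ P := by
        have := congrArg Prod.fst hxy
        simpa [g, Ideal.Quotient.mkₐ_eq_mk, Ideal.Quotient.mk_eq_mk_iff_sub_mem] using this
      have h2 : x - y ∈ Q := by
        have := congrArg Prod.snd hxy
        simpa [g, Ideal.Quotient.mkₐ_eq_mk, Ideal.Quotient.mk_eq_mk_iff_sub_mem] using this
      obtain ⟨c, hc⟩ := Ideal.mem_span_singleton.mp h1
      obtain ⟨d, hd⟩ := Ideal.mem_span_singleton.mp h2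
      have hzu : (x - y) * u = x - y := by rw [hd]; linear_combination d * hu2
      have hzu0 : (x - y) * u = 0 := by rw [hc]; linear_combination (-c) * hu2
      have hxy0 : x - y = 0 := by rw [← hzu, hzu0]
      exact sub_eq_zero.mp hxy0
    have hgsurj : Function.Surjective g := by
      rintro ⟨p, q⟩
      obtain ⟨x, rfl⟩ := Ideal.Quotient.mk_surjective p
      obtain ⟨y, rfl⟩ := Ideal.Quotient.mk_surjective q
      refine ⟨x * u + y * (1 - u), ?_⟩
      have h1 : Ideal.Quotient.mk P (x * u + y * (1 - u)) = Ideal.Quotient.mk P x := by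
        rw [Ideal.Quotient.mk_eq_mk_iff_sub_mem]
        exact Ideal.mem_span_singleton.mpr ⟨y - x, by ring⟩
      have h2 : Ideal.Quotient.mk Q (x * u + y * (1 - u)) = Ideal.Quotient.mk Q y := by
        rw [Ideal.Quotient.mk_eq_mk_iff_sub_mem]
        exact Ideal.mem_span_singleton.mpr ⟨x - y, by ring⟩
      exact Prod.ext (by simpa [g] using h1) (by simpa [g] using h2)
    let eqF : A ≃ₐ[L] (A ⧸ P) × (A ⧸ Q) := AlgEquiv.ofBijective g ⟨hginj, hgsurj⟩
    have hrk : Module.finrank L (A ⧸ P) + Module.finrank L (A ⧸ Q) = n := by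
      rw [← Module.finrank_prod, ← hn]
      exact (eqF.toLinearEquiv.finrank_eq).symm
    have hp1 : 0 < Module.finrank L (A ⧸ P) := Module.finrank_pos
    have hp2 : 0 < Module.finrank L (A ⧸ Q) := Module.finrank_pos
    have key : ∀ w : (A ⧸ P) × (A ⧸ Q),
        Algebra.trace L A (eqF.symm w) =
          Algebra.trace L (A ⧸ P) w.1 + Algebra.trace L (A ⧸ Q) w.2 := by
      intro w
      rw [← mytrace_prod]
      have hw : eqF (eqF.symm w) = w := eqF.apply_symm_apply w
      conv_rhs => rw [← hw]
      exact (Algebra.trace_eq_of_algEquiv eqF (eqF.symm w)).symm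
    have hz' : eqF z ≠ 0 := fun h => hz (by
      have := congrArg eqF.symm h
      rwa [eqF.symm_apply_apply, map_zero] at this)
    rcases (em ((eqF z).1 ≠ 0)) with hz1 | hz1
    · obtain ⟨w₁, hw₁⟩ := IH (Module.finrank L (A ⧸ P)) (by omega) (A ⧸ P) rfl (eqF z).1 hz1
      refine ⟨eqF.symm (w₁, 0), ?_⟩
      have hmul : z * eqF.symm (w₁, 0) = eqF.symm ((eqF z).1 * w₁, 0) := by
        apply eqF.injective
        rw [map_mul, eqF.apply_symm_apply, eqF.apply_symm_apply]
        exact Prod.ext rfl (by simp)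
      rw [hmul, key]
      simpa using hw₁
    · push_neg at hz1
      have hz2 : (eqF z).2 ≠ 0 := by
        intro h2
        exact hz' (Prod.ext hz1 h2)
      obtain ⟨w₂, hw₂⟩ := IH (Module.finrank L (A ⧸ Q)) (by omega) (A ⧸ Q) rfl (eqF z).2 hz2
      refine ⟨eqF.symm (0, w₂), ?_⟩
      have hmul : z * eqF.symm (0, w₂) = eqF.symm (0, (eqF z).2 * w₂) := by
        apply eqF.injective
        rw [map_mul, eqF.apply_symm_apply, eqF.apply_symm_apply]
        exact Prod.ext (by simp) rfl
      rw [hmul, key]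
      simpa using hw₂

/-- Let `A = End_L(V)` with the adjoint involution `τ` of a nondegenerate
hermitian form `b` over a quadratic extension `L/K` (with nontrivial automorphism `s`), and let
`ι : (E,σ) → (A,τ)` be an embedding of algebras with involution, where `E` is an étale
`L`-algebra of rank `dim_L V` with an involution `σ` of the second kind.  Then there exists a
`σ`-fixed unit `a ∈ F^×` such that `b` is isometric to the hermitian trace form
`T_a(x,y) = Tr_{E/L}(a·x·σ(y))` on `E`. -/
theorem hermitian_form_isometric_trace_form_of_embedding
    (K L : Type u) [Field K] [Field L] [Algebra K L]
    (hKL : Module.finrank K L = 2)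
    (s : L ≃ₐ[K] L) (hs : s ≠ AlgEquiv.refl) (hss : ∀ l, s (s l) = l)
    (V : Type u) [AddCommGroup V] [Module L V] [FiniteDimensional L V]
    (b : V → V → L)
    (hb_addl : ∀ x x' y, b (x + x') y = b x y + b x' y)
    (hb_addr : ∀ x y y', b x (y + y') = b x y + b x y')
    (hb_smull : ∀ (l : L) x y, b (l • x) y = l * b x y)
    (hb_smulr : ∀ (l : L) x y, b x (l • y) = s l * b x y)
    (hb_herm : ∀ x y, b y x = s (b x y))
    (hb_nd : ∀ x, (∀ y, b x y = 0) → x = 0)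
    (E : Type u) [CommRing E] [Algebra L E] [Algebra K E] [IsScalarTower K L E]
    [Module.Finite L E] [Algebra.Etale L E]
    (hrank : Module.finrank L E = Module.finrank L V)
    (σ : E →ₐ[K] E) (hσ : ∀ x, σ (σ x) = x)
    (hσL : ∀ l : L, σ (algebraMap L E l) = algebraMap L E (s l))
    (ι : E →ₐ[L] Module.End L V) (hinj : Function.Injective ι)
    (hcompat : ∀ (e : E) (x y : V), b (ι e x) y = b x (ι (σ e) y)) :
    ∃ a : E, IsUnit a ∧ σ a = a ∧
      ∃ φ : E ≃ₗ[L] V, ∀ x y : E,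
        b (φ x) (φ y) = Algebra.trace L E (a * x * σ y) := by
  classical
  haveI : Algebra.FormallyEtale L E := Algebra.Etale.formallyEtale
  haveI : Algebra.FormallyUnramified L E := inferInstance
  by_cases hE : Nontrivial E
  case neg =>
    haveI : Subsingleton E := not_nontrivial_iff_subsingleton.mp hE
    have hE0 : Module.finrank L E = 0 := Module.finrank_zero_of_subsingleton
    have hV0 : Module.finrank L V = 0 := by rw [← hrank, hE0]
    haveI : Subsingleton V := Module.finrank_zero_iff.mp hV0
    have hb0 : ∀ x y : V, b x y = 0 := by
      intro x y
      have h := hb_addl 0 0 y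
      rw [add_zero] at h
      have h' : b 0 y + 0 = b 0 y + b 0 y := by rw [add_zero]; exact h
      have h0 : (0 : L) = b 0 y := add_left_cancel h'
      rw [Subsingleton.elim x 0]
      exact h0.symm
    obtain ⟨φ⟩ := FiniteDimensional.nonempty_linearEquiv_of_finrank_eq
      (show Module.finrank L E = Module.finrank L V from by rw [hE0, hV0])
    refine ⟨1, isUnit_one, map_one σ, φ, fun x y => ?_⟩
    rw [hb0]
    rw [show (1 * x * σ y : E) = 0 from Subsingleton.elim _ _, map_zero]
  case pos =>
  haveI : IsReduced E := Algebra.FormallyUnramified.isReduced_of_field L E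
  haveI : IsArtinianRing E := isArtinian_of_tower L inferInstance
  haveI : Finite (MaximalSpectrum E) := inferInstance
  haveI := Fintype.ofFinite (MaximalSpectrum E)
  letI instF : ∀ P : MaximalSpectrum E, Field (E ⧸ P.asIdeal) := fun P =>
    haveI : P.asIdeal.IsMaximal := P.2
    Ideal.Quotient.field P.asIdeal
  let eqE := IsArtinianRing.equivPi E
  let idem : MaximalSpectrum E → E :=
    fun I => eqE.symm (fun J => if J = I then 1 else 0)
  have h_idem_apply : ∀ I, eqE (idem I) = fun J => if J = I then 1 else 0 :=
    fun I => eqE.apply_symm_apply _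
  have h_idem2 : ∀ I, idem I * idem I = idem I := by
    intro I
    apply eqE.injective
    rw [map_mul, h_idem_apply]
    funext J
    by_cases hJ : J = I <;> simp [Pi.mul_apply, hJ]
  have h_ne : ∀ I, idem I ≠ 0 := by
    intro I h0
    have hv : (fun J => if J = I then (1 : E ⧸ J.asIdeal) else 0) = 0 := by
      rw [← h_idem_apply, h0, map_zero]
    have := congrFun hv I
    simp at this
  have h_orth : ∀ I J, I ≠ J → idem I * idem J = 0 := by
    intro I J hIJ
    apply eqE.injective
    rw [map_mul, h_idem_apply, h_idem_apply, map_zero]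
    funext P
    by_cases h1 : P = I
    · subst h1
      have h2 : P ≠ J := hIJ
      simp [Pi.mul_apply, h2]
    · simp [Pi.mul_apply, h1]
  have h_sum : (∑ I, idem I) = 1 := by
    apply eqE.injective
    rw [map_sum, map_one]
    funext J
    rw [Finset.sum_apply]
    have heval : ∀ I : MaximalSpectrum E,
        eqE (idem I) J = if J = I then 1 else 0 := fun I => congrFun (h_idem_apply I) J
    rw [Finset.sum_congr rfl (fun I _ => heval I)]
    simp
  have h_inv : ∀ (I) (z : E), z * idem I ≠ 0 → ∃ c, c * (z * idem I) = idem I := by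
    intro I z hz
    have hcomp : eqE (z * idem I) = fun J => if J = I then eqE z J else 0 := by
      rw [map_mul, h_idem_apply]
      funext J
      by_cases hJ : J = I
      · subst hJ; simp [Pi.mul_apply]
      · simp [Pi.mul_apply, hJ]
    have hzI : eqE z I ≠ 0 := by
      intro h0
      apply hz
      apply eqE.injective
      rw [hcomp, map_zero]
      funext J
      by_cases hJ : J = I
      · subst hJ; simpa using h0
      · simp [hJ]
    refine ⟨eqE.symm (fun J => if J = I then (eqE z J)⁻¹ else 0), ?_⟩
    apply eqE.injective
    rw [map_mul, eqE.apply_symm_apply, hcomp, h_idem_apply]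
    funext J
    by_cases hJ : J = I
    · subst hJ
      simp only [Pi.mul_apply, if_pos rfl]
      exact inv_mul_cancel₀ hzI
    · simp [Pi.mul_apply, hJ]
  -- a cyclic vector
  have hι_ne : ∀ I, ∃ x : V, ι (idem I) x ≠ 0 := by
    intro I
    by_contra hcon
    push_neg at hcon
    exact h_ne I (hinj (by rw [map_zero]; exact LinearMap.ext hcon))
  choose xv hxv using hι_ne
  set v : V := ∑ I, ι (idem I) (xv I) with hvdef
  have hexp : ∀ e : E, ι e v = ∑ I, ι (e * idem I) (xv I) := by
    intro e
    rw [hvdef, map_sum]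
    exact Finset.sum_congr rfl fun I _ => by rw [map_mul]; rfl
  have hcyc : ∀ z : E, ι z v = 0 → z = 0 := by
    intro z hzv
    have hzI : ∀ I, z * idem I = 0 := by
      intro I
      by_contra hne
      obtain ⟨c, hc⟩ := h_inv I z hne
      have h2 : ι (idem I * z) v = 0 := by
        rw [map_mul]
        show ι (idem I) (ι z v) = 0
        rw [hzv, map_zero]
      have h3 : ι (idem I * z) v = ι (z * idem I) (xv I) := by
        rw [hexp]
        rw [Finset.sum_eq_single I]
        · congr 1
          rw [show idem I * z * idem I = z * (idem I * idem I) from by ring, h_idem2]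
        · intro J _ hJ
          rw [show idem I * z * idem J = z * (idem I * idem J) from by ring,
            h_orth I J (Ne.symm hJ), mul_zero, map_zero]
          rfl
        · intro h; exact absurd (Finset.mem_univ I) h
      have h4 : ι (z * idem I) (xv I) = 0 := by rw [← h3, h2]
      have h5 : ι (idem I) (xv I) = 0 := by
        rw [← hc, map_mul]
        show ι c (ι (z * idem I) (xv I)) = 0
        rw [h4, map_zero]
      exact hxv I h5
    have hz1 : z = z * ∑ I, idem I := by rw [h_sum, mul_one]
    rw [hz1, Finset.mul_sum]
    exact Finset.sum_eq_zero fun I _ => hzI I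
  let ψ : E →ₗ[L] V :=
    { toFun := fun z => ι z v
      map_add' := fun a c => by simp only [map_add, LinearMap.add_apply]
      map_smul' := fun l a => by
        simp only [map_smul, LinearMap.smul_apply, RingHom.id_apply] }
  have hψinj : Function.Injective ψ := by
    intro a c hac
    have h0 : ι (a - c) v = 0 := by
      rw [map_sub]
      show ψ a - ψ c = 0
      rw [hac, sub_self]
    exact sub_eq_zero.mp (hcyc _ h0)
  let φ : E ≃ₗ[L] V := LinearMap.linearEquivOfInjective ψ hψinj hrank
  have hφ : ∀ x, φ x = ι x v := fun x =>
    LinearMap.linearEquivOfInjective_apply hψinj hrank x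
  -- trace semilinearity
  let σe : E ≃+* E :=
    { toFun := σ, invFun := σ, left_inv := hσ, right_inv := hσ,
      map_mul' := map_mul σ, map_add' := map_add σ }
  have hTr : ∀ z : E, Algebra.trace L E (σ z) = s (Algebra.trace L E z) := by
    intro z
    have hcom : (algebraMap L E).comp (s.toRingEquiv : L →+* L)
        = (σe : E →+* E).comp (algebraMap L E) := RingHom.ext fun l => (hσL l).symm
    have h := Algebra.trace_eq_of_equiv_equiv s.toRingEquiv σe hcom z
    have h2 := congrArg s.toRingEquiv h
    rw [RingEquiv.apply_symm_apply] at h2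
    exact h2.symm
  -- nondegeneracy of the trace form
  have hND : ∀ z : E, (∀ w, Algebra.trace L E (z * w) = 0) → z = 0 := by
    intro z hzw
    by_contra hz0
    obtain ⟨w, hw⟩ := mytrace_nondeg L (Module.finrank L E) E rfl z hz0
    exact hw (hzw w)
  -- the linear functional and the element a
  let ℓ : E →ₗ[L] L :=
    { toFun := fun x => b (ι x v) v
      map_add' := fun x y => by
        simp only [map_add, LinearMap.add_apply]
        rw [hb_addl]
      map_smul' := fun l x => by
        simp only [map_smul, LinearMap.smul_apply, RingHom.id_apply]
        rw [hb_smull]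
        rfl }
  have htfinj : Function.Injective (Algebra.traceForm L E) := by
    intro z1 z2 h12
    have hz : z1 - z2 = 0 := hND _ (fun w => by
      rw [sub_mul, map_sub, ← Algebra.traceForm_apply, ← Algebra.traceForm_apply, h12, sub_self])
    exact sub_eq_zero.mp hz
  have htfsurj : Function.Surjective (Algebra.traceForm L E) :=
    (LinearMap.injective_iff_surjective_of_finrank_eq_finrank
      (Subspace.dual_finrank_eq (K := L) (V := E)).symm).mp htfinj
  obtain ⟨a, ha⟩ := htfsurj ℓ
  have hax : ∀ x : E, Algebra.trace L E (a * x) = b (ι x v) v := by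
    intro x
    have h := LinearMap.congr_fun ha x
    rw [Algebra.traceForm_apply] at h
    exact h
  -- the key formula
  have hkey : ∀ x y : E, b (ι x v) (ι y v) = Algebra.trace L E (a * x * σ y) := by
    intro x y
    have h1 : b (ι (σ y) (ι x v)) v = b (ι x v) (ι y v) := by
      rw [hcompat (σ y) (ι x v) v, hσ y]
    have h2 : ι (σ y) (ι x v) = ι (σ y * x) v := by rw [map_mul]; rfl
    rw [← h1, h2, ← hax (σ y * x)]
    congr 1
    ring
  -- σ-fixedness of a
  have hσa : σ a = a := by
    have hdiff : ∀ w : E, Algebra.trace L E ((σ a - a) * w) = 0 := by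
      intro w
      have hw : w = σ (σ w) := (hσ w).symm
      rw [hw]
      have e1 : Algebra.trace L E (a * σ (σ w)) = b v (ι (σ w) v) := by
        rw [hax (σ (σ w)), hcompat (σ (σ w)) v v, hσ]
      have e2 : Algebra.trace L E (σ a * σ (σ w)) = b v (ι (σ w) v) := by
        rw [← map_mul σ, hTr, hax, ← hb_herm]
      rw [sub_mul, map_sub, e1, e2, sub_self]
    exact sub_eq_zero.mp (hND _ hdiff)
  -- a is a unit
  have hua : IsUnit a := by
    have hminj : Function.Injective (LinearMap.mulLeft L a) := by
      intro c d hcd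
      have hcd' : a * c = a * d := hcd
      have h0 : a * (c - d) = 0 := by rw [mul_sub, hcd', sub_self]
      have hc0 : c - d = 0 := by
        by_contra hne
        have hbz : ∀ Y : V, b (ι (c - d) v) Y = 0 := by
          intro Y
          obtain ⟨y, hy⟩ := φ.surjective Y
          rw [← hy, hφ, hkey (c - d) y, show a * (c - d) * σ y = 0 from by rw [h0, zero_mul],
            map_zero]
        exact hne (hcyc _ (hb_nd _ hbz))
      exact sub_eq_zero.mp hc0
    obtain ⟨c, hc⟩ := LinearMap.injective_iff_surjective.mp hminj 1
    exact IsUnit.of_mul_eq_one c hc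
  exact ⟨a, hua, hσa, φ, fun x y => by rw [hφ, hφ, hkey]⟩
end

section
/- Let K be a field of characteristic ≠ 2, F a finite étale K-algebra of rank r, d ∈ F^×, and E = F[X]/(X^2 − d) with x the image of X and σ the F-linear involution sending x to −x. Then the discriminant algebra Δ(E) of E over K is isomorphic as a K-algebra to K[Y]/(Y^2 − (−1)^r N_{E/K}(x)). -/
open Polynomial

section AuxLemmas

open scoped TensorProduct

set_option linter.unusedSectionVars false

variable {K F : Type*} [CommRing K] [CommRing F] [Algebra K F]
    {ι : Type*} [Fintype ι] [DecidableEq ι] (b : Module.Basis ι K F)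

private lemma trace_mul_expand' (y z : F) :
    Algebra.trace K F (y * z) = ∑ k, b.repr z k * Algebra.trace K F (y * b k) := by
  conv_lhs => rw [← b.sum_repr z, Finset.mul_sum, map_sum]
  simp [mul_smul_comm, smul_eq_mul, mul_comm]

private lemma trace_eq_sum_repr' (y : F) :
    Algebra.trace K F y = ∑ m, b.repr (y * b m) m := by
  rw [Algebra.trace_eq_matrix_trace b y, Matrix.trace]
  simp [Matrix.diag, Algebra.leftMulMatrix_eq_repr_mul]

private lemma det_twisted_trace' (c : F) :
    (Matrix.of fun i j => Algebra.trace K F (b i * b j * c)).det =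
      (Algebra.traceMatrix K b).det * Algebra.norm K c := by
  have key : (Matrix.of fun i j => Algebra.trace K F (b i * b j * c)) =
      Algebra.traceMatrix K b * Algebra.leftMulMatrix b c := by
    ext i j
    rw [Matrix.mul_apply, Matrix.of_apply]
    have : b i * b j * c = b i * (c * b j) := by ring
    rw [this, trace_mul_expand' b (b i) (c * b j)]
    exact Finset.sum_congr rfl fun k _ => by
      rw [Algebra.traceMatrix_apply, Algebra.traceForm_apply,
        Algebra.leftMulMatrix_eq_repr_mul]; ring
  rw [key, Matrix.det_mul, Algebra.norm_eq_matrix_det b c]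

end AuxLemmas

section Etale

open scoped TensorProduct

private lemma isUnit_det_traceMatrix' {K F : Type*} [Field K] [CommRing F] [Algebra K F]
    [Algebra.FormallyUnramified K F] [Algebra.EssFiniteType K F]
    {ι : Type*} [Fintype ι] [DecidableEq ι] (b : Module.Basis ι K F) :
    IsUnit (Algebra.traceMatrix K b).det := by
  classical
  set B := Algebra.TensorProduct.basis F b with hB
  set e := Algebra.FormallyUnramified.elem K F with he
  set c : ι → F := fun j => B.repr e j with hc
  have hedecomp : e = ∑ j, c j ⊗ₜ[K] b j := by
    conv_lhs => rw [← B.sum_repr e]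
    refine Finset.sum_congr rfl fun j _ => ?_
    rw [Algebra.TensorProduct.basis_repr_symm_apply' b (B.repr e j) j]
  have hsum : ∑ j, c j * b j = 1 := by
    have := Algebra.FormallyUnramified.lmul_elem (R := K) (S := F)
    rw [← he, hedecomp, map_sum] at this
    simpa [Algebra.TensorProduct.lmul'_apply_tmul] using this
  have hR1 : ∀ (s : F) (k : ι), s * c k = ∑ j, b.repr (s * b j) k • c j := by
    intro s k
    have h1 : (1 ⊗ₜ[K] s) * e = s • e := by
      have h0 := Algebra.FormallyUnramified.one_tmul_sub_tmul_one_mul_elem (R := K) s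
      rw [sub_mul, sub_eq_zero] at h0
      rw [← he] at h0
      rw [h0, Algebra.smul_def, Algebra.TensorProduct.algebraMap_apply]
      simp
    have lhs : B.repr ((1 ⊗ₜ[K] s) * e) k = s * c k := by
      rw [h1, map_smul]; simp [hc, smul_eq_mul]
    rw [← lhs, hedecomp, Finset.mul_sum, map_sum, Finset.sum_apply']
    refine Finset.sum_congr rfl fun j _ => ?_
    rw [Algebra.TensorProduct.tmul_mul_tmul, one_mul]
    rw [Algebra.TensorProduct.basis_repr_tmul]
    simp [Algebra.smul_def, mul_comm]
  have hTrc : ∀ j, Algebra.trace K F (c j) = b.repr 1 j := by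
    intro j
    rw [trace_eq_sum_repr' b (c j)]
    have : ∀ m, b.repr (c j * b m) m = ∑ i, b.repr (b m * b i) j * b.repr (c i) m := by
      intro m
      rw [mul_comm, hR1 (b m) j, map_sum]
      simp [smul_eq_mul, mul_comm]
    simp_rw [this]
    rw [Finset.sum_comm]
    have : ∀ i, ∑ m, b.repr (b m * b i) j * b.repr (c i) m = b.repr (c i * b i) j := by
      intro i
      conv_rhs => rw [← b.sum_repr (c i)]
      rw [Finset.sum_mul, map_sum, Finset.sum_apply']
      simp [smul_mul_assoc, smul_eq_mul, mul_comm]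
    simp_rw [this]
    conv_rhs => rw [← hsum]
    rw [map_sum, Finset.sum_apply']
  have hG : ∀ (y : F) (k : ι), Algebra.trace K F (y * c k) = b.repr y k := by
    intro y k
    rw [hR1 y k, map_sum]
    simp_rw [map_smul, smul_eq_mul, hTrc]
    have : ∀ j, b.repr (y * b j) k * b.repr 1 j = b.repr (b.repr 1 j • (y * b j)) k := by
      intro j; rw [map_smul]; simp [smul_eq_mul, mul_comm]
    simp_rw [this]
    rw [← Finset.sum_apply', ← map_sum]
    congr 2
    calc ∑ j, b.repr 1 j • (y * b j) = y * ∑ j, b.repr 1 j • b j := by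
          rw [Finset.mul_sum]; simp [mul_smul_comm]
      _ = y := by rw [b.sum_repr 1, mul_one]
  have hinv : Algebra.traceMatrix K b * (Matrix.of fun j k => b.repr (c k) j) = 1 := by
    ext m k
    rw [Matrix.mul_apply]
    simp only [Algebra.traceMatrix_apply, Algebra.traceForm_apply, Matrix.of_apply]
    have : ∑ j, Algebra.trace K F (b m * b j) * b.repr (c k) j
        = Algebra.trace K F (b m * c k) := by
      rw [trace_mul_expand' b (b m) (c k)]
      exact Finset.sum_congr rfl fun j _ => by ring
    rw [this, hG (b m) k, Module.Basis.repr_self, Finsupp.single_apply, Matrix.one_apply]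
  exact Matrix.isUnit_det_of_right_inverse hinv

end Etale

section Blocks

variable {K : Type*} [Field K]

private lemma det_J' (r : ℕ) :
    (Matrix.fromBlocks (0 : Matrix (Fin r) (Fin r) K) (1 : Matrix (Fin r) (Fin r) K)
      (1 : Matrix (Fin r) (Fin r) K) (0 : Matrix (Fin r) (Fin r) K)).det = (-1) ^ r := by
  have h1 : (Matrix.fromBlocks (0 : Matrix (Fin r) (Fin r) K) (1 : Matrix (Fin r) (Fin r) K)
      (1 : Matrix (Fin r) (Fin r) K) (0 : Matrix (Fin r) (Fin r) K)) =
      (1 : Matrix (Fin r ⊕ Fin r) (Fin r ⊕ Fin r) K).submatrix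
        (Equiv.sumComm (Fin r) (Fin r)) id := by
    ext (i | i) (j | j) <;>
      simp [Matrix.submatrix_apply, Matrix.one_apply, Sum.inl.injEq, Sum.inr.injEq]
  rw [h1, Matrix.det_permute, Matrix.det_one, mul_one]
  have h2 : Equiv.Perm.sign ((Equiv.sumComm (Fin r) (Fin r) : Equiv.Perm (Fin r ⊕ Fin r))) =
      (-1) ^ r := by
    have h3 := Equiv.Perm.sign_eq_sign_of_equiv
      (Equiv.prodCongrLeft (fun _ : Fin r => Equiv.swap false true))
      (Equiv.sumComm (Fin r) (Fin r)) (Equiv.boolProdEquivSum (Fin r)) ?_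
    · rw [← h3, Equiv.Perm.sign_prodCongrLeft]
      simp [Equiv.Perm.sign_swap]
    · rintro ⟨(_ | _), i⟩ <;>
        simp [Equiv.prodCongrLeft_apply, Equiv.swap_apply_left, Equiv.swap_apply_right]
  rw [h2]
  push_cast
  rfl

private lemma det_antidiag' {r : ℕ} (L : Matrix (Fin r) (Fin r) K) :
    (Matrix.fromBlocks (0 : Matrix (Fin r) (Fin r) K) L (1 : Matrix (Fin r) (Fin r) K)
      (0 : Matrix (Fin r) (Fin r) K)).det = (-1) ^ r * L.det := by
  have : (Matrix.fromBlocks (0 : Matrix (Fin r) (Fin r) K) L (1 : Matrix (Fin r) (Fin r) K)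
      (0 : Matrix (Fin r) (Fin r) K)) =
      Matrix.fromBlocks L (0 : Matrix (Fin r) (Fin r) K) (0 : Matrix (Fin r) (Fin r) K)
        (1 : Matrix (Fin r) (Fin r) K) *
      Matrix.fromBlocks (0 : Matrix (Fin r) (Fin r) K) (1 : Matrix (Fin r) (Fin r) K)
        (1 : Matrix (Fin r) (Fin r) K) (0 : Matrix (Fin r) (Fin r) K) := by
    rw [Matrix.fromBlocks_multiply]
    simp
  rw [this, Matrix.det_mul, det_J', Matrix.det_fromBlocks_zero₂₁, Matrix.det_one, mul_one,
    mul_comm]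

private lemma adjoinRoot_iso' {a bb cc : K} (hc : cc ≠ 0) (hab : a = cc ^ 2 * bb) :
    Nonempty (AdjoinRoot ((X : K[X]) ^ 2 - C a) ≃ₐ[K] AdjoinRoot ((X : K[X]) ^ 2 - C bb)) := by
  have rootsq : ∀ (u : K), (AdjoinRoot.root ((X : K[X]) ^ 2 - C u)) ^ 2 =
      algebraMap K _ u := by
    intro u
    have h := AdjoinRoot.eval₂_root ((X : K[X]) ^ 2 - C u)
    simp only [eval₂_sub, eval₂_pow, eval₂_X, eval₂_C, sub_eq_zero] at h
    exact h
  have mk1 : (Polynomial.aeval (algebraMap K (AdjoinRoot ((X : K[X]) ^ 2 - C bb)) cc *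
      AdjoinRoot.root _)) ((X : K[X]) ^ 2 - C a) = 0 := by
    rw [map_sub, map_pow, aeval_X, aeval_C, sub_eq_zero, mul_pow, rootsq, ← map_pow, ← map_mul,
      hab]
  have mk2 : (Polynomial.aeval (algebraMap K (AdjoinRoot ((X : K[X]) ^ 2 - C a)) cc⁻¹ *
      AdjoinRoot.root _)) ((X : K[X]) ^ 2 - C bb) = 0 := by
    rw [map_sub, map_pow, aeval_X, aeval_C, sub_eq_zero, mul_pow, rootsq, ← map_pow, ← map_mul]
    congr 1
    rw [hab]
    field_simp
  have mk1' : eval₂ (↑(Algebra.ofId K (AdjoinRoot ((X : K[X]) ^ 2 - C bb))))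
      (algebraMap K (AdjoinRoot ((X : K[X]) ^ 2 - C bb)) cc * AdjoinRoot.root _)
      ((X : K[X]) ^ 2 - C a) = 0 := mk1
  have mk2' : eval₂ (↑(Algebra.ofId K (AdjoinRoot ((X : K[X]) ^ 2 - C a))))
      (algebraMap K (AdjoinRoot ((X : K[X]) ^ 2 - C a)) cc⁻¹ * AdjoinRoot.root _)
      ((X : K[X]) ^ 2 - C bb) = 0 := mk2
  refine ⟨AlgEquiv.ofAlgHom (AdjoinRoot.liftAlgHom _ (Algebra.ofId _ _) _ mk1')
    (AdjoinRoot.liftAlgHom _ (Algebra.ofId _ _) _ mk2') ?_ ?_⟩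
  · apply AdjoinRoot.algHom_ext
    rw [AlgHom.comp_apply, AdjoinRoot.liftAlgHom_root, map_mul, AlgHom.commutes,
      AdjoinRoot.liftAlgHom_root, AlgHom.id_apply, ← mul_assoc, ← map_mul]
    rw [inv_mul_cancel₀ hc, map_one, one_mul]
  · apply AdjoinRoot.algHom_ext
    rw [AlgHom.comp_apply, AdjoinRoot.liftAlgHom_root, map_mul, AlgHom.commutes,
      AdjoinRoot.liftAlgHom_root, AlgHom.id_apply, ← mul_assoc, ← map_mul]
    rw [mul_inv_cancel₀ hc, map_one, one_mul]

private def pairEquiv' (r : ℕ) : (Fin r ⊕ Fin r) ≃ (Fin r × Fin 2) where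
  toFun := Sum.elim (fun i => (i, 0)) (fun i => (i, 1))
  invFun p := if p.2 = 0 then Sum.inl p.1 else Sum.inr p.1
  left_inv := by rintro (i | i) <;> simp
  right_inv := by rintro ⟨i, p⟩; fin_cases p <;> simp

end Blocks

/-- Let `K` be a field of characteristic `≠ 2`, `F` a finite étale `K`-algebra
of rank `r`, `d ∈ F^×`, and `E = F[X]/(X² − d)` with `x` the image of `X` and `σ` the
`F`-linear involution sending `x` to `−x`.  Then the discriminant algebra
`Δ(E) = K[Y]/(Y² − det(T_{E/K}))` of `E` over `K` is isomorphic as a `K`-algebra to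
`K[Y]/(Y² − (−1)^r N_{E/K}(x))`. -/
theorem discriminant_algebra_iso
    (K : Type u) [Field K] (hK : (2 : K) ≠ 0)
    (F : Type u) [CommRing F] [Algebra K F] [Module.Finite K F] [Algebra.Etale K F]
    (r : ℕ) (bF : Module.Basis (Fin r) K F)
    (d : F) (hd : IsUnit d)
    (E : Type u) [CommRing E] [Algebra F E] [Algebra K E] [IsScalarTower K F E]
    (x : E) (hx : x ^ 2 = algebraMap F E d)
    (bE : Module.Basis (Fin 2) F E) (hbE0 : bE 0 = 1) (hbE1 : bE 1 = x)
    (σ : E →ₐ[F] E) (hσ : ∀ y, σ (σ y) = y) (hσx : σ x = -x) :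
    Nonempty
      (AdjoinRoot ((X : K[X]) ^ 2 -
          C ((Matrix.of fun p q : Fin r × Fin 2 =>
              Algebra.trace K E (bF.smulTower bE p * bF.smulTower bE q)).det))
        ≃ₐ[K]
       AdjoinRoot ((X : K[X]) ^ 2 - C ((-1) ^ r * Algebra.norm K x))) := by
  classical
  set w := bF.smulTower bE with hw
  set T := Algebra.traceMatrix K bF with hT
  -- trace form of E over F
  have htr : ∀ z : E, Algebra.trace F E z = bE.repr (z * bE 0) 0 + bE.repr (z * bE 1) 1 := by
    intro z; rw [trace_eq_sum_repr' bE z, Fin.sum_univ_two]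
  have hx' : x * x = algebraMap F E d := by rw [← sq]; exact hx
  have hd0 : (algebraMap F E d) = d • bE 0 := by rw [hbE0, Algebra.algebraMap_eq_smul_one]
  have t00 : Algebra.trace F E (bE 0 * bE 0) = 2 := by
    have e1 : bE 0 * bE 0 * bE 0 = bE 0 := by rw [hbE0]; simp
    have e2 : bE 0 * bE 0 * bE 1 = bE 1 := by rw [hbE0]; simp
    rw [htr, e1, e2, bE.repr_self, bE.repr_self]
    norm_num [Finsupp.single_apply]
  have t01 : Algebra.trace F E (bE 0 * bE 1) = 0 := by
    have e1 : bE 0 * bE 1 * bE 0 = bE 1 := by rw [hbE0]; simp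
    have e2 : bE 0 * bE 1 * bE 1 = d • bE 0 := by rw [hbE0, hbE1, one_mul, hx', hd0, hbE0]
    rw [htr, e1, e2, bE.repr_self, map_smul]
    norm_num [Finsupp.single_apply]
  have t10 : Algebra.trace F E (bE 1 * bE 0) = 0 := by rw [mul_comm]; exact t01
  have t11 : Algebra.trace F E (bE 1 * bE 1) = 2 * d := by
    have e1 : bE 1 * bE 1 * bE 0 = d • bE 0 := by rw [hbE0, hbE1, mul_one, hx', hd0, hbE0]
    have e2 : bE 1 * bE 1 * bE 1 = d • bE 1 := by
      rw [hbE1, hx', hd0, hbE0, smul_mul_assoc, one_mul]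
    rw [htr, e1, e2, map_smul, map_smul, bE.repr_self, bE.repr_self]
    norm_num [Finsupp.single_apply]
    ring
  -- entries of the big trace matrix
  have hM : ∀ (i j : Fin r) (p q : Fin 2),
      Algebra.trace K E (w (i, p) * w (j, q)) =
        Algebra.trace K F (bF i * bF j * Algebra.trace F E (bE p * bE q)) := by
    intro i j p q
    rw [← Algebra.trace_trace_of_basis bF bE]
    congr 1
    rw [hw, Module.Basis.smulTower_apply, Module.Basis.smulTower_apply]
    simp only []
    rw [smul_mul_smul_comm, map_smul, smul_eq_mul]
  have hsub : (Matrix.of fun p q : Fin r × Fin 2 =>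
        Algebra.trace K E (w p * w q)).submatrix (pairEquiv' r) (pairEquiv' r) =
      Matrix.fromBlocks
        (Matrix.of fun i j => Algebra.trace K F (bF i * bF j * 2))
        (0 : Matrix (Fin r) (Fin r) K) (0 : Matrix (Fin r) (Fin r) K)
        (Matrix.of fun i j => Algebra.trace K F (bF i * bF j * (2 * d))) := by
    ext (i | i) (j | j)
    · rw [Matrix.submatrix_apply, Matrix.fromBlocks_apply₁₁, Matrix.of_apply, Matrix.of_apply]
      show Algebra.trace K E (w (i, 0) * w (j, 0)) = _
      rw [hM, t00]
    · rw [Matrix.submatrix_apply, Matrix.fromBlocks_apply₁₂, Matrix.of_apply]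
      show Algebra.trace K E (w (i, 0) * w (j, 1)) = _
      rw [hM, t01, mul_zero, map_zero, Matrix.zero_apply]
    · rw [Matrix.submatrix_apply, Matrix.fromBlocks_apply₂₁, Matrix.of_apply]
      show Algebra.trace K E (w (i, 1) * w (j, 0)) = _
      rw [hM, t10, mul_zero, map_zero, Matrix.zero_apply]
    · rw [Matrix.submatrix_apply, Matrix.fromBlocks_apply₂₂, Matrix.of_apply, Matrix.of_apply]
      show Algebra.trace K E (w (i, 1) * w (j, 1)) = _
      rw [hM, t11]
  have hnorm2 : Algebra.norm K (2 : F) = 2 ^ r := by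
    have : (2 : F) = algebraMap K F 2 := by rw [map_ofNat]
    rw [this, Algebra.norm_algebraMap_of_basis bF, Fintype.card_fin]
  have hdet1 : (Matrix.of fun p q : Fin r × Fin 2 =>
        Algebra.trace K E (w p * w q)).det =
      (2 ^ r * T.det) ^ 2 * Algebra.norm K d := by
    rw [← Matrix.det_submatrix_equiv_self (pairEquiv' r), hsub,
      Matrix.det_fromBlocks_zero₂₁, det_twisted_trace' bF 2, det_twisted_trace' bF (2 * d),
      map_mul, hnorm2, ← hT]
    ring
  -- the norm of x
  have hnx : Algebra.norm K x = (-1) ^ r * Algebra.norm K d := by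
    rw [Algebra.norm_eq_matrix_det w x, ← Matrix.det_submatrix_equiv_self (pairEquiv' r)]
    have hxb0 : x * bE 0 = bE 1 := by rw [hbE0, mul_one, hbE1]
    have hxb1 : x * bE 1 = d • bE 0 := by rw [hbE1, hx', hd0]
    have hL00 : Algebra.leftMulMatrix bE x 0 0 = 0 := by
      rw [Algebra.leftMulMatrix_eq_repr_mul, hxb0, bE.repr_self, Finsupp.single_apply]
      norm_num
    have hL10 : Algebra.leftMulMatrix bE x 1 0 = 1 := by
      rw [Algebra.leftMulMatrix_eq_repr_mul, hxb0, bE.repr_self, Finsupp.single_apply]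
      simp
    have hL01 : Algebra.leftMulMatrix bE x 0 1 = d := by
      rw [Algebra.leftMulMatrix_eq_repr_mul, hxb1, map_smul, bE.repr_self, Finsupp.smul_apply,
        Finsupp.single_apply]
      simp
    have hL11 : Algebra.leftMulMatrix bE x 1 1 = 0 := by
      rw [Algebra.leftMulMatrix_eq_repr_mul, hxb1, map_smul, bE.repr_self, Finsupp.smul_apply,
        Finsupp.single_apply]
      simp
    have hblocks : (Algebra.leftMulMatrix w x).submatrix (pairEquiv' r) (pairEquiv' r) =
        Matrix.fromBlocks (0 : Matrix (Fin r) (Fin r) K) (Algebra.leftMulMatrix bF d)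
          (1 : Matrix (Fin r) (Fin r) K) (0 : Matrix (Fin r) (Fin r) K) := by
      ext (i | i) (j | j)
      · rw [Matrix.submatrix_apply, Matrix.fromBlocks_apply₁₁]
        show Algebra.leftMulMatrix w x (i, 0) (j, 0) = _
        rw [hw, Algebra.smulTower_leftMulMatrix]
        show Algebra.leftMulMatrix bF (Algebra.leftMulMatrix bE x 0 0) i j = _
        rw [hL00, map_zero]
      · rw [Matrix.submatrix_apply, Matrix.fromBlocks_apply₁₂]
        show Algebra.leftMulMatrix w x (i, 0) (j, 1) = _
        rw [hw, Algebra.smulTower_leftMulMatrix]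
        show Algebra.leftMulMatrix bF (Algebra.leftMulMatrix bE x 0 1) i j = _
        rw [hL01]
      · rw [Matrix.submatrix_apply, Matrix.fromBlocks_apply₂₁]
        show Algebra.leftMulMatrix w x (i, 1) (j, 0) = _
        rw [hw, Algebra.smulTower_leftMulMatrix]
        show Algebra.leftMulMatrix bF (Algebra.leftMulMatrix bE x 1 0) i j = _
        rw [hL10, map_one]
      · rw [Matrix.submatrix_apply, Matrix.fromBlocks_apply₂₂]
        show Algebra.leftMulMatrix w x (i, 1) (j, 1) = _
        rw [hw, Algebra.smulTower_leftMulMatrix]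
        show Algebra.leftMulMatrix bF (Algebra.leftMulMatrix bE x 1 1) i j = _
        rw [hL11, map_zero]
    rw [hblocks, det_antidiag', ← Algebra.norm_eq_matrix_det bF d]
  -- finish
  have hTdet : T.det ≠ 0 := (isUnit_det_traceMatrix' bF).ne_zero
  have h2r : (2 : K) ^ r ≠ 0 := pow_ne_zero _ hK
  have hsq : ((-1 : K) ^ r) * ((-1 : K) ^ r) = 1 := by
    rw [← pow_add, ← two_mul, pow_mul]
    norm_num
  refine adjoinRoot_iso' (mul_ne_zero h2r hTdet) ?_
  rw [hdet1, hnx]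
  calc (2 ^ r * T.det) ^ 2 * Algebra.norm K d
      = (2 ^ r * T.det) ^ 2 * ((((-1 : K) ^ r) * ((-1 : K) ^ r)) * Algebra.norm K d) := by
        rw [hsq, one_mul]
    _ = (2 ^ r * T.det) ^ 2 * ((-1) ^ r * ((-1) ^ r * Algebra.norm K d)) := by ring
end

section
/- Let K = K and E an étale K-algebra of rank n = 2r with involution σ whose fixed algebra F has rank r, write E = F(√d). Then disc(E,σ) := det(T) equals (−1)^r disc(E) in K^×/K^{×2}, where T(x,y) = Tr_{E/K}(x σ(y)) and disc(E) = det of the usual trace form Tr_{E/K}(xy). Consequently, for every a ∈ F^×, the discriminant disc(T_a) = (−1)^r det(T_a) equals disc(E) in K^×/K^{×2}. -/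
universe u


/-- Let `E` be an étale `K`-algebra of rank `n = 2r` with involution `σ`
whose fixed algebra `F` has rank `r`, and write `E = F(√d)` (so `E` has `F`-basis `(1, x)`
with `x² = d` and `σ(x) = −x`, `σ` fixing `F`).  Then `disc(E,σ) := det(T)` equals
`(−1)^r·disc(E)` in `K^×/K^{×2}`, where `T(x,y) = Tr_{E/K}(x σ(y))` and `disc(E)` is the
determinant of the usual trace form `Tr_{E/K}(xy)`; and consequently, for every `a ∈ F^×`,
`disc(T_a) = (−1)^r det(T_a)` equals `disc(E)` in `K^×/K^{×2}`.  (All Gram determinants are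
taken with respect to the `K`-basis `β = bF.smulTower bE` of `E`.) -/
theorem disc_trace_form_of_involution
    (K : Type u) [Field K] (hK : (2 : K) ≠ 0)
    (F : Type u) [CommRing F] [Algebra K F] [Module.Finite K F]
    (r : ℕ) (bF : Module.Basis (Fin r) K F)
    (d : F) (hd : IsUnit d)
    (E : Type u) [CommRing E] [Algebra F E] [Algebra K E] [IsScalarTower K F E]
    [Module.Finite K E] [Algebra.Etale K E]
    (x : E) (hx : x ^ 2 = algebraMap F E d)
    (bE : Module.Basis (Fin 2) F E) (hbE0 : bE 0 = 1) (hbE1 : bE 1 = x)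
    (σ : E →ₐ[K] E) (hσ : ∀ y, σ (σ y) = y) (hσx : σ x = -x)
    (hσF : ∀ f : F, σ (algebraMap F E f) = algebraMap F E f) :
    (∃ c : K, c ≠ 0 ∧
      (Matrix.of fun p q : Fin r × Fin 2 =>
          Algebra.trace K E (bF.smulTower bE p * σ (bF.smulTower bE q))).det
        = (-1) ^ r * c ^ 2 *
          (Matrix.of fun p q : Fin r × Fin 2 =>
            Algebra.trace K E (bF.smulTower bE p * bF.smulTower bE q)).det) ∧
    (∀ a : F, IsUnit a → ∃ c : K, c ≠ 0 ∧
      (-1 : K) ^ r *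
        (Matrix.of fun p q : Fin r × Fin 2 =>
          Algebra.trace K E
            (algebraMap F E a * bF.smulTower bE p * σ (bF.smulTower bE q))).det
        = c ^ 2 *
          (Matrix.of fun p q : Fin r × Fin 2 =>
            Algebra.trace K E (bF.smulTower bE p * bF.smulTower bE q)).det) := by
  classical
  set β := bF.smulTower bE with hβ
  -- action of σ on the basis
  have hσβ : ∀ q : Fin r × Fin 2, σ (β q) = ((-1 : K) ^ (q.2 : ℕ)) • β q := by
    rintro ⟨i, j⟩
    have hβij : β (i, j) = algebraMap F E (bF i) * bE j := by
      rw [hβ, Module.Basis.smulTower_apply, Algebra.smul_def]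
    have h0 : σ (β (i, 0)) = β (i, 0) := by
      rw [show β (i, 0) = algebraMap F E (bF i) * (1 : E) by
          rw [hβ, Module.Basis.smulTower_apply, Algebra.smul_def, hbE0],
        map_mul, hσF, map_one]
    have h1 : σ (β (i, 1)) = -β (i, 1) := by
      rw [show β (i, 1) = algebraMap F E (bF i) * x by
          rw [hβ, Module.Basis.smulTower_apply, Algebra.smul_def, hbE1],
        map_mul, hσF, hσx, mul_neg]
    fin_cases j
    · simpa using h0
    · simpa using h1
  -- the sign diagonal matrix
  set S : Matrix (Fin r × Fin 2) (Fin r × Fin 2) K :=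
    Matrix.diagonal (fun q => (-1 : K) ^ (q.2 : ℕ)) with hS
  have hSdet : S.det = (-1 : K) ^ r := by
    rw [hS, Matrix.det_diagonal, Fintype.prod_prod_type]
    simp [Fin.prod_univ_two]
  -- Gram matrices
  set G : Matrix (Fin r × Fin 2) (Fin r × Fin 2) K :=
    Matrix.of fun p q => Algebra.trace K E (β p * β q) with hG
  have key : ∀ y : E,
      (Matrix.of fun p q : Fin r × Fin 2 =>
        Algebra.trace K E (y * β p * σ (β q)))
      = (Matrix.of fun p q : Fin r × Fin 2 =>
          Algebra.trace K E (y * β p * β q)) * S := by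
    intro y
    ext p q
    rw [hS, Matrix.mul_diagonal]
    rw [Matrix.of_apply, Matrix.of_apply, hσβ q, mul_smul_comm, map_smul,
      smul_eq_mul, mul_comm]
  constructor
  · refine ⟨1, one_ne_zero, ?_⟩
    have h1 := key 1
    simp only [one_mul] at h1
    rw [show (Matrix.of fun p q : Fin r × Fin 2 =>
        Algebra.trace K E (β p * σ (β q))) = G * S from h1]
    rw [Matrix.det_mul, hSdet, one_pow]
    ring
  · intro a ha
    refine ⟨Algebra.norm K a, (ha.map (Algebra.norm K)).ne_zero, ?_⟩
    -- left multiplication matrix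
    set A : Matrix (Fin r × Fin 2) (Fin r × Fin 2) K :=
      Algebra.leftMulMatrix β (algebraMap F E a) with hA
    have hAdet : A.det = (Algebra.norm K a) ^ 2 := by
      rw [hA, hβ, Algebra.smulTower_leftMulMatrix_algebraMap,
        Matrix.det_blockDiagonal]
      rw [← Algebra.norm_eq_matrix_det bF a]
      simp [sq]
    have hGa : (Matrix.of fun p q : Fin r × Fin 2 =>
        Algebra.trace K E (algebraMap F E a * β p * β q)) = G * A := by
      ext p q
      rw [Matrix.mul_apply]
      have hrep : algebraMap F E a * β q = ∑ s, A s q • β s := by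
        conv_lhs => rw [← Module.Basis.sum_repr β (algebraMap F E a * β q)]
        refine Finset.sum_congr rfl fun s _ => ?_
        rw [hA, Algebra.leftMulMatrix_apply, LinearMap.toMatrix_apply]
        simp [Algebra.lmul]
      calc Algebra.trace K E (algebraMap F E a * β p * β q)
          = Algebra.trace K E (β p * (algebraMap F E a * β q)) := by ring_nf
        _ = ∑ s, G p s * A s q := by
            rw [hrep, Finset.mul_sum, map_sum]
            refine Finset.sum_congr rfl fun s _ => ?_
            rw [mul_smul_comm, map_smul, smul_eq_mul, mul_comm]
            rfl
    have hMa := key (algebraMap F E a)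
    rw [hMa, hGa, Matrix.det_mul, Matrix.det_mul, hSdet, hAdet]
    have h1 : ((-1 : K)) ^ (r * 2) = 1 := Even.neg_one_pow ⟨r, by ring⟩
    ring_nf
    rw [h1, mul_one]
end

section
/- Let I = {1,…,m} be a finite index set, Ω a set, Σ₀ ⊆ Ω and Σ_i ⊆ Ω subsets for i ∈ I. Let P be the set of partitions (I₀, I₁) of I (ordered pairs with I₀ ∪ I₁ = I, I₀ ∩ I₁ = ∅) such that either the partition is trivial ((I,∅) or (∅,I)) or Σ₀ ∪ (⋂_{i∈I₀} Σ_i) ∪ (⋂_{j∈I₁} Σ_j) = Ω. Identify (I₀,I₁) with (I₁,I₀). Then the set of equivalence classes of P, with addition (I₀,I₁) + (I₀′,I₁′) = ((I₀∩I₀′) ∪ (I₁∩I₁′), (I₀∩I₁′) ∪ (I₁∩I₀′)), is a subgroup of the group ({0,1}^m)/⟨(1,…,1)⟩ under componentwise addition; in particular, it is closed under the sum operation. -/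
/-- The combinatorial Tate–Shafarevich set `S ⊆ (ℤ/2)^m` attached to a family of subsets
`Σᵢ ⊆ Ω` and `Sig0 ⊆ Ω`: a vector `x` (encoding the partition `I₀ = {i | x i = 0}`,
`I₁ = {i | x i = 1}`) belongs to `S` iff the partition is trivial or
`Sig0 ∪ (⋂_{i ∈ I₀} Σᵢ) ∪ (⋂_{j ∈ I₁} Σⱼ) = Ω`. -/
def shaSet {Ω : Type*} (m : ℕ) (Sig0 : Set Ω) (Sig : Fin m → Set Ω) :
    Set (Fin m → ZMod 2) :=
  {x | x = 0 ∨ x = (fun _ => 1) ∨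
    Sig0 ∪ (⋂ i ∈ {i | x i = 0}, Sig i) ∪ (⋂ j ∈ {j | x j = 1}, Sig j) = Set.univ}

/-- Membership in `shaSet` is equivalent to the covering equation: trivial vectors satisfy
the equation automatically, since one of the two intersections is over the empty index set. -/
lemma mem_shaSet_iff {Ω : Type*} (m : ℕ) (Sig0 : Set Ω) (Sig : Fin m → Set Ω)
    (x : Fin m → ZMod 2) :
    x ∈ shaSet m Sig0 Sig ↔
      Sig0 ∪ (⋂ i ∈ {i | x i = 0}, Sig i) ∪ (⋂ j ∈ {j | x j = 1}, Sig j) = Set.univ := by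
  constructor
  · rintro (rfl | rfl | h)
    · have h1 : {j : Fin m | (0 : Fin m → ZMod 2) j = 1} = ∅ := by
        ext j; simp [Pi.zero_apply]
      rw [h1]
      simp
    · have h0 : {i : Fin m | (fun _ : Fin m => (1 : ZMod 2)) i = 0} = ∅ := by
        ext i; simp
      rw [h0]
      ext ω
      simp
    · exact h
  · intro h
    exact Or.inr (Or.inr h)

/-- Closure of `shaSet` under addition. -/
lemma shaSet_add_mem {Ω : Type*} (m : ℕ) (Sig0 : Set Ω) (Sig : Fin m → Set Ω)
    {x y : Fin m → ZMod 2} (hx : x ∈ shaSet m Sig0 Sig) (hy : y ∈ shaSet m Sig0 Sig) :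
    x + y ∈ shaSet m Sig0 Sig := by
  rw [mem_shaSet_iff] at hx hy
  refine Or.inr (Or.inr ?_)
  ext ω
  simp only [Set.mem_univ, iff_true]
  by_cases hω : ω ∈ Sig0
  · exact Or.inl (Or.inl hω)
  have hgen : ∀ z : Fin m → ZMod 2,
      Sig0 ∪ (⋂ i ∈ {i | z i = 0}, Sig i) ∪ (⋂ j ∈ {j | z j = 1}, Sig j) = Set.univ →
      ∃ a : ZMod 2, ∀ i, z i = a → ω ∈ Sig i := by
    intro z hz
    have h1 : ω ∈ Sig0 ∪ (⋂ i ∈ {i | z i = 0}, Sig i) ∪ (⋂ j ∈ {j | z j = 1}, Sig j) :=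
      hz.ge (Set.mem_univ ω)
    rcases h1 with (h | h) | h
    · exact absurd h hω
    · exact ⟨0, fun i hi => Set.mem_iInter₂.mp h i hi⟩
    · exact ⟨1, fun i hi => Set.mem_iInter₂.mp h i hi⟩
  obtain ⟨a, ha⟩ := hgen x hx
  obtain ⟨b, hb⟩ := hgen y hy
  have hne : ∀ z w : ZMod 2, z ≠ w → z = w + 1 := by decide
  have key : ∀ i, (x + y) i = a + b + 1 → ω ∈ Sig i := by
    intro i hi
    by_cases hxa : x i = a
    · exact ha i hxa
    · have hxi : x i = a + 1 := hne _ _ hxa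
      have hyi : y i = b := by
        have h2 : x i + y i = a + b + 1 := hi
        rw [hxi] at h2
        linear_combination h2
      exact hb i hyi
  have hz2 : ∀ z : ZMod 2, z = 0 ∨ z = 1 := by decide
  rcases hz2 (a + b + 1) with hc | hc
  · refine Or.inl (Or.inr ?_)
    exact Set.mem_iInter₂.mpr fun i hi => key i (by rw [hc]; exact hi)
  · refine Or.inr ?_
    exact Set.mem_iInter₂.mpr fun i hi => key i (by rw [hc]; exact hi)

/-- The set of (classes of) partitions `(I₀, I₁)` of `I = {1,…,m}` which are
trivial or satisfy `Sig0 ∪ (⋂_{i∈I₀} Σᵢ) ∪ (⋂_{j∈I₁} Σⱼ) = Ω`, with the addition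
`(I₀,I₁) + (I₀′,I₁′) = ((I₀∩I₀′)∪(I₁∩I₁′), (I₀∩I₁′)∪(I₁∩I₀′))` (which corresponds to
componentwise addition of the encoding vectors in `(ℤ/2)^m`), forms a subgroup of
`({0,1}^m)/⟨(1,…,1)⟩`: concretely, the set `S` of encoding vectors is a subgroup of
`(ℤ/2)^m` containing the all-ones vector `(1,…,1)`; in particular it is closed under sums. -/
theorem shaSet_is_subgroup {Ω : Type*} (m : ℕ) (Sig0 : Set Ω) (Sig : Fin m → Set Ω) :
    ∃ G : AddSubgroup (Fin m → ZMod 2),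
      (G : Set (Fin m → ZMod 2)) = shaSet m Sig0 Sig ∧ (fun _ => (1 : ZMod 2)) ∈ G := by
  refine ⟨{ carrier := shaSet m Sig0 Sig
            zero_mem' := Or.inl rfl
            add_mem' := fun hx hy => shaSet_add_mem m Sig0 Sig hx hy
            neg_mem' := ?_ }, rfl, Or.inr (Or.inl rfl)⟩
  intro x hx
  have hneg : -x = x := by
    ext i
    exact CharTwo.neg_eq _
  rwa [hneg]
end

section
/- Let H₁ and H₂ be quaternion algebras over a field K of characteristic ≠ 2 with canonical (symplectic) involutions τ₁, τ₂, and let (A,τ) = (H₁ ⊗_K H₂, τ₁ ⊗ τ₂). Then every τ-skew element of A lies in H₁⁰ ⊗ 1 ⊕ 1 ⊗ H₂⁰ (where H_i⁰ denotes the pure quaternions, i.e. the τ_i-skew elements), and every τ-skew element whose square is central (lies in K) belongs to H₁⁰ ⊗ 1 or to 1 ⊗ H₂⁰. -/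
open scoped TensorProduct

/-- The canonical involution (quaternion conjugation) of a quaternion algebra, as a
`K`-linear map. -/
def quatStarLM (K : Type*) [Field K] (a b : K) :
    QuaternionAlgebra K a 0 b →ₗ[K] QuaternionAlgebra K a 0 b where
  toFun := star
  map_add' := star_add
  map_smul' r x := by simp [QuaternionAlgebra.star_smul]

@[simp] lemma quatStarLM_apply (K : Type*) [Field K] (a b : K) (x : QuaternionAlgebra K a 0 b) :
    quatStarLM K a b x = star x := rfl

noncomputable def quatBasisVec (K : Type) [Field K] (a b : K) (i : Fin 4) :
    QuaternionAlgebra K a 0 b :=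
  QuaternionAlgebra.basisOneIJK a 0 b i

lemma quatBasisVec_eq (K : Type) [Field K] (a b : K) (i : Fin 4) :
    quatBasisVec K a b i =
      (⟨![1,0,0,0] i, ![0,1,0,0] i, ![0,0,1,0] i, ![0,0,0,1] i⟩ : QuaternionAlgebra K a 0 b) := by
  fin_cases i <;> ext <;> simp [quatBasisVec, QuaternionAlgebra.basisOneIJK]

lemma star_quatBasis (K : Type) [Field K] (a b : K) (i : Fin 4) :
    star (QuaternionAlgebra.basisOneIJK a 0 b i) =
      (![1,-1,-1,-1] i : K) • QuaternionAlgebra.basisOneIJK a 0 b i := by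
  fin_cases i <;>
    simp only [show (QuaternionAlgebra.basisOneIJK a 0 b : Fin 4 → _) = quatBasisVec K a b from rfl,
      quatBasisVec_eq] <;> ext <;> simp

lemma vecval (K : Type) [Field K] (i : Fin 4) (hi : i ≠ 0) : ![(1:K),0,0,0] i = 0 := by
  fin_cases i <;> simp_all

lemma pure_sq (K : Type) [Field K] (a b : K) (x : QuaternionAlgebra K a 0 b) (hx : x.re = 0) :
    x * x = algebraMap K _ (a * x.imI^2 + b * x.imJ^2 - a*b*x.imK^2) := by
  ext <;> simp [QuaternionAlgebra.re_mul, QuaternionAlgebra.imI_mul,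
    QuaternionAlgebra.imJ_mul, QuaternionAlgebra.imK_mul, hx,
    ← QuaternionAlgebra.coe_pow, QuaternionAlgebra.re_coe] <;> ring


set_option maxHeartbeats 1000000 in
/-- Let `H₁ = (a₁,b₁)_K` and `H₂ = (a₂,b₂)_K` be quaternion algebras over a
field `K` of characteristic `≠ 2` with canonical involutions `τ₁, τ₂`, and let
`τ = τ₁ ⊗ τ₂` on `A = H₁ ⊗_K H₂`.  Then every `τ`-skew element of `A` lies in
`H₁⁰ ⊗ 1 ⊕ 1 ⊗ H₂⁰` (where `Hᵢ⁰` is the space of pure quaternions, i.e. `τᵢ`-skew elements),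
and every `τ`-skew element whose square is central (lies in `K`) belongs to `H₁⁰ ⊗ 1` or to
`1 ⊗ H₂⁰`. -/
theorem skew_of_tensor_of_quaternion_involutions
    (K : Type) [Field K] (h2 : (2 : K) ≠ 0)
    (a₁ b₁ a₂ b₂ : K) (ha₁ : a₁ ≠ 0) (hb₁ : b₁ ≠ 0) (ha₂ : a₂ ≠ 0) (hb₂ : b₂ ≠ 0) :
    ∀ z : QuaternionAlgebra K a₁ 0 b₁ ⊗[K] QuaternionAlgebra K a₂ 0 b₂,
      TensorProduct.map (quatStarLM K a₁ b₁) (quatStarLM K a₂ b₂) z = -z →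
      (z ∈ (LinearMap.ker (quatStarLM K a₁ b₁ + LinearMap.id)).map
              (Algebra.TensorProduct.includeLeft
                (R := K) (A := QuaternionAlgebra K a₁ 0 b₁)
                (B := QuaternionAlgebra K a₂ 0 b₂) (S := K)).toLinearMap ⊔
            (LinearMap.ker (quatStarLM K a₂ b₂ + LinearMap.id)).map
              (Algebra.TensorProduct.includeRight
                (R := K) (A := QuaternionAlgebra K a₁ 0 b₁)
                (B := QuaternionAlgebra K a₂ 0 b₂)).toLinearMap) ∧
      ((∃ c : K, z * z = algebraMap K _ c) →
        z ∈ (LinearMap.ker (quatStarLM K a₁ b₁ + LinearMap.id)).map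
              (Algebra.TensorProduct.includeLeft
                (R := K) (A := QuaternionAlgebra K a₁ 0 b₁)
                (B := QuaternionAlgebra K a₂ 0 b₂) (S := K)).toLinearMap ∨
        z ∈ (LinearMap.ker (quatStarLM K a₂ b₂ + LinearMap.id)).map
              (Algebra.TensorProduct.includeRight
                (R := K) (A := QuaternionAlgebra K a₁ 0 b₁)
                (B := QuaternionAlgebra K a₂ 0 b₂)).toLinearMap) := by
  intro z hskew
  set B₁ := QuaternionAlgebra.basisOneIJK (R := K) a₁ 0 b₁ with hB₁
  set B₂ := QuaternionAlgebra.basisOneIJK (R := K) a₂ 0 b₂ with hB₂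
  set B := B₁.tensorProduct B₂ with hB
  set τ := TensorProduct.map (quatStarLM K a₁ b₁) (quatStarLM K a₂ b₂) with hτ
  set ε : Fin 4 → K := ![1,-1,-1,-1] with hε
  -- action of τ on the basis
  have hτB : ∀ p : Fin 4 × Fin 4, τ (B p) = (ε p.1 * ε p.2) • B p := by
    rintro ⟨i, j⟩
    rw [hB, Module.Basis.tensorProduct_apply']
    simp only [hτ, TensorProduct.map_tmul, quatStarLM_apply]
    rw [star_quatBasis, star_quatBasis, TensorProduct.tmul_smul, TensorProduct.smul_tmul',
      smul_smul, mul_comm]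
    exact TensorProduct.smul_tmul' _ _ _
  set c : Fin 4 × Fin 4 → K := fun p => B.repr z p with hc
  have hzsum : ∑ p : Fin 4 × Fin 4, c p • B p = z := B.sum_repr z
  -- coordinates of τ z
  have hkey : (fun p : Fin 4 × Fin 4 => ε p.1 * ε p.2 * c p) = fun p => -(c p) := by
    have h1 : τ z = ∑ p : Fin 4 × Fin 4, (ε p.1 * ε p.2 * c p) • B p := by
      rw [← hzsum, map_sum]
      refine Finset.sum_congr rfl fun p _ => ?_
      rw [map_smul, hτB p, smul_smul, mul_comm (c p)]
    have h2 : -z = ∑ p : Fin 4 × Fin 4, (-(c p)) • B p := by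
      rw [← hzsum, ← Finset.sum_neg_distrib]
      exact Finset.sum_congr rfl fun p _ => (neg_smul _ _).symm
    have := congrArg (fun w => ⇑(B.repr w)) (h1 ▸ h2 ▸ hskew)
    simpa only [Module.Basis.repr_sum_self] using this
  have hcoord : ∀ p : Fin 4 × Fin 4, ε p.1 * ε p.2 = 1 → c p = 0 := by
    intro p hp
    have := congrFun hkey p
    rw [hp, one_mul] at this
    have h2c : 2 * c p = 0 := by linear_combination this
    exact (mul_eq_zero.1 h2c).resolve_left h2
  have h00 : c (0,0) = 0 := hcoord _ (by norm_num [hε])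
  have hεne : ∀ i : Fin 4, i ≠ 0 → ε i = -1 := by
    intro i hi
    fin_cases i
    · exact absurd rfl hi
    all_goals rfl
  have hij : ∀ i j : Fin 4, i ≠ 0 → j ≠ 0 → c (i,j) = 0 := by
    intro i j hi hj
    refine hcoord _ ?_
    show ε i * ε j = 1
    rw [hεne i hi, hεne j hj]; norm_num
  have h11 := hij 1 1 (by decide) (by decide)
  have h12 := hij 1 2 (by decide) (by decide)
  have h13 := hij 1 3 (by decide) (by decide)
  have h21 := hij 2 1 (by decide) (by decide)
  have h22 := hij 2 2 (by decide) (by decide)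
  have h23 := hij 2 3 (by decide) (by decide)
  have h31 := hij 3 1 (by decide) (by decide)
  have h32 := hij 3 2 (by decide) (by decide)
  have h33 := hij 3 3 (by decide) (by decide)
  set x : QuaternionAlgebra K a₁ 0 b₁ := ⟨0, c (1,0), c (2,0), c (3,0)⟩ with hxdef
  set y : QuaternionAlgebra K a₂ 0 b₂ := ⟨0, c (0,1), c (0,2), c (0,3)⟩ with hydef
  have hone₁ : B₁ 0 = 1 := by
    rw [hB₁]; ext <;> simp [show QuaternionAlgebra.basisOneIJK a₁ 0 b₁ 0 = quatBasisVec K a₁ b₁ 0 from rfl, quatBasisVec_eq]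
  have hone₂ : B₂ 0 = 1 := by
    rw [hB₂]; ext <;> simp [show QuaternionAlgebra.basisOneIJK a₂ 0 b₂ 0 = quatBasisVec K a₂ b₂ 0 from rfl, quatBasisVec_eq]
  have hxsum : x = c (1,0) • B₁ 1 + c (2,0) • B₁ 2 + c (3,0) • B₁ 3 := by
    ext <;> simp [hxdef, hB₁,
      show (QuaternionAlgebra.basisOneIJK a₁ 0 b₁ : Fin 4 → _) = quatBasisVec K a₁ b₁ from rfl,
      quatBasisVec_eq]
  have hysum : y = c (0,1) • B₂ 1 + c (0,2) • B₂ 2 + c (0,3) • B₂ 3 := by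
    ext <;> simp [hydef, hB₂,
      show (QuaternionAlgebra.basisOneIJK a₂ 0 b₂ : Fin 4 → _) = quatBasisVec K a₂ b₂ from rfl,
      quatBasisVec_eq]
  have hzxy : z = x ⊗ₜ[K] 1 + 1 ⊗ₜ[K] y := by
    conv_lhs => rw [← hzsum]
    rw [Fintype.sum_prod_type]
    simp only [Fin.sum_univ_four, h00, h11, h12, h13, h21, h22, h23, h31, h32, h33, zero_smul,
      add_zero, zero_add, hB, Module.Basis.tensorProduct_apply, hone₁, hone₂]
    rw [hxsum, hysum]
    simp only [TensorProduct.add_tmul, TensorProduct.tmul_add, TensorProduct.smul_tmul',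
      TensorProduct.tmul_smul]
    abel
  have hxk : x ∈ LinearMap.ker (quatStarLM K a₁ b₁ + LinearMap.id) := by
    rw [LinearMap.mem_ker, LinearMap.add_apply, quatStarLM_apply, LinearMap.id_apply]
    ext <;> simp [hxdef, QuaternionAlgebra.star_mk]
  have hyk : y ∈ LinearMap.ker (quatStarLM K a₂ b₂ + LinearMap.id) := by
    rw [LinearMap.mem_ker, LinearMap.add_apply, quatStarLM_apply, LinearMap.id_apply]
    ext <;> simp [hydef, QuaternionAlgebra.star_mk]
  constructor
  · rw [hzxy]
    exact Submodule.add_mem _ (Submodule.mem_sup_left ⟨x, hxk, rfl⟩)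
      (Submodule.mem_sup_right ⟨y, hyk, rfl⟩)
  · rintro ⟨cc, hcc⟩
    set s₁ : K := a₁ * x.imI^2 + b₁ * x.imJ^2 - a₁*b₁*x.imK^2 with hs₁
    set s₂ : K := a₂ * y.imI^2 + b₂ * y.imJ^2 - a₂*b₂*y.imK^2 with hs₂
    have hx2 : x * x = algebraMap K _ s₁ := pure_sq K a₁ b₁ x rfl
    have hy2 : y * y = algebraMap K _ s₂ := pure_sq K a₂ b₂ y rfl
    rw [hzxy] at hcc
    simp only [add_mul, mul_add, Algebra.TensorProduct.tmul_mul_tmul, one_mul, mul_one,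
      hx2, hy2, Algebra.algebraMap_eq_smul_one, Algebra.TensorProduct.one_def,
      ← TensorProduct.smul_tmul', TensorProduct.tmul_smul] at hcc
    have htt : x ⊗ₜ[K] y + x ⊗ₜ[K] y =
        (cc - s₁ - s₂) • ((1 : QuaternionAlgebra K a₁ 0 b₁) ⊗ₜ[K] (1 : QuaternionAlgebra K a₂ 0 b₂)) := by
      rw [sub_smul, sub_smul, ← hcc]
      abel
    have hxy0 : ∀ i j : Fin 4, i ≠ 0 → j ≠ 0 → (B₁.repr x i) * (B₂.repr y j) = 0 := by
      intro i j hi hj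
      have h := congrArg (fun w => B.repr w (i, j)) htt
      simp only [map_add, map_smul, Finsupp.add_apply, Finsupp.smul_apply] at h
      rw [hB] at h
      rw [Module.Basis.tensorProduct_repr_tmul_apply, Module.Basis.tensorProduct_repr_tmul_apply] at h
      have hone : (B₁.repr 1) i = 0 := by
        rw [hB₁]
        have : ⇑((QuaternionAlgebra.basisOneIJK a₁ 0 b₁).repr 1) = ![(1:K),0,0,0] := by
          rw [QuaternionAlgebra.coe_basisOneIJK_repr]; norm_num
        rw [this]
        exact vecval K i hi
      rw [hone, smul_zero, smul_zero] at h
      have h2r : 2 * (B₂.repr y j * B₁.repr x i) = 0 := by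
        have := h; simp only [smul_eq_mul] at this; linear_combination this
      have := (mul_eq_zero.1 h2r).resolve_left h2
      rw [mul_comm] at this; exact this
    have hreprx : ⇑(B₁.repr x) = ![0, c (1,0), c (2,0), c (3,0)] := by
      rw [hB₁, QuaternionAlgebra.coe_basisOneIJK_repr]
    have hrepry : ⇑(B₂.repr y) = ![0, c (0,1), c (0,2), c (0,3)] := by
      rw [hB₂, QuaternionAlgebra.coe_basisOneIJK_repr]
    by_cases hx0 : c (1,0) = 0 ∧ c (2,0) = 0 ∧ c (3,0) = 0
    · right
      have hxz : x = 0 := by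
        rw [hxdef]; ext <;> simp [hx0.1, hx0.2.1, hx0.2.2]
      refine ⟨y, hyk, ?_⟩
      show (1 : QuaternionAlgebra K a₁ 0 b₁) ⊗ₜ[K] y = z
      rw [hzxy, hxz, TensorProduct.zero_tmul, zero_add]
    · left
      have hex : ∃ i : Fin 4, i ≠ 0 ∧ B₁.repr x i ≠ 0 := by
        by_contra hcon
        push_neg at hcon
        apply hx0
        refine ⟨?_, ?_, ?_⟩
        · have := hcon 1 (by decide); rw [hreprx] at this; simpa using this
        · have := hcon 2 (by decide); rw [hreprx] at this; simpa using this
        · have := hcon 3 (by decide); rw [hreprx] at this; simpa using this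
      obtain ⟨i, hi, hxi⟩ := hex
      have hyj : ∀ j : Fin 4, j ≠ 0 → B₂.repr y j = 0 := fun j hj =>
        (mul_eq_zero.1 (hxy0 i j hi hj)).resolve_left hxi
      have hy1 := hyj 1 (by decide); have hy2' := hyj 2 (by decide); have hy3 := hyj 3 (by decide)
      rw [hrepry] at hy1 hy2' hy3
      have hyz : y = 0 := by
        rw [hydef]; ext
        · rfl
        · simpa using hy1
        · simpa using hy2'
        · simpa using hy3
      refine ⟨x, hxk, ?_⟩
      show x ⊗ₜ[K] (1 : QuaternionAlgebra K a₂ 0 b₂) = z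
      rw [hzxy, hyz, TensorProduct.tmul_zero, add_zero]
end

section
/- Let K be a field of characteristic ≠ 2, a, b ∈ K^× with a not a square, b not a square, and suppose H₁ and H₂ are quaternion division algebras over K such that K(√b) splits neither H₁ nor H₂, while K(√a) splits both. Then there is no embedding of algebras with involution of (E,σ) into (H₁⊗H₂, τ₁⊗τ₂), where E = K(√a)⊗K(√b), σ is the tensor product of the nontrivial automorphisms, and τ_i are the canonical involutions. -/
open scoped TensorProduct

namespace QSplit

variable {K : Type} [Field K] {A B : K}

theorem pure_sq (q : QuaternionAlgebra K A 0 B) (h : q.re = 0) :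
    q * q = algebraMap K _ (A*q.imI^2 + B*q.imJ^2 - A*B*q.imK^2) := by
  ext <;> simp [QuaternionAlgebra.re_mul, QuaternionAlgebra.imI_mul,
    QuaternionAlgebra.imJ_mul, QuaternionAlgebra.imK_mul, QuaternionAlgebra.algebraMap_eq, h]
  <;> ring

theorem comm_re (q v : QuaternionAlgebra K A 0 B) : (q*v - v*q).re = 0 := by
  simp [QuaternionAlgebra.re_mul]; ring

theorem anticomm (q v : QuaternionAlgebra K A 0 B) {c : K} (hq : q*q = algebraMap K _ c) :
    q * (q*v - v*q) = -((q*v - v*q) * q) := by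
  have h1 : q * (q*v - v*q) = (q*q)*v - q*v*q := by noncomm_ring
  have h2 : (q*v - v*q) * q = q*v*q - v*(q*q) := by noncomm_ring
  rw [h1, h2, hq]
  rw [Algebra.commutes c v]; abel

theorem quat_split {b : K} (h2 : (2:K) ≠ 0) (hA : A ≠ 0) (hB : B ≠ 0) (hb : b ≠ 0)
    (hdiv : ∀ x : QuaternionAlgebra K A 0 B, x ≠ 0 → IsUnit x)
    (L : Type) [Field L] [Algebra K L] (β : L) (hβ : β^2 = algebraMap K L b)
    (u : QuaternionAlgebra K A 0 B) (hu0 : u ≠ 0) (hure : u.re = 0)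
    (huu : u * u = algebraMap K _ b) :
    Nonempty ((L ⊗[K] QuaternionAlgebra K A 0 B) ≃ₐ[L] Matrix (Fin 2) (Fin 2) L) := by
  -- find `v` whose commutator with `u` is nonzero
  obtain ⟨v, hv⟩ : ∃ v, u*v - v*u ≠ (0:QuaternionAlgebra K A 0 B) := by
    by_cases hJ : u.imJ = 0
    · by_cases hK : u.imK = 0
      · have hI : u.imI ≠ 0 := by
          intro hI; exact hu0 (by ext <;> simp [hure, hI, hJ, hK])
        refine ⟨⟨0,0,1,0⟩, fun h => ?_⟩
        have hcomp : (u*(⟨0,0,1,0⟩:QuaternionAlgebra K A 0 B) - ⟨0,0,1,0⟩*u).imK = 2*u.imI := by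
          simp [QuaternionAlgebra.imK_mul, hure]; ring
        rw [h] at hcomp
        simp only [QuaternionAlgebra.imK_zero] at hcomp
        rcases mul_eq_zero.mp hcomp.symm with h' | h'
        · exact h2 h'
        · exact hI h'
      · refine ⟨⟨0,1,0,0⟩, fun h => ?_⟩
        have hcomp : (u*(⟨0,1,0,0⟩:QuaternionAlgebra K A 0 B) - ⟨0,1,0,0⟩*u).imJ
            = -(2*A*u.imK) := by
          simp [QuaternionAlgebra.imJ_mul, hure]; ring
        rw [h] at hcomp
        simp only [QuaternionAlgebra.imJ_zero] at hcomp
        rcases mul_eq_zero.mp (neg_eq_zero.mp hcomp.symm) with h' | h'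
        · rcases mul_eq_zero.mp h' with h'' | h''
          · exact h2 h''
          · exact hA h''
        · exact hK h'
    · refine ⟨⟨0,1,0,0⟩, fun h => ?_⟩
      have hcomp : (u*(⟨0,1,0,0⟩:QuaternionAlgebra K A 0 B) - ⟨0,1,0,0⟩*u).imK
          = -(2*u.imJ) := by
        simp [QuaternionAlgebra.imK_mul, hure]; ring
      rw [h] at hcomp
      simp only [QuaternionAlgebra.imK_zero] at hcomp
      rcases mul_eq_zero.mp (neg_eq_zero.mp hcomp.symm) with h' | h'
      · exact h2 h'
      · exact hJ h'
  set w : QuaternionAlgebra K A 0 B := u*v - v*u with hw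
  have hwre : w.re = 0 := comm_re u v
  have huw : u * w = -(w * u) := anticomm u v huu
  have hwu : w * u = -(u * w) := by rw [huw, neg_neg]
  set c : K := A*w.imI^2 + B*w.imJ^2 - A*B*w.imK^2 with hcdef
  have hww : w * w = algebraMap K _ c := pure_sq w hwre
  have hwunit : IsUnit w := hdiv w hv
  have hc : c ≠ 0 := by
    intro h0
    have : w * w = 0 := by rw [hww, h0, map_zero]
    exact hwunit.ne_zero (by
      have := (IsUnit.mul_left_eq_zero hwunit).mp (by rw [this] : w * w = 0)
      exact this)
  -- quaternionic basis ⟨u, w, u*w⟩ of H, giving an isomorphism ℍ[K,b,c] ≃ H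
  have hb1 : u * u = b • (1 : QuaternionAlgebra K A 0 B) := by
    rw [huu, Algebra.algebraMap_eq_smul_one]
  have hc1 : w * w = c • (1 : QuaternionAlgebra K A 0 B) := by
    rw [hww, Algebra.algebraMap_eq_smul_one]
  let qb : QuaternionAlgebra.Basis (QuaternionAlgebra K A 0 B) b 0 c :=
    { i := u, j := w, k := u*w
      i_mul_i := by rw [hb1, zero_smul, add_zero], j_mul_j := hc1, i_mul_j := rfl,
      j_mul_i := by rw [hwu, zero_smul, zero_sub] }
  let Λ : QuaternionAlgebra K b 0 c →ₐ[K] QuaternionAlgebra K A 0 B := qb.liftHom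
  have hΛ : ∀ x : QuaternionAlgebra K b 0 c,
      Λ x = algebraMap K _ x.re + x.imI • u + x.imJ • w + x.imK • (u*w) := fun x => rfl
  have hsmul10 : ∀ (γ₀ γ₁ : K), γ₀ • (1:QuaternionAlgebra K A 0 B) + γ₁ • u = 0 →
      γ₀ = 0 ∧ γ₁ = 0 := by
    intro γ₀ γ₁ h
    have h0 : γ₀ = 0 := by
      have := congrArg QuaternionAlgebra.re h
      simpa [hure] using this
    refine ⟨h0, ?_⟩
    rw [h0, zero_smul, zero_add] at h
    rcases smul_eq_zero.mp h with h' | h'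
    · exact h'
    · exact absurd h' hu0
  have hinjΛ : Function.Injective Λ := by
    rw [injective_iff_map_eq_zero]
    intro x hx
    rw [hΛ, Algebra.algebraMap_eq_smul_one] at hx
    have key1 : u * w * u = -(b • w) := by
      rw [mul_assoc, hwu, mul_neg, ← mul_assoc, hb1, smul_mul_assoc, one_mul]
    have key2 : u * (u*w) * u = -(b • (u*w)) := by
      rw [← mul_assoc u u w, hb1, smul_mul_assoc, smul_mul_assoc, one_mul, hwu, smul_neg]
    have hy : (x.re • (1:QuaternionAlgebra K A 0 B) + x.imI • u) + (x.imJ • w + x.imK • (u*w))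
        = 0 := by rw [← hx]; abel
    have hzz : (0:QuaternionAlgebra K A 0 B) = b • ((x.re • (1:QuaternionAlgebra K A 0 B)
        + x.imI • u) - (x.imJ • w + x.imK • (u*w))) := by
      calc (0:QuaternionAlgebra K A 0 B)
          = u * ((x.re • (1:QuaternionAlgebra K A 0 B) + x.imI • u)
              + (x.imJ • w + x.imK • (u*w))) * u := by rw [hy, mul_zero, zero_mul]
        _ = b • ((x.re • (1:QuaternionAlgebra K A 0 B) + x.imI • u)
              - (x.imJ • w + x.imK • (u*w))) := by
            simp only [mul_add, add_mul, mul_smul_comm, smul_mul_assoc, mul_one]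
            rw [hb1, key1, key2]
            simp only [smul_mul_assoc, one_mul]
            module
    have hsub := (smul_eq_zero.mp hzz.symm).resolve_left hb
    have h2z : ((2:K)) • (x.re • (1:QuaternionAlgebra K A 0 B) + x.imI • u) = 0 := by
      rw [two_smul]
      have := sub_eq_zero.mp hsub
      calc (x.re • (1:QuaternionAlgebra K A 0 B) + x.imI • u)
            + (x.re • (1:QuaternionAlgebra K A 0 B) + x.imI • u)
          = (x.re • (1:QuaternionAlgebra K A 0 B) + x.imI • u)
            + (x.imJ • w + x.imK • (u*w)) := by rw [this]
        _ = 0 := hy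
    have hz1 : x.re • (1:QuaternionAlgebra K A 0 B) + x.imI • u = 0 :=
      (smul_eq_zero.mp h2z).resolve_left h2
    obtain ⟨h01, h11⟩ := hsmul10 _ _ hz1
    have hz2 : x.imJ • w + x.imK • (u*w) = 0 := by
      have := hy; rw [hz1, zero_add] at this; exact this
    have hz2' : (x.imJ • (1:QuaternionAlgebra K A 0 B) + x.imK • u) * w = 0 := by
      simp only [add_mul, smul_mul_assoc, one_mul]; exact hz2
    obtain ⟨h21, h31⟩ := hsmul10 _ _ ((IsUnit.mul_left_eq_zero hwunit).mp hz2')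
    ext <;> simp [h01, h11, h21, h31]
  have hbijΛ : Function.Bijective Λ := by
    refine ⟨hinjΛ, ?_⟩
    have := (LinearMap.injective_iff_surjective_of_finrank_eq_finrank
      (f := Λ.toLinearMap) (by simp [QuaternionAlgebra.finrank_eq_four])).mp hinjΛ
    exact this
  let ΛE : QuaternionAlgebra K b 0 c ≃ₐ[K] QuaternionAlgebra K A 0 B :=
    AlgEquiv.ofBijective Λ hbijΛ
  -- matrix model of ℍ[K,b,c] over L
  have hβ' : β * β = algebraMap K L b := by rw [← pow_two]; exact hβ
  have hβ0 : β ≠ 0 := by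
    intro h0; apply hb
    have : β^2 = 0 := by rw [h0]; ring
    rw [hβ] at this
    exact (map_eq_zero (algebraMap K L)).mp this
  have hc' : algebraMap K L c ≠ 0 := (map_ne_zero (algebraMap K L)).mpr hc
  have h2L : (2:L) ≠ 0 := fun h0 =>
    h2 ((map_eq_zero (algebraMap K L)).mp (by rw [map_ofNat]; exact h0))
  let I : Matrix (Fin 2) (Fin 2) L := !![β, 0; 0, -β]
  let J : Matrix (Fin 2) (Fin 2) L := !![0, 1; algebraMap K L c, 0]
  let K' : Matrix (Fin 2) (Fin 2) L := !![0, β; -(algebraMap K L c*β), 0]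
  have hII : I*I = b • (1 : Matrix (Fin 2) (Fin 2) L) := by
    ext i j; fin_cases i <;> fin_cases j <;>
      simp [I, Matrix.mul_apply, Fin.sum_univ_two, Algebra.smul_def, hβ'] <;> ring
  have hJJ : J*J = c • (1 : Matrix (Fin 2) (Fin 2) L) := by
    ext i j; fin_cases i <;> fin_cases j <;>
      simp [J, Matrix.mul_apply, Fin.sum_univ_two, Algebra.smul_def] <;> ring
  have hIJ : I*J = K' := by
    ext i j; fin_cases i <;> fin_cases j <;>
      simp [I, J, K', Matrix.mul_apply, Fin.sum_univ_two] <;> ring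
  have hJI : J*I = -K' := by
    ext i j; fin_cases i <;> fin_cases j <;>
      simp [I, J, K', Matrix.mul_apply, Fin.sum_univ_two] <;> ring
  let qm : QuaternionAlgebra.Basis (Matrix (Fin 2) (Fin 2) L) b 0 c :=
    { i := I, j := J, k := K', i_mul_i := by rw [hII, zero_smul, add_zero], j_mul_j := hJJ, i_mul_j := hIJ,
      j_mul_i := by rw [hJI, zero_smul, zero_sub] }
  let m : QuaternionAlgebra K b 0 c →ₐ[K] Matrix (Fin 2) (Fin 2) L := qm.liftHom
  have hm : ∀ x : QuaternionAlgebra K b 0 c,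
      m x = algebraMap K _ x.re + x.imI • I + x.imJ • J + x.imK • K' := fun x => rfl
  let g : QuaternionAlgebra K A 0 B →ₐ[K] Matrix (Fin 2) (Fin 2) L := m.comp ΛE.symm.toAlgHom
  let Θ : (L ⊗[K] QuaternionAlgebra K A 0 B) →ₐ[L] Matrix (Fin 2) (Fin 2) L :=
    Algebra.TensorProduct.lift (Algebra.ofId L _) g
      (fun x y => by
        simpa [Algebra.ofId_apply, Commute, SemiconjBy] using Algebra.commutes x (g y))
  have hΛi : ΛE (⟨0,1,0,0⟩ : QuaternionAlgebra K b 0 c) = u := by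
    show Λ _ = u
    rw [hΛ]; simp
  have hΛj : ΛE (⟨0,0,1,0⟩ : QuaternionAlgebra K b 0 c) = w := by
    show Λ _ = w
    rw [hΛ]; simp
  have hImem : I ∈ Θ.range := by
    refine ⟨(1:L) ⊗ₜ[K] u, ?_⟩
    show Θ ((1:L) ⊗ₜ[K] u) = I
    rw [Algebra.TensorProduct.lift_tmul]
    have : ΛE.symm u = (⟨0,1,0,0⟩ : QuaternionAlgebra K b 0 c) :=
      (AlgEquiv.symm_apply_eq ΛE).mpr hΛi.symm
    simp only [g, AlgHom.comp_apply, AlgEquiv.toAlgHom_eq_coe, AlgHom.coe_coe, this, map_one,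
      one_mul, hm]
    simp [this]
  have hJmem : J ∈ Θ.range := by
    refine ⟨(1:L) ⊗ₜ[K] w, ?_⟩
    show Θ ((1:L) ⊗ₜ[K] w) = J
    rw [Algebra.TensorProduct.lift_tmul]
    have : ΛE.symm w = (⟨0,0,1,0⟩ : QuaternionAlgebra K b 0 c) :=
      (AlgEquiv.symm_apply_eq ΛE).mpr hΛj.symm
    simp only [g, AlgHom.comp_apply, AlgEquiv.toAlgHom_eq_coe, AlgHom.coe_coe, this, map_one,
      one_mul, hm]
    simp [this]
  have hKmem : K' ∈ Θ.range := by
    rw [← hIJ]; exact mul_mem hImem hJmem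
  have hsurj : Function.Surjective Θ := by
    intro N
    have hN : N = ((N 0 0 + N 1 1)/2) • (1:Matrix (Fin 2) (Fin 2) L)
        + ((N 0 0 - N 1 1)/(2*β)) • I
        + ((N 0 1 + N 1 0/(algebraMap K L c))/2) • J
        + ((N 0 1 - N 1 0/(algebraMap K L c))/(2*β)) • K' := by
      ext i j
      fin_cases i <;> fin_cases j <;>
        (simp [I, J, K', Matrix.one_apply]; field_simp; ring)
    have : N ∈ Θ.range := by
      rw [hN]
      exact add_mem (add_mem (add_mem
        (Subalgebra.smul_mem _ (one_mem _) _)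
        (Subalgebra.smul_mem _ hImem _))
        (Subalgebra.smul_mem _ hJmem _))
        (Subalgebra.smul_mem _ hKmem _)
    exact this
  have hinj : Function.Injective Θ := by
    have hfr : Module.finrank L (L ⊗[K] QuaternionAlgebra K A 0 B)
        = Module.finrank L (Matrix (Fin 2) (Fin 2) L) := by
      rw [Module.finrank_baseChange, QuaternionAlgebra.finrank_eq_four,
        Module.finrank_matrix]
      simp
    exact (LinearMap.injective_iff_surjective_of_finrank_eq_finrank
      (f := Θ.toLinearMap) hfr).mpr hsurj
  exact ⟨AlgEquiv.ofBijective Θ ⟨hinj, hsurj⟩⟩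


variable {K : Type} [Field K] {A B A' B' : K}

/-- `re` as a linear map. -/
def reLM (K : Type) [Field K] (A B : K) : QuaternionAlgebra K A 0 B →ₗ[K] K where
  toFun q := q.re
  map_add' _ _ := rfl
  map_smul' _ _ := rfl

/-- projection onto the pure part. -/
def pureLM (K : Type) [Field K] (A B : K) :
    QuaternionAlgebra K A 0 B →ₗ[K] QuaternionAlgebra K A 0 B :=
  LinearMap.id - (Algebra.linearMap K _) ∘ₗ reLM K A B

@[simp] theorem reLM_apply (q : QuaternionAlgebra K A 0 B) : reLM K A B q = q.re := rfl
@[simp] theorem pureLM_apply (q : QuaternionAlgebra K A 0 B) :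
    pureLM K A B q = q - algebraMap K _ q.re := rfl

theorem pureLM_re (q : QuaternionAlgebra K A 0 B) : (pureLM K A B q).re = 0 := by
  simp [QuaternionAlgebra.algebraMap_eq]

/-- first component extraction -/
noncomputable def uMapLM (K : Type) [Field K] (A B A' B' : K) :
    (QuaternionAlgebra K A 0 B ⊗[K] QuaternionAlgebra K A' 0 B') →ₗ[K] QuaternionAlgebra K A 0 B :=
  (TensorProduct.rid K _).toLinearMap ∘ₗ TensorProduct.map (pureLM K A B) (reLM K A' B')

noncomputable def vMapLM (K : Type) [Field K] (A B A' B' : K) :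
    (QuaternionAlgebra K A 0 B ⊗[K] QuaternionAlgebra K A' 0 B') →ₗ[K] QuaternionAlgebra K A' 0 B' :=
  (TensorProduct.lid K _).toLinearMap ∘ₗ TensorProduct.map (reLM K A B) (pureLM K A' B')

theorem uMap_re (t : QuaternionAlgebra K A 0 B ⊗[K] QuaternionAlgebra K A' 0 B') :
    (uMapLM K A B A' B' t).re = 0 := by
  have h : (reLM K A B) ∘ₗ (uMapLM K A B A' B') = 0 := by
    apply TensorProduct.ext'
    intro g h
    simp [uMapLM, pureLM_re]
  simpa using LinearMap.congr_fun h t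

theorem vMap_re (t : QuaternionAlgebra K A 0 B ⊗[K] QuaternionAlgebra K A' 0 B') :
    (vMapLM K A B A' B' t).re = 0 := by
  have h : (reLM K A' B') ∘ₗ (vMapLM K A B A' B') = 0 := by
    apply TensorProduct.ext'
    intro g h
    simp [vMapLM, pureLM_re]
  simpa using LinearMap.congr_fun h t

/-- the symmetric-skew decomposition identity -/
theorem sub_star_eq (t : QuaternionAlgebra K A 0 B ⊗[K] QuaternionAlgebra K A' 0 B') :
    t - TensorProduct.map (quatStarLM K A B) (quatStarLM K A' B') t
      = (2:K) • ((uMapLM K A B A' B' t) ⊗ₜ[K] (1 : QuaternionAlgebra K A' 0 B')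
        + (1 : QuaternionAlgebra K A 0 B) ⊗ₜ[K] (vMapLM K A B A' B' t)) := by
  have hLM : (LinearMap.id - TensorProduct.map (quatStarLM K A B) (quatStarLM K A' B'))
      = (2:K) • (((TensorProduct.mk K _ _).flip (1 : QuaternionAlgebra K A' 0 B'))
            ∘ₗ uMapLM K A B A' B'
          + (TensorProduct.mk K (QuaternionAlgebra K A 0 B) (QuaternionAlgebra K A' 0 B')
              (1 : QuaternionAlgebra K A 0 B)) ∘ₗ vMapLM K A B A' B') := by
    apply TensorProduct.ext'
    intro g h
    have hg : quatStarLM K A B g = (2 * g.re) • (1 : QuaternionAlgebra K A 0 B) - g := by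
      show star g = _
      ext <;> simp [two_mul]
    have hh : quatStarLM K A' B' h = (2 * h.re) • (1 : QuaternionAlgebra K A' 0 B') - h := by
      show star h = _
      ext <;> simp [two_mul]
    simp only [LinearMap.sub_apply, LinearMap.id_apply, TensorProduct.map_tmul,
      LinearMap.smul_apply, LinearMap.add_apply, LinearMap.coe_comp, Function.comp_apply,
      TensorProduct.mk_apply, LinearMap.flip_apply, uMapLM, vMapLM, pureLM_apply,
      LinearEquiv.coe_coe, LinearEquiv.coe_toLinearMap,
      TensorProduct.rid_tmul, TensorProduct.lid_tmul, reLM_apply, hg, hh,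
      Algebra.algebraMap_eq_smul_one, smul_smul, smul_sub, smul_add,
      TensorProduct.tmul_sub, TensorProduct.sub_tmul, TensorProduct.tmul_smul,
      map_sub, map_smul, TensorProduct.smul_tmul']
    simp only [← TensorProduct.smul_tmul', smul_eq_mul]
    module
  have := LinearMap.congr_fun hLM t
  simpa using this


noncomputable def FLM (K : Type) [Field K] (A B A' B' : K) :
    (QuaternionAlgebra K A 0 B ⊗[K] QuaternionAlgebra K A' 0 B') →ₗ[K] K :=
  (TensorProduct.lid K K).toLinearMap ∘ₗ TensorProduct.map (reLM K A B) (reLM K A' B')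

theorem FLM_tmul (y : QuaternionAlgebra K A 0 B) (z : QuaternionAlgebra K A' 0 B') :
    FLM K A B A' B' (y ⊗ₜ[K] z) = y.re * z.re := by
  simp [FLM, smul_eq_mul]

theorem FLM_algebraMap (d : K) :
    FLM K A B A' B' (algebraMap K _ d) = d := by
  rw [Algebra.algebraMap_eq_smul_one, map_smul, Algebra.TensorProduct.one_def, FLM_tmul]
  simp

theorem tmul_zero_cases {u : QuaternionAlgebra K A 0 B} {v : QuaternionAlgebra K A' 0 B'}
    (h : u ⊗ₜ[K] v = (0 : QuaternionAlgebra K A 0 B ⊗[K] QuaternionAlgebra K A' 0 B')) :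
    u = 0 ∨ v = 0 := by
  by_contra hc
  push_neg at hc
  obtain ⟨hu, hv⟩ := hc
  have hu' : QuaternionAlgebra.linearEquivTuple A 0 B u ≠ 0 :=
    (LinearEquiv.map_ne_zero_iff _).mpr hu
  have hv' : QuaternionAlgebra.linearEquivTuple A' 0 B' v ≠ 0 :=
    (LinearEquiv.map_ne_zero_iff _).mpr hv
  obtain ⟨n, hn⟩ := Function.ne_iff.mp hu'
  obtain ⟨m, hm⟩ := Function.ne_iff.mp hv'
  have hc := congrArg ((TensorProduct.lid K K).toLinearMap ∘ₗ
    TensorProduct.map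
      ((LinearMap.proj n) ∘ₗ (QuaternionAlgebra.linearEquivTuple A 0 B).toLinearMap)
      ((LinearMap.proj m) ∘ₗ (QuaternionAlgebra.linearEquivTuple A' 0 B').toLinearMap)) h
  simp only [LinearMap.coe_comp, Function.comp_apply, TensorProduct.map_tmul, map_zero,
    LinearEquiv.coe_coe, LinearEquiv.coe_toLinearMap, TensorProduct.lid_tmul,
    LinearMap.proj_apply, smul_eq_mul] at hc
  rcases mul_eq_zero.mp hc with h' | h'
  · exact hn (by simpa using h')
  · exact hm (by simpa using h')

end QSplit

/-- Let `K` be a field of characteristic `≠ 2`, `a, b ∈ K^×` nonsquares,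
`L_a = K(√a)`, `L_b = K(√b)` the corresponding quadratic field extensions with nontrivial
automorphisms `s_a, s_b`, and suppose `H₁, H₂` are quaternion division algebras over `K` such
that `K(√b)` splits neither `H₁` nor `H₂` while `K(√a)` splits both.  Then there is no
embedding of algebras with involution of `(E,σ) = (L_a ⊗ L_b, s_a ⊗ s_b)` into
`(H₁ ⊗ H₂, τ₁ ⊗ τ₂)`, where `τᵢ` are the canonical involutions. -/
theorem no_involution_embedding_into_quaternion_tensor
    (K : Type) [Field K] (h2 : (2 : K) ≠ 0)
    (a b : K) (hsa : ¬ IsSquare a) (hsb : ¬ IsSquare b)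
    (La : Type) [Field La] [Algebra K La] (α : La) (hα : α ^ 2 = algebraMap K La a)
    (hLa : Module.finrank K La = 2)
    (sa : La ≃ₐ[K] La) (hsa' : sa ≠ AlgEquiv.refl)
    (Lb : Type) [Field Lb] [Algebra K Lb] (β : Lb) (hβ : β ^ 2 = algebraMap K Lb b)
    (hLb : Module.finrank K Lb = 2)
    (sb : Lb ≃ₐ[K] Lb) (hsb' : sb ≠ AlgEquiv.refl)
    (a₁ b₁ a₂ b₂ : K) (ha₁ : a₁ ≠ 0) (hb₁ : b₁ ≠ 0) (ha₂ : a₂ ≠ 0) (hb₂ : b₂ ≠ 0)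
    (hdiv₁ : ∀ x : QuaternionAlgebra K a₁ 0 b₁, x ≠ 0 → IsUnit x)
    (hdiv₂ : ∀ x : QuaternionAlgebra K a₂ 0 b₂, x ≠ 0 → IsUnit x)
    -- `K(√b)` splits neither `H₁` nor `H₂` :
    (hbn₁ : ¬ Nonempty
      ((Lb ⊗[K] QuaternionAlgebra K a₁ 0 b₁) ≃ₐ[Lb] Matrix (Fin 2) (Fin 2) Lb))
    (hbn₂ : ¬ Nonempty
      ((Lb ⊗[K] QuaternionAlgebra K a₂ 0 b₂) ≃ₐ[Lb] Matrix (Fin 2) (Fin 2) Lb))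
    -- `K(√a)` splits both `H₁` and `H₂` :
    (has₁ : Nonempty
      ((La ⊗[K] QuaternionAlgebra K a₁ 0 b₁) ≃ₐ[La] Matrix (Fin 2) (Fin 2) La))
    (has₂ : Nonempty
      ((La ⊗[K] QuaternionAlgebra K a₂ 0 b₂) ≃ₐ[La] Matrix (Fin 2) (Fin 2) La)) :
    ¬ ∃ f : (La ⊗[K] Lb) →ₐ[K]
        (QuaternionAlgebra K a₁ 0 b₁ ⊗[K] QuaternionAlgebra K a₂ 0 b₂),
      Function.Injective f ∧
      ∀ e : La ⊗[K] Lb,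
        TensorProduct.map (quatStarLM K a₁ b₁) (quatStarLM K a₂ b₂) (f e)
          = f (Algebra.TensorProduct.map sa.toAlgHom sb.toAlgHom e) := by
  rintro ⟨f, hinj, hstar⟩
  have hb0 : b ≠ 0 := fun h => hsb ⟨0, by rw [h, mul_zero]⟩
  have hbne : ∀ t : K, β ≠ algebraMap K Lb t := by
    intro t ht
    apply hsb
    refine ⟨t, ?_⟩
    have h1 : (algebraMap K Lb) (t*t) = algebraMap K Lb b := by
      rw [map_mul, ← ht, ← pow_two, hβ]
    exact ((algebraMap K Lb).injective h1).symm
  have hβ0 : β ≠ 0 := by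
    intro h0
    apply hb0
    have h1 : algebraMap K Lb b = 0 := by rw [← hβ, h0]; ring
    exact (map_eq_zero (algebraMap K Lb)).mp h1
  -- the nontrivial automorphism sends β to -β
  have hsbβ : sb β = -β := by
    have hsq : sb β * sb β = β * β := by
      have h1 : sb β * sb β = sb (β*β) := (map_mul sb β β).symm
      rw [h1, ← pow_two, hβ, AlgEquiv.commutes, ← hβ, pow_two]
    have hfac : (sb β - β) * (sb β + β) = sb β * sb β - β * β := by ring
    rw [hsq, sub_self] at hfac
    rcases mul_eq_zero.mp hfac with h | h
    · exfalso
      apply hsb'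
      have hββ : sb β = β := sub_eq_zero.mp h
      have hli : LinearIndependent K ![(1:Lb), β] := by
        rw [linearIndependent_fin2]
        constructor
        · simpa using hβ0
        · intro t ht
          simp only [Matrix.cons_val_one, Matrix.head_cons, Matrix.cons_val_zero] at ht
          have ht0 : t ≠ 0 := by
            intro h0; rw [h0, zero_smul] at ht; exact one_ne_zero ht.symm
          apply hbne t⁻¹
          have h3 : β = t⁻¹ • (1:Lb) := by
            have h4 := congrArg (fun y => t⁻¹ • y) ht
            rw [inv_smul_smul₀ ht0] at h4
            exact h4
          rw [Algebra.algebraMap_eq_smul_one]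
          exact h3
      let Bb := basisOfLinearIndependentOfCardEqFinrank hli (by simp [hLb])
      have hspan : Submodule.span K (Set.range ![(1:Lb), β]) = ⊤ := by
        have h1 := Bb.span_eq
        rwa [coe_basisOfLinearIndependentOfCardEqFinrank] at h1
      refine AlgEquiv.ext fun z => ?_
      show sb z = z
      have hz : z ∈ Submodule.span K (Set.range ![(1:Lb), β]) := by rw [hspan]; trivial
      refine Submodule.span_induction ?_ ?_ ?_ ?_ hz
      · rintro y ⟨i, rfl⟩
        fin_cases i
        · simp
        · simpa using hββ
      · simp
      · intro y z _ _ hy hz; rw [map_add, hy, hz]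
      · intro c y _ hy; rw [map_smul, hy]
    · exact eq_neg_of_add_eq_zero_left h
  -- the image of 1 ⊗ β
  set x : QuaternionAlgebra K a₁ 0 b₁ ⊗[K] QuaternionAlgebra K a₂ 0 b₂
    := f ((1:La) ⊗ₜ[K] β) with hxdef
  have hx2 : x * x = algebraMap K _ b := by
    have h1 : ((1:La) ⊗ₜ[K] β) * ((1:La) ⊗ₜ[K] β) = (1:La) ⊗ₜ[K] (algebraMap K Lb b) := by
      rw [Algebra.TensorProduct.tmul_mul_tmul, one_mul, ← pow_two, hβ]
    have h2' := (Algebra.TensorProduct.includeRight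
      (R := K) (A := La) (B := Lb)).commutes b
    rw [Algebra.TensorProduct.includeRight_apply] at h2'
    calc x * x = f (((1:La) ⊗ₜ[K] β) * ((1:La) ⊗ₜ[K] β)) := (map_mul f _ _).symm
      _ = f (algebraMap K _ b) := by rw [h1, h2']
      _ = algebraMap K _ b := f.commutes b
  have hS : TensorProduct.map (quatStarLM K a₁ b₁) (quatStarLM K a₂ b₂) x = -x := by
    have h1 := hstar ((1:La) ⊗ₜ[K] β)
    rw [Algebra.TensorProduct.map_tmul, map_one] at h1
    have h2' : sb.toAlgHom β = -β := hsbβ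
    rw [h2', TensorProduct.tmul_neg, map_neg] at h1
    exact h1
  -- skew decomposition
  set u : QuaternionAlgebra K a₁ 0 b₁ := QSplit.uMapLM K a₁ b₁ a₂ b₂ x with hudef
  set v : QuaternionAlgebra K a₂ 0 b₂ := QSplit.vMapLM K a₁ b₁ a₂ b₂ x with hvdef
  have hure : u.re = 0 := QSplit.uMap_re x
  have hvre : v.re = 0 := QSplit.vMap_re x
  have hxuv : x = u ⊗ₜ[K] (1 : QuaternionAlgebra K a₂ 0 b₂)
      + (1 : QuaternionAlgebra K a₁ 0 b₁) ⊗ₜ[K] v := by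
    have hid := QSplit.sub_star_eq (A := a₁) (B := b₁) (A' := a₂) (B' := b₂) x
    rw [hS, sub_neg_eq_add, ← two_smul K x] at hid
    exact smul_right_injective _ h2 hid
  have hu2 := QSplit.pure_sq u hure
  have hv2 := QSplit.pure_sq v hvre
  set cu : K := a₁*u.imI^2 + b₁*u.imJ^2 - a₁*b₁*u.imK^2 with hcudef
  set cv : K := a₂*v.imI^2 + b₂*v.imJ^2 - a₂*b₂*v.imK^2 with hcvdef
  have halgl : (algebraMap K (QuaternionAlgebra K a₁ 0 b₁) cu) ⊗ₜ[K]
      (1 : QuaternionAlgebra K a₂ 0 b₂) = algebraMap K _ cu := by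
    have h1 := (Algebra.TensorProduct.includeLeft
      (R := K) (S := K) (A := QuaternionAlgebra K a₁ 0 b₁)
      (B := QuaternionAlgebra K a₂ 0 b₂)).commutes cu
    rwa [Algebra.TensorProduct.includeLeft_apply] at h1
  have halgr : (1 : QuaternionAlgebra K a₁ 0 b₁) ⊗ₜ[K]
      (algebraMap K (QuaternionAlgebra K a₂ 0 b₂) cv) = algebraMap K _ cv := by
    have h1 := (Algebra.TensorProduct.includeRight
      (R := K) (A := QuaternionAlgebra K a₁ 0 b₁)
      (B := QuaternionAlgebra K a₂ 0 b₂)).commutes cv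
    rwa [Algebra.TensorProduct.includeRight_apply] at h1
  have hprod : algebraMap K _ cu + (2:K) • (u ⊗ₜ[K] v) + algebraMap K _ cv
      = algebraMap K _ b := by
    rw [← hx2, hxuv]
    simp only [mul_add, add_mul, Algebra.TensorProduct.tmul_mul_tmul, one_mul, mul_one]
    rw [hu2, hv2, halgl, halgr, two_smul]
    abel
  have hFb : cu + (2:K) * (u.re * v.re) + cv = b := by
    have h1 := congrArg (QSplit.FLM K a₁ b₁ a₂ b₂) hprod
    simpa [map_add, map_smul, QSplit.FLM_algebraMap, QSplit.FLM_tmul, smul_eq_mul] using h1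
  rw [hure, hvre, mul_zero, mul_zero, add_zero] at hFb
  have htv : (2:K) • (u ⊗ₜ[K] v) = (0 : QuaternionAlgebra K a₁ 0 b₁ ⊗[K]
      QuaternionAlgebra K a₂ 0 b₂) := by
    have h1 : algebraMap K (QuaternionAlgebra K a₁ 0 b₁ ⊗[K] QuaternionAlgebra K a₂ 0 b₂) b
        = algebraMap K _ cu + algebraMap K _ cv := by
      rw [← hFb, map_add]
    have h2' : (2:K) • (u ⊗ₜ[K] v) = (algebraMap K _ cu + (2:K) • (u ⊗ₜ[K] v)
        + algebraMap K _ cv) - (algebraMap K _ cu + algebraMap K _ cv) := by abel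
    rw [h2', hprod, h1, sub_self]
  have huv0 : u ⊗ₜ[K] v = (0 : QuaternionAlgebra K a₁ 0 b₁ ⊗[K]
      QuaternionAlgebra K a₂ 0 b₂) := by
    rcases smul_eq_zero.mp htv with h | h
    · exact absurd h h2
    · exact h
  have hx0 : x ≠ 0 := by
    intro h0
    apply hb0
    have h1 := congrArg (QSplit.FLM K a₁ b₁ a₂ b₂) hx2
    rw [h0, mul_zero, map_zero, QSplit.FLM_algebraMap] at h1
    exact h1.symm
  rcases QSplit.tmul_zero_cases huv0 with hu0 | hv0
  · -- u = 0 : `x = 1 ⊗ v`, so `√b ∈ H₂`, contradicting `hbn₂`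
    have hxv : x = (1 : QuaternionAlgebra K a₁ 0 b₁) ⊗ₜ[K] v := by
      rw [hxuv, hu0, TensorProduct.zero_tmul, zero_add]
    have hvne : v ≠ 0 := by
      intro h0
      exact hx0 (by rw [hxv, h0, TensorProduct.tmul_zero])
    have hcu0 : cu = 0 := by rw [hcudef, hu0]; simp
    have hv2' : v * v = algebraMap K _ b := by
      rw [hv2]
      congr 1
      rw [← hFb, hcu0, zero_add]
    exact hbn₂ (QSplit.quat_split h2 ha₂ hb₂ hb0 hdiv₂ Lb β hβ v hvne hvre hv2')
  · -- v = 0 : `x = u ⊗ 1`, so `√b ∈ H₁`, contradicting `hbn₁`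
    have hxu : x = u ⊗ₜ[K] (1 : QuaternionAlgebra K a₂ 0 b₂) := by
      rw [hxuv, hv0, TensorProduct.tmul_zero, add_zero]
    have hune : u ≠ 0 := by
      intro h0
      exact hx0 (by rw [hxu, h0, TensorProduct.zero_tmul])
    have hcv0 : cv = 0 := by rw [hcvdef, hv0]; simp
    have hu2' : u * u = algebraMap K _ b := by
      rw [hu2]
      congr 1
      rw [← hFb, hcv0, add_zero]
    exact hbn₁ (QSplit.quat_split h2 ha₁ hb₁ hb0 hdiv₁ Lb β hβ u hune hure hu2')
end

section
/- Let L/K be a separable quadratic extension of fields with nontrivial automorphism σ₀, and let h be a nondegenerate hermitian form of rank n over L/K with adjoint involution τ on A = M_n(L). Suppose (E,σ) is an étale L-algebra with involution of the second kind (σ restricts to σ₀ on L), F = E^σ has K-rank n, and there is an embedding of algebras with involution (E,σ) → (A,τ). Then det(h)·disc(E,σ)^{−1} ∈ N_{F/K}(F^×)·N_{L/K}(L^×), where disc(E,σ) = det of the hermitian trace form Tr_{E/L}(x σ(y)), both determinants taken in K^×/N_{L/K}(L^×). -/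
universe u

lemma trace_pi_single {L : Type u} [Field L] {ιx : Type u} [Fintype ιx] [DecidableEq ιx]
    (F : ιx → Type u) [∀ i, CommRing (F i)] [∀ i, Algebra L (F i)]
    [∀ i, Module.Finite L (F i)] (i : ιx) (w : F i) :
    Algebra.trace L (∀ j, F j) (Pi.single i w) = Algebra.trace L (F i) w := by
  classical
  let bs : ∀ j, Module.Basis (Module.Free.ChooseBasisIndex L (F j)) L (F j) :=
    fun j => Module.Free.chooseBasis L (F j)
  rw [Algebra.trace_eq_matrix_trace (Pi.basis bs), Algebra.trace_eq_matrix_trace (bs i),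
    Matrix.trace, Matrix.trace, ← Finset.univ_sigma_univ, Finset.sum_sigma]
  rw [Finset.sum_eq_single i (fun j _ hj => ?_) (fun h => absurd (Finset.mem_univ i) h)]
  · apply Finset.sum_congr rfl
    intro k _
    simp only [Matrix.diag_apply, Algebra.leftMulMatrix_eq_repr_mul, Pi.basis_repr,
      Pi.basis_apply]
    congr 1
    simp [Pi.mul_apply, Pi.single_eq_same]
  · -- j ≠ i : each diagonal term vanishes
    apply Finset.sum_eq_zero
    intro k _
    simp only [Matrix.diag_apply, Algebra.leftMulMatrix_eq_repr_mul, Pi.basis_repr,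
      Pi.basis_apply, Pi.mul_apply, Pi.single_eq_of_ne hj]

    rw [zero_mul, map_zero, Finsupp.coe_zero, Pi.zero_apply]

lemma aux_idem (L E : Type u) [Field L] [CommRing E] [Algebra L E]
    [Module.Finite L E] [Algebra.Etale L E] :
    ∃ (ιx : Type u) (_ : Fintype ιx) (ε : ιx → E),
      (∑ i, ε i = 1) ∧
      (∀ i j, i ≠ j → ε i * ε j = 0) ∧
      (∀ i, ε i ≠ 0) ∧
      (∀ i (e : E), e * ε i ≠ 0 → ∃ d, d * (e * ε i) = ε i) ∧
      (∀ i, ∃ y, Algebra.trace L E (ε i * y) ≠ 0) := by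
  classical
  haveI : IsArtinianRing E := isArtinian_of_tower L inferInstance
  haveI : IsReduced E := Algebra.FormallyUnramified.isReduced_of_field L E
  haveI : Finite {I : Ideal E | I.IsMaximal} := (IsArtinianRing.setOfPred_isMaximal_finite E).to_subtype
  letI : Fintype {I : Ideal E | I.IsMaximal} := Fintype.ofFinite _
  set MS := {I : Ideal E | I.IsMaximal} with hMS
  let F : MS → Type u := fun I => E ⧸ I.1
  haveI hmax : ∀ I : MS, I.1.IsMaximal := fun I => I.2
  letI : ∀ I : MS, Field (F I) := fun I => Ideal.Quotient.field I.1
  haveI : ∀ I : MS, Module.Finite L (F I) := fun I =>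
    Module.Finite.of_surjective (Ideal.Quotient.mkₐ L I.1).toLinearMap
      Ideal.Quotient.mk_surjective
  haveI : ∀ I : MS, Algebra.IsSeparable L (F I) := fun I =>
    Algebra.FormallyUnramified.isSeparable L (F I)
  let g : E →ₐ[L] ∀ I : MS, F I := Pi.algHom _ _ fun I => Ideal.Quotient.mkₐ L I.1
  have hginj : Function.Injective g := by
    intro x y hxy
    rw [← sub_eq_zero]
    have hmem : ∀ I : MS, x - y ∈ I.1 := fun I => by
      rw [← Ideal.Quotient.eq]
      exact congr_fun hxy I
    have hnil : IsNilpotent (x - y) := by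
      rw [nilpotent_iff_mem_prime]
      intro J hJ
      haveI := hJ
      haveI : J.IsMaximal := IsArtinianRing.isMaximal_of_isPrime J
      exact hmem ⟨J, this⟩
    exact hnil.eq_zero
  have hgsurj : Function.Surjective g := by
    intro x
    obtain ⟨r, hr⟩ := Ideal.pi_quotient_surjective
      (fun I J hIJ => Ideal.isCoprime_iff_sup_eq.mpr (Ideal.IsMaximal.coprime_of_ne (hmax I)
        (hmax J) (fun h => hIJ (Subtype.ext h)))) x
    refine ⟨r, funext fun I => ?_⟩
    rw [← hr I]
    rfl
  let g' : E ≃ₐ[L] (∀ I : MS, F I) := AlgEquiv.ofBijective g ⟨hginj, hgsurj⟩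
  have hsingle_mul : ∀ (I : MS) (u v : F I),
      (Pi.single I u : ∀ K, F K) * Pi.single I v = Pi.single I (u * v) :=
    fun I u v => (Pi.single_mul I u v).symm
  have hsingle_mul_ne : ∀ (I J : MS) (u : F I) (v : F J), I ≠ J →
      (Pi.single I u : ∀ K, F K) * Pi.single J v = 0 := by
    intro I J u v hIJ
    funext K
    rw [Pi.mul_apply, Pi.zero_apply]
    by_cases hK : K = I
    · subst hK
      rw [Pi.single_eq_of_ne hIJ, mul_zero]
    · rw [Pi.single_eq_of_ne hK, zero_mul]
  refine ⟨MS, inferInstance, fun I => g'.symm (Pi.single I 1), ?_, ?_, ?_, ?_, ?_⟩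
  · rw [← map_sum, ← map_one g'.symm]
    congr 1
    exact Finset.univ_sum_single (1 : ∀ I : MS, F I)
  · intro I J hIJ
    rw [← map_mul, hsingle_mul_ne I J 1 1 hIJ, map_zero]
  · intro I h
    have : (Pi.single I (1 : F I) : ∀ K, F K) = 0 := by
      have := congrArg g' h
      rwa [AlgEquiv.apply_symm_apply, map_zero] at this
    have := congr_fun this I
    rw [Pi.single_eq_same, Pi.zero_apply] at this
    exact one_ne_zero this
  · intro I e he
    have hkey : g' (e * g'.symm (Pi.single I 1)) = Pi.single I (g' e I) := by
      rw [map_mul, AlgEquiv.apply_symm_apply]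
      funext K
      by_cases hK : K = I
      · subst hK
        rw [Pi.mul_apply, Pi.single_eq_same, Pi.single_eq_same, mul_one]
      · rw [Pi.mul_apply, Pi.single_eq_of_ne hK, Pi.single_eq_of_ne hK, mul_zero]
    have hz : g' e I ≠ 0 := by
      intro h0
      apply he
      have : g' (e * g'.symm (Pi.single I 1)) = 0 := by rw [hkey, h0, Pi.single_zero]
      have := congrArg g'.symm this
      rwa [AlgEquiv.symm_apply_apply, map_zero] at this
    refine ⟨g'.symm (Pi.single I (g' e I)⁻¹), ?_⟩
    have : e * g'.symm (Pi.single I 1) = g'.symm (Pi.single I (g' e I)) := by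
      have := congrArg g'.symm hkey
      rwa [AlgEquiv.symm_apply_apply] at this
    rw [this, ← map_mul, hsingle_mul, inv_mul_cancel₀ hz]
  · intro I
    have htr : Algebra.trace L (F I) ≠ 0 := Algebra.trace_ne_zero L (F I)
    have : ∃ z : F I, Algebra.trace L (F I) z ≠ 0 := by
      by_contra hcon
      push_neg at hcon
      exact htr (LinearMap.ext fun z => hcon z)
    obtain ⟨z, hz⟩ := this
    refine ⟨g'.symm (Pi.single I z), ?_⟩
    rw [← map_mul, hsingle_mul, one_mul]
    have h2 : Algebra.trace L ((K : ↑MS) → F K) (g' (g'.symm (Pi.single I z)))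
        = Algebra.trace L E (g'.symm (Pi.single I z)) := Algebra.trace_eq_of_algEquiv g' _
    rw [AlgEquiv.apply_symm_apply] at h2
    rw [← h2, trace_pi_single]
    exact hz

lemma trace_semilinear {K L E : Type u} [Field K] [Field L] [CommRing E]
    [Algebra K L] [Algebra L E] [Algebra K E] [IsScalarTower K L E]
    (s : L ≃ₐ[K] L) (hss : ∀ l, s (s l) = l)
    (σ : E →ₐ[K] E) (hσ : ∀ x, σ (σ x) = x)
    (hσL : ∀ l : L, σ (algebraMap L E l) = algebraMap L E (s l)) (x : E) :
    Algebra.trace L E (σ x) = s (Algebra.trace L E x) := by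
  let e₂ : E ≃+* E :=
    { toFun := σ, invFun := σ, left_inv := hσ, right_inv := hσ,
      map_mul' := map_mul σ, map_add' := map_add σ }
  have he : RingHom.comp (algebraMap L E) ↑(s : L ≃+* L) = RingHom.comp (↑e₂) (algebraMap L E) := by
    ext l
    exact (hσL l).symm
  have h := Algebra.trace_eq_of_equiv_equiv (s : L ≃+* L) e₂ he x
  -- h : trace L E x = (s : L ≃+* L).symm (trace L E (σ x))
  have hsymm : ∀ y, (s : L ≃+* L).symm y = s y := by
    intro y
    have : (s : L ≃+* L).symm (s (s y)) = s y := by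
      rw [show s (s y) = (s : L ≃+* L) (s y) from rfl, RingEquiv.symm_apply_apply]
    rwa [hss] at this
  rw [h, hsymm, hss]
  rfl

/-- Let `L/K` be a separable quadratic extension with nontrivial
automorphism `s`, and `h` a nondegenerate hermitian form of rank `n` over `L/K` (on
`V = L^n`), with adjoint involution `τ` on `A = End_L(V) ≅ M_n(L)`.  Suppose `(E,σ)` is an
étale `L`-algebra with involution of the second kind, `F = E^σ` of `K`-rank `n`, and there is
an embedding of algebras with involution `(E,σ) → (A,τ)`.  Then
`det(h)·disc(E,σ)⁻¹ ∈ N_{F/K}(F^×)·N_{L/K}(L^×)`, where `disc(E,σ)` is the determinant of the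
hermitian trace form `Tr_{E/L}(x σ(y))` (computed in an `L`-basis `β` of `E`); concretely
there are a `σ`-fixed unit `a ∈ E` and `l ∈ L^×` with
`det(h) = N_{E/L}(a)·(l·s(l))·disc(E,σ)`. -/
theorem det_hermitian_of_embedding
    (K L : Type u) [Field K] [Field L] [Algebra K L]
    (hKL : Module.finrank K L = 2) [Algebra.IsSeparable K L]
    (s : L ≃ₐ[K] L) (hs : s ≠ AlgEquiv.refl) (hss : ∀ l, s (s l) = l)
    (n : ℕ)
    (b : (Fin n → L) → (Fin n → L) → L)
    (hb_addl : ∀ x x' y, b (x + x') y = b x y + b x' y)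
    (hb_addr : ∀ x y y', b x (y + y') = b x y + b x y')
    (hb_smull : ∀ (l : L) x y, b (l • x) y = l * b x y)
    (hb_smulr : ∀ (l : L) x y, b x (l • y) = s l * b x y)
    (hb_herm : ∀ x y, b y x = s (b x y))
    (hb_nd : ∀ x, (∀ y, b x y = 0) → x = 0)
    (E : Type u) [CommRing E] [Algebra L E] [Algebra K E] [IsScalarTower K L E]
    [Module.Finite L E] [Algebra.Etale L E] [Module.Finite K E]
    (σ : E →ₐ[K] E) (hσ : ∀ x, σ (σ x) = x)
    (hσL : ∀ l : L, σ (algebraMap L E l) = algebraMap L E (s l))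
    (hF : Module.finrank K (LinearMap.eqLocus σ.toLinearMap (LinearMap.id (R := K) (M := E))) = n)
    (β : Module.Basis (Fin n) L E)
    (ι : E →ₐ[L] Module.End L (Fin n → L)) (hinj : Function.Injective ι)
    (hcompat : ∀ (e : E) (x y : Fin n → L), b (ι e x) y = b x (ι (σ e) y)) :
    ∃ a : E, IsUnit a ∧ σ a = a ∧
      ∃ l : L, l ≠ 0 ∧
        (Matrix.of fun i j => b (Pi.single i 1) (Pi.single j 1)).det
          = Algebra.norm L a * (l * s l) *
            (Matrix.of fun i j => Algebra.trace L E (β i * σ (β j))).det := by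
  classical
  -- basic facts about b
  have hbsuml : ∀ (t : Finset (Fin n)) (f : Fin n → (Fin n → L)) (y),
      b (∑ k ∈ t, f k) y = ∑ k ∈ t, b (f k) y := fun t f y =>
    map_sum (AddMonoidHom.mk' (fun x => b x y) (fun u v => hb_addl u v y)) f t
  have hbsumr : ∀ (t : Finset (Fin n)) (x) (f : Fin n → (Fin n → L)),
      b x (∑ k ∈ t, f k) = ∑ k ∈ t, b x (f k) := fun t x f =>
    map_sum (AddMonoidHom.mk' (fun y => b x y) (fun u v => hb_addr x u v)) f t
  have hσsurj : Function.Surjective σ := fun z => ⟨σ z, hσ z⟩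
  have hrev : ∀ (e : E) (x y : Fin n → L), b x (ι e y) = b (ι (σ e) x) y := by
    intro e x y
    rw [hcompat (σ e) x y, hσ]
  -- idempotents and trace nondegeneracy
  obtain ⟨ιx, _, ε, hsum, horth, hne, hinv, htr⟩ := aux_idem L E
  have hidem : ∀ i, ε i * ε i = ε i := by
    intro i
    conv_rhs => rw [← mul_one (ε i), ← hsum]
    rw [Finset.mul_sum]
    rw [Finset.sum_eq_single i (fun j _ hj => horth i j (Ne.symm hj))
      (fun h => absurd (Finset.mem_univ i) h)]
  have B1 : ∀ x : E, x ≠ 0 → ∃ y, Algebra.trace L E (x * y) ≠ 0 := by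
    intro x hx
    have hex : ∃ i, x * ε i ≠ 0 := by
      by_contra hcon
      push_neg at hcon
      apply hx
      calc x = x * 1 := (mul_one x).symm
        _ = ∑ i, x * ε i := by rw [← Finset.mul_sum, hsum]
        _ = 0 := Finset.sum_eq_zero fun i _ => hcon i
    obtain ⟨i, hi⟩ := hex
    obtain ⟨d, hd⟩ := hinv i x hi
    obtain ⟨y₀, hy₀⟩ := htr i
    refine ⟨ε i * (d * y₀), ?_⟩
    have : x * (ε i * (d * y₀)) = (d * (x * ε i)) * y₀ := by ring
    rw [this, hd]
    exact hy₀
  haveI : FiniteDimensional L E := inferInstance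
  have hfinE : Module.finrank L E = n := by
    rw [Module.finrank_eq_card_basis β, Fintype.card_fin]
  have B2 : ∀ t : E →ₗ[L] L, ∃ a : E, ∀ z, Algebra.trace L E (a * z) = t z := by
    intro t
    have hker : ∀ x : E, Algebra.traceForm L E x = 0 → x = 0 := by
      intro x hx
      by_contra hx0
      obtain ⟨y, hy⟩ := B1 x hx0
      apply hy
      have := congrArg (fun f => f y) hx
      simpa [Algebra.traceForm_apply] using this
    have hinj2 : Function.Injective (Algebra.traceForm L E) := by
      intro x y h
      have h0 : Algebra.traceForm L E (x - y) = 0 := by rw [map_sub, h, sub_self]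
      exact sub_eq_zero.mp (hker _ h0)
    have heq : Module.finrank L E = Module.finrank L (E →ₗ[L] L) := by
      rw [Module.finrank_linearMap, Module.finrank_self, mul_one]
    have hsurj2 : Function.Surjective (Algebra.traceForm L E) :=
      (LinearMap.injective_iff_surjective_of_finrank_eq_finrank heq).mp hinj2
    obtain ⟨a, ha⟩ := hsurj2 t
    exact ⟨a, fun z => by rw [← ha, Algebra.traceForm_apply]⟩
  -- generator of V as E-module
  have hw : ∀ i, ∃ w : Fin n → L, ι (ε i) w ≠ 0 := by
    intro i
    by_contra hcon
    push_neg at hcon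
    apply hne i
    apply hinj
    rw [map_zero]
    exact LinearMap.ext fun w => hcon w
  choose w hwne using hw
  set v0 : Fin n → L := ∑ i, ι (ε i) (w i) with hv0
  have hgen : ∀ e : E, ι e v0 = 0 → e = 0 := by
    intro e he
    have hcomp : ∀ j, e * ε j = 0 := by
      intro j
      by_contra hj
      obtain ⟨d, hd⟩ := hinv j e hj
      apply hwne j
      have h1 : ι (ε j * e) v0 = 0 := by
        rw [map_mul, Module.End.mul_apply, he, map_zero]
      have h2 : ι (ε j * e) v0 = ι (e * ε j) (w j) := by
        rw [hv0, map_sum]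
        rw [Finset.sum_eq_single j (fun i _ hij => ?_) (fun h => absurd (Finset.mem_univ j) h)]
        · rw [← Module.End.mul_apply, ← map_mul]
          congr 2
          rw [show ε j * e * ε j = e * (ε j * ε j) by ring, hidem]
        · rw [← Module.End.mul_apply, ← map_mul,
            show ε j * e * ε i = (ε j * ε i) * e by ring, horth j i (Ne.symm hij), zero_mul,
            map_zero, LinearMap.zero_apply]
      have h3 : ι (e * ε j) (w j) = 0 := by rw [← h2, h1]
      have : ι (ε j) (w j) = ι d (ι (e * ε j) (w j)) := by
        rw [← Module.End.mul_apply, ← map_mul, hd]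
      rw [this, h3, map_zero]
    calc e = e * 1 := (mul_one e).symm
      _ = ∑ i, e * ε i := by rw [← Finset.mul_sum, hsum]
      _ = 0 := Finset.sum_eq_zero fun i _ => hcomp i
  let Φ : E →ₗ[L] (Fin n → L) :=
    { toFun := fun e => ι e v0,
      map_add' := fun x y => by
        show ι (x + y) v0 = ι x v0 + ι y v0
        rw [map_add, LinearMap.add_apply],
      map_smul' := fun l x => by
        show ι (l • x) v0 = l • (ι x v0)
        rw [map_smul, LinearMap.smul_apply] }
  have hΦinj : Function.Injective Φ := by
    intro x y hxy
    have h0 : Φ (x - y) = 0 := by rw [map_sub, hxy, sub_self]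
    exact sub_eq_zero.mp (hgen (x - y) h0)
  have hfinV : Module.finrank L (Fin n → L) = n := by simp
  have hΦsurj : Function.Surjective Φ :=
    (LinearMap.injective_iff_surjective_of_finrank_eq_finrank
      (by rw [hfinE, hfinV])).mp hΦinj
  -- the element a
  let t' : E →ₗ[L] L :=
    { toFun := fun z => b (ι z v0) v0,
      map_add' := fun x y => by
        show b (ι (x + y) v0) v0 = b (ι x v0) v0 + b (ι y v0) v0
        rw [map_add, LinearMap.add_apply, hb_addl],
      map_smul' := fun l x => by
        show b (ι (l • x) v0) v0 = l • b (ι x v0) v0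
        rw [map_smul, LinearMap.smul_apply, hb_smull, smul_eq_mul] }
  obtain ⟨a, ha⟩ := B2 t'
  have key : ∀ x y : E, b (ι x v0) (ι y v0) = Algebra.trace L E (a * (x * σ y)) := by
    intro x y
    rw [hrev y (ι x v0) v0, ← Module.End.mul_apply, ← map_mul]
    have : b (ι (σ y * x) v0) v0 = t' (σ y * x) := rfl
    rw [this, ← ha (σ y * x)]
    congr 1
    ring
  -- σ a = a
  have haσ : σ a = a := by
    have hst : ∀ z, Algebra.trace L E (a * σ z) = s (Algebra.trace L E (a * z)) := by
      intro z
      rw [ha (σ z), ha z]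
      show b (ι (σ z) v0) v0 = s (b (ι z v0) v0)
      rw [← hrev z v0 v0]
      exact hb_herm (ι z v0) v0
    have h2 : ∀ z, Algebra.trace L E (σ a * σ z) = s (Algebra.trace L E (a * z)) := by
      intro z
      rw [← map_mul σ, trace_semilinear s hss σ hσ hσL]
    have h3 : ∀ z, Algebra.trace L E ((a - σ a) * z) = 0 := by
      intro z'
      obtain ⟨z, rfl⟩ := hσsurj z'
      rw [sub_mul, map_sub, hst z, h2 z, sub_self]
    by_contra hne'
    obtain ⟨y, hy⟩ := B1 (a - σ a) (sub_ne_zero.mpr (fun h => hne' h.symm))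
    exact hy (h3 y)
  -- a is a unit
  have haunit : IsUnit a := by
    have hker : ∀ c : E, a * c = 0 → c = 0 := by
      intro c hc
      apply hgen c
      apply hb_nd
      intro y'
      obtain ⟨y, rfl⟩ := hΦsurj y'
      show b (ι c v0) (ι y v0) = 0
      rw [key c y, show a * (c * σ y) = (a * c) * σ y by ring, hc, zero_mul, map_zero]
    have hinj3 : Function.Injective (LinearMap.mulLeft L a) := by
      intro x y hxy
      have h0 : a * (x - y) = 0 := by
        have hxy' : a * x = a * y := hxy
        rw [mul_sub, hxy', sub_self]
      exact sub_eq_zero.mp (hker _ h0)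
    have hsurj3 : Function.Surjective (LinearMap.mulLeft L a) :=
      (LinearMap.injective_iff_surjective_of_finrank_eq_finrank rfl).mp hinj3
    obtain ⟨c, hc⟩ := hsurj3 1
    exact IsUnit.of_mul_eq_one c hc
  -- determinant computation
  set Mstd : Matrix (Fin n) (Fin n) L :=
    Matrix.of (fun i j => b (Pi.single i 1) (Pi.single j 1)) with hMstd
  set M1 : Matrix (Fin n) (Fin n) L :=
    Matrix.of (fun i j => Algebra.trace L E (β i * σ (β j))) with hM1
  let Vb : Module.Basis (Fin n) L (Fin n → L) := Pi.basisFun L (Fin n)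
  let Φe : E ≃ₗ[L] (Fin n → L) := LinearEquiv.ofBijective Φ ⟨hΦinj, hΦsurj⟩
  let γ : Module.Basis (Fin n) L (Fin n → L) := β.map Φe
  have hγ : ∀ i, γ i = ι (β i) v0 := fun i => by
    rw [Module.Basis.map_apply]; rfl
  let C : Matrix (Fin n) (Fin n) L := Vb.toMatrix γ
  have hC : ∀ k i, C k i = γ i k := by
    intro k i
    show Vb.toMatrix γ k i = γ i k
    rw [Module.Basis.toMatrix_apply]
    exact Pi.basisFun_repr L (Fin n) (γ i) k
  have hdetC : C.det ≠ 0 := by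
    letI := Module.Basis.invertibleToMatrix Vb γ
    exact (Matrix.isUnit_det_of_invertible (Vb.toMatrix γ)).ne_zero
  let sh : L →+* L := ((s : L ≃+* L) : L →+* L)
  have hrepr : ∀ x : Fin n → L, x = ∑ k, x k • (Pi.single k (1:L) : Fin n → L) := by
    intro x
    funext j
    rw [Finset.sum_apply]
    simp [Pi.single_apply]
  have hbexp : ∀ x y : Fin n → L,
      b x y = ∑ k, ∑ l, x k * s (y l) * b (Pi.single k 1) (Pi.single l 1) := by
    intro x y
    conv_lhs => rw [hrepr x, hrepr y]
    rw [hbsuml]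
    apply Finset.sum_congr rfl
    intro k _
    rw [hb_smull, hbsumr, Finset.mul_sum]
    apply Finset.sum_congr rfl
    intro l _
    rw [hb_smulr]
    ring
  have hMat1 : Matrix.of (fun i j => b (γ i) (γ j)) = C.transpose * Mstd * C.map sh := by
    ext i j
    show b (γ i) (γ j) = (C.transpose * Mstd * C.map sh) i j
    rw [hbexp, Matrix.mul_apply, Finset.sum_comm]
    apply Finset.sum_congr rfl
    intro l _
    rw [Matrix.mul_apply, Finset.sum_mul]
    apply Finset.sum_congr rfl
    intro k _
    rw [Matrix.transpose_apply, Matrix.map_apply, hC k i, hC l j]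
    show γ i k * s (γ j l) * Mstd k l = γ i k * Mstd k l * s (γ j l)
    ring
  have hMat2 : Matrix.of (fun i j => b (γ i) (γ j)) = (Algebra.leftMulMatrix β a).transpose * M1 := by
    ext i j
    show b (γ i) (γ j) = ((Algebra.leftMulMatrix β a).transpose * M1) i j
    rw [hγ i, hγ j, key (β i) (β j)]
    rw [show a * (β i * σ (β j)) = (a * β i) * σ (β j) from (mul_assoc a (β i) (σ (β j))).symm]
    conv_lhs => rw [← Module.Basis.sum_repr β (a * β i)]
    rw [Finset.sum_mul, map_sum, Matrix.mul_apply]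
    apply Finset.sum_congr rfl
    intro k _
    rw [smul_mul_assoc, map_smul, smul_eq_mul, Matrix.transpose_apply,
      Algebra.leftMulMatrix_eq_repr_mul]
    rfl
  have hdet1 : (Matrix.of fun i j => b (γ i) (γ j)).det = C.det * Mstd.det * s C.det := by
    rw [hMat1, Matrix.det_mul, Matrix.det_mul, Matrix.det_transpose]
    congr 1
    exact (RingHom.map_det sh C).symm
  have hdet2 : (Matrix.of fun i j => b (γ i) (γ j)).det = Algebra.norm L a * M1.det := by
    rw [hMat2, Matrix.det_mul, Matrix.det_transpose, ← Algebra.norm_eq_matrix_det β a]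
  have hsC : s C.det ≠ 0 := fun h => hdetC (by
    have h2 := congrArg s h
    rwa [hss, map_zero] at h2)
  have hkey2 : C.det * Mstd.det * s C.det = Algebra.norm L a * M1.det := by
    rw [← hdet1, hdet2]
  refine ⟨a, haunit, haσ, C.det⁻¹, inv_ne_zero hdetC, ?_⟩
  rw [map_inv₀]
  field_simp
  linear_combination hkey2
end

section
/- Let E = ℂ^n with involution σ built from ρ 'split' pairs (ℂ×ℂ with swap composed with complex conjugation on each pair) and n−2ρ copies of ℂ with complex conjugation, and let h be a nondegenerate hermitian form of rank n over ℂ/ℝ. Then (E,σ) embeds into (M_n(ℂ), adjoint involution of h) as an algebra with involution if and only if the signature of h has the form (r+ρ, s+ρ) for some nonnegative integers r, s (with r+s = n−2ρ). -/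
/-- The index set for a rank `n = 2ρ + m` étale `ℂ`-algebra with `ρ` split pairs and `m`
conjugation factors. -/
abbrev CMIndex (ρ m : ℕ) := (Fin ρ × Bool) ⊕ Fin m

/-- The involution of `E = ℂ^{2ρ+m}` built from `ρ` split pairs (swap composed with complex
conjugation on each pair) and `m` copies of `ℂ` with complex conjugation. -/
def cmInvolution (ρ m : ℕ) (x : CMIndex ρ m → ℂ) : CMIndex ρ m → ℂ
  | Sum.inl (k, bb) => star (x (Sum.inl (k, !bb)))
  | Sum.inr j => star (x (Sum.inr j))

/-- A hermitian form `h` on `ι → ℂ` has signature `(p, q)` if it diagonalizes with `p`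
entries `+1` and `q` entries `−1`. -/
def HasSignature {ι : Type} [Fintype ι] (h : (ι → ℂ) → (ι → ℂ) → ℂ) (p q : ℕ) : Prop :=
  ∃ (φ : (ι → ℂ) ≃ₗ[ℂ] (ι → ℂ)) (d : ι → ℝ),
    (∀ i, d i = 1 ∨ d i = -1) ∧
    (∀ x y, h (φ x) (φ y) = ∑ i, (d i : ℂ) * x i * star (y i)) ∧
    Nat.card {i // d i = 1} = p ∧ Nat.card {i // d i = -1} = q

set_option linter.unusedSectionVars false
set_option linter.unusedVariables false

section StepA
open Matrix

variable {ι : Type} [Fintype ι] [DecidableEq ι]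
variable (h : (ι → ℂ) → (ι → ℂ) → ℂ)
variable (h_addl : ∀ x x' y, h (x + x') y = h x y + h x' y)
variable (h_addr : ∀ x y y', h x (y + y') = h x y + h x y')
variable (h_smull : ∀ (l : ℂ) x y, h (l • x) y = l * h x y)
variable (h_smulr : ∀ (l : ℂ) x y, h x (l • y) = star l * h x y)
variable (h_herm : ∀ x y, h y x = star (h x y))
variable (h_nd : ∀ x, (∀ y, h x y = 0) → x = 0)

/-- `h` as a linear map in the first argument. -/
private def hLmap (y : ι → ℂ) : (ι → ℂ) →ₗ[ℂ] ℂ where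
  toFun x := h x y
  map_add' a b := h_addl a b y
  map_smul' l x := h_smull l x y

/-- `star ∘ h x` as a linear map in the second argument. -/
private def hRmap (x : ι → ℂ) : (ι → ℂ) →ₗ[ℂ] ℂ where
  toFun y := star (h x y)
  map_add' a b := by
    show star (h x (a + b)) = star (h x a) + star (h x b)
    rw [h_addr, star_add]
  map_smul' l y := by
    show star (h x (l • y)) = (RingHom.id ℂ) l • star (h x y)
    rw [h_smulr, star_mul', star_star]
    rfl

private lemma pi_single_decomp (v : ι → ℂ) :
    v = ∑ i, v i • (Pi.single i 1 : ι → ℂ) := by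
  ext j
  simp [Pi.single_apply]

include h_addl h_smull in
private lemma h_left_expand (v w : ι → ℂ) :
    h v w = ∑ i, v i * h (Pi.single i 1) w := by
  conv_lhs => rw [pi_single_decomp v]
  rw [show h (∑ i, v i • (Pi.single i 1 : ι → ℂ)) w
      = hLmap h h_addl h_smull w (∑ i, v i • (Pi.single i 1 : ι → ℂ)) from rfl, map_sum]
  simp [hLmap]

include h_addr h_smulr in
private lemma h_right_expand (x w : ι → ℂ) :
    h x w = ∑ j, star (w j) * h x (Pi.single j 1) := by
  have e : star (h x w) = ∑ j, w j * star (h x (Pi.single j 1)) := by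
    conv_lhs => rw [pi_single_decomp w]
    rw [show star (h x (∑ j, w j • (Pi.single j 1 : ι → ℂ)))
        = hRmap h h_addr h_smulr x (∑ j, w j • (Pi.single j 1 : ι → ℂ)) from rfl, map_sum]
    simp [hRmap]
  calc h x w = star (star (h x w)) := (star_star _).symm
    _ = _ := by rw [e, star_sum]; refine Finset.sum_congr rfl fun j _ => ?_
                rw [star_mul', star_star]

/-- The Gram matrix of `h`. -/
private def gram : Matrix ι ι ℂ := Matrix.of fun i j => h (Pi.single i 1) (Pi.single j 1)

include h_addl h_smull h_addr h_smulr in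
private lemma h_eq_gram (v w : ι → ℂ) :
    h v w = v ⬝ᵥ (gram h *ᵥ star w) := by
  rw [h_left_expand h h_addl h_smull]
  simp only [dotProduct, Matrix.mulVec, _root_.gram, Matrix.of_apply, Pi.star_apply]
  refine Finset.sum_congr rfl fun i _ => ?_
  rw [h_right_expand h h_addr h_smulr, Finset.mul_sum, Finset.mul_sum]
  exact Finset.sum_congr rfl fun j _ => by ring

include h_herm in
private lemma gram_herm : (gram h).IsHermitian := by
  ext i j
  simp only [conjTranspose_apply, _root_.gram, Matrix.of_apply]
  rw [← h_herm]

include h_addl h_smull h_addr h_smulr h_nd in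
private lemma gram_det_ne_zero : (gram h).det ≠ 0 := by
  intro hdet
  have : ((gram h)ᵀ).det = 0 := by rwa [Matrix.det_transpose]
  obtain ⟨v, hv0, hv⟩ := Matrix.exists_mulVec_eq_zero_iff.2 this
  refine hv0 (h_nd v fun w => ?_)
  rw [h_eq_gram h h_addl h_addr h_smull h_smulr, Matrix.dotProduct_mulVec,
    ← Matrix.mulVec_transpose, hv, zero_dotProduct]

section Main
include h_addl h_addr h_smull h_smulr h_herm h_nd

theorem exists_signature :
    ∃ p q : ℕ, p + q = Fintype.card ι ∧ HasSignature h p q := by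
  classical
  have hM : (gram h).IsHermitian := gram_herm h h_herm
  set M : Matrix ι ι ℂ := gram h with hM_def
  set μ : ι → ℝ := hM.eigenvalues with hμ_def
  have hμ0 : ∀ k, μ k ≠ 0 := by
    intro k hk
    apply gram_det_ne_zero h h_addl h_addr h_smull h_smulr h_nd
    rw [show (gram h).det = M.det from rfl, hM.det_eq_prod_eigenvalues]
    refine Finset.prod_eq_zero (Finset.mem_univ k) ?_
    rw [show hM.eigenvalues k = μ k from rfl, hk]
    exact Complex.ofReal_zero
  set U : Matrix ι ι ℂ := (hM.eigenvectorUnitary : Matrix ι ι ℂ) with hU_def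
  set c : ι → ℝ := fun k => (Real.sqrt |μ k|)⁻¹ with hc_def
  have hc0 : ∀ k, c k ≠ 0 := fun k =>
    inv_ne_zero (ne_of_gt (Real.sqrt_pos.2 (abs_pos.2 (hμ0 k))))
  set d : ι → ℝ := fun k => if 0 < μ k then 1 else -1 with hd_def
  have hcc : ∀ k, c k * c k = |μ k|⁻¹ := fun k => by
    rw [hc_def, ← mul_inv, Real.mul_self_sqrt (abs_nonneg _)]
  have hcd : ∀ k, c k * (μ k * c k) = d k := by
    intro k
    have h1 : c k * (μ k * c k) = μ k * (c k * c k) := by ring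
    rw [h1, hcc k]
    show μ k * |μ k|⁻¹ = if 0 < μ k then 1 else -1
    by_cases hk : 0 < μ k
    · rw [if_pos hk, abs_of_pos hk, mul_inv_cancel₀ (hμ0 k)]
    · have hneg : μ k < 0 := lt_of_le_of_ne (not_lt.1 hk) (hμ0 k)
      rw [if_neg hk, abs_of_neg hneg, ← div_eq_mul_inv, div_neg, div_self (hμ0 k)]
  set cC : ι → ℂ := fun k => (c k : ℂ) with hcC_def
  set P : Matrix ι ι ℂ := (star U)ᵀ * Matrix.diagonal cC with hP_def
  have hU1 : U * star U = 1 := (Matrix.mem_unitaryGroup_iff).mp hM.eigenvectorUnitary.2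
  have hPdet : IsUnit P.det := by
    have h2 : U.det * (star U).det = 1 := by rw [← Matrix.det_mul, hU1, Matrix.det_one]
    have hsU : (star U).det ≠ 0 := by
      intro h0; rw [h0, mul_zero] at h2; exact one_ne_zero h2.symm
    rw [hP_def, Matrix.det_mul, Matrix.det_transpose, Matrix.det_diagonal]
    refine (IsUnit.mul ?_ ?_)
    · exact isUnit_iff_ne_zero.2 hsU
    · refine isUnit_iff_ne_zero.2 (Finset.prod_ne_zero_iff.2 fun k _ => ?_)
      simp [hcC_def, hc0 k]
  have hPinv : Invertible P := P.invertibleOfIsUnitDet hPdet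
  set φ : (ι → ℂ) ≃ₗ[ℂ] (ι → ℂ) := P.toLinearEquiv' hPinv with hφ_def
  have hφ : ∀ x, φ x = P *ᵥ x := fun x => by
    rw [show φ x = (φ : (ι → ℂ) →ₗ[ℂ] (ι → ℂ)) x from rfl,
      Matrix.toLinearEquiv'_apply, Matrix.toLin'_apply]
  have hkey : Pᵀ * M * P.map (starRingEnd ℂ) = Matrix.diagonal (fun k => (d k : ℂ)) := by
    have hPt : Pᵀ = Matrix.diagonal cC * star U := by
      rw [hP_def, Matrix.transpose_mul, Matrix.diagonal_transpose, Matrix.transpose_transpose]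
    have hPm : P.map (starRingEnd ℂ) = U * Matrix.diagonal cC := by
      rw [hP_def, Matrix.map_mul]
      congr 1
      · ext i j
        simp [Matrix.map_apply, Matrix.transpose_apply, Matrix.star_apply]
      · ext i j
        simp [Matrix.diagonal_apply, Matrix.map_apply, apply_ite (starRingEnd ℂ), hcC_def]
    have hsp : star U * M * U = Matrix.diagonal (RCLike.ofReal ∘ μ) :=
      by have := hM.conjStarAlgAut_star_eigenvectorUnitary
         rw [Unitary.conjStarAlgAut_star_apply] at this
         exact this
    rw [hPt, hPm]
    have hassoc : Matrix.diagonal cC * star U * M * (U * Matrix.diagonal cC)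
        = Matrix.diagonal cC * ((star U * M * U) * Matrix.diagonal cC) := by
      simp only [Matrix.mul_assoc]
    rw [hassoc, hsp, Matrix.diagonal_mul_diagonal, Matrix.diagonal_mul_diagonal]
    refine congrArg Matrix.diagonal (funext fun k => ?_)
    show (c k : ℂ) * ((μ k : ℂ) * (c k : ℂ)) = (d k : ℂ)
    rw [← hcd k]
    push_cast
    ring
  have hform : ∀ x y, h (P *ᵥ x) (P *ᵥ y) = ∑ i, (d i : ℂ) * x i * star (y i) := by
    intro x y
    have hstar : star (P *ᵥ y) = (P.map (starRingEnd ℂ)) *ᵥ (star y) := by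
      ext i
      simp [Matrix.mulVec, dotProduct, star_sum, star_mul', Matrix.map_apply, mul_comm]
    rw [h_eq_gram h h_addl h_addr h_smull h_smulr, hstar, Matrix.mulVec_mulVec,
      ← Matrix.vecMul_transpose, Matrix.dotProduct_mulVec, Matrix.vecMul_vecMul,
      ← Matrix.mul_assoc, hkey]
    simp only [dotProduct, Matrix.vecMul_diagonal, Pi.star_apply]
    exact Finset.sum_congr rfl fun i _ => by ring
  refine ⟨Fintype.card {i // 0 < μ i}, Fintype.card {i // ¬ 0 < μ i}, ?_, φ, d, ?_, ?_, ?_, ?_⟩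
  · rw [Fintype.card_subtype_compl]
    have := Fintype.card_subtype_le (fun i => 0 < μ i)
    omega
  · intro i
    by_cases hi : 0 < μ i
    · left; rw [hd_def]; simp [hi]
    · right; rw [hd_def]; simp [hi]
  · intro x y
    rw [hφ, hφ]
    exact hform x y
  · rw [Nat.card_eq_fintype_card]
    refine Fintype.card_congr (Equiv.subtypeEquivRight fun i => ?_)
    rw [hd_def]
    by_cases hi : 0 < μ i <;> simp [hi] <;> norm_num
  · rw [Nat.card_eq_fintype_card]
    refine Fintype.card_congr (Equiv.subtypeEquivRight fun i => ?_)
    rw [hd_def]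
    by_cases hi : 0 < μ i <;> simp [hi] <;> norm_num

end Main
end StepA

/-- The index swap underlying `cmInvolution`. -/
def cmSwap (ρ m : ℕ) : CMIndex ρ m → CMIndex ρ m
  | Sum.inl (k, b) => Sum.inl (k, !b)
  | Sum.inr j => Sum.inr j

lemma cmSwap_swap (ρ m : ℕ) (i : CMIndex ρ m) : cmSwap ρ m (cmSwap ρ m i) = i := by
  rcases i with ⟨k, b⟩ | j <;> simp [cmSwap]

lemma cmInvolution_swap (ρ m : ℕ) (e : CMIndex ρ m → ℂ) (i : CMIndex ρ m) :
    cmInvolution ρ m e (cmSwap ρ m i) = star (e i) := by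
  rcases i with ⟨k, b⟩ | j <;> simp [cmInvolution, cmSwap]

/-- Coefficients of the standard hermitian form adapted to `cmInvolution`. -/
def cmCoef (ρ m r : ℕ) : CMIndex ρ m → ℝ
  | Sum.inl _ => 1
  | Sum.inr j => if (j : ℕ) < r then 1 else -1

/-- The standard diagonal sign pattern with `ρ + r` ones and `ρ + (m - r)` minus ones. -/
def cmDiag (ρ m r : ℕ) : CMIndex ρ m → ℝ
  | Sum.inl (_, b) => if b then -1 else 1
  | Sum.inr j => if (j : ℕ) < r then 1 else -1

/-- The standard form adapted to the involution. -/
noncomputable def cmStdForm (ρ m r : ℕ) (x y : CMIndex ρ m → ℂ) : ℂ :=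
  ∑ i, (cmCoef ρ m r i : ℂ) * x i * star (y (cmSwap ρ m i))

lemma cmStdForm_compat (ρ m r : ℕ) (e x y : CMIndex ρ m → ℂ) :
    cmStdForm ρ m r (e * x) y = cmStdForm ρ m r x (cmInvolution ρ m e * y) := by
  unfold cmStdForm
  refine Finset.sum_congr rfl fun i _ => ?_
  rw [Pi.mul_apply, Pi.mul_apply, star_mul', cmInvolution_swap, star_star]
  ring

/-- The hyperbolic change of basis on each split pair, as a linear map. -/
noncomputable def cmTau (ρ m : ℕ) : (CMIndex ρ m → ℂ) →ₗ[ℂ] (CMIndex ρ m → ℂ) where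
  toFun x := fun i => match i with
    | Sum.inl (k, false) =>
        ((Real.sqrt 2)⁻¹ : ℝ) * (x (Sum.inl (k, false)) + x (Sum.inl (k, true)))
    | Sum.inl (k, true) =>
        ((Real.sqrt 2)⁻¹ : ℝ) * (x (Sum.inl (k, false)) - x (Sum.inl (k, true)))
    | Sum.inr j => x (Sum.inr j)
  map_add' a b := by
    funext i
    rcases i with ⟨k, _ | _⟩ | j <;> simp <;> ring
  map_smul' l a := by
    funext i
    rcases i with ⟨k, _ | _⟩ | j <;> simp <;> ring

@[simp] lemma cmTau_apply_false (ρ m : ℕ) (x : CMIndex ρ m → ℂ) (k : Fin ρ) :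
    cmTau ρ m x (Sum.inl (k, false)) =
      ((Real.sqrt 2)⁻¹ : ℝ) * (x (Sum.inl (k, false)) + x (Sum.inl (k, true))) := rfl

@[simp] lemma cmTau_apply_true (ρ m : ℕ) (x : CMIndex ρ m → ℂ) (k : Fin ρ) :
    cmTau ρ m x (Sum.inl (k, true)) =
      ((Real.sqrt 2)⁻¹ : ℝ) * (x (Sum.inl (k, false)) - x (Sum.inl (k, true))) := rfl

@[simp] lemma cmTau_apply_inr (ρ m : ℕ) (x : CMIndex ρ m → ℂ) (j : Fin m) :
    cmTau ρ m x (Sum.inr j) = x (Sum.inr j) := rfl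

lemma sqrt_two_inv_sq : (((Real.sqrt 2)⁻¹ : ℝ) : ℂ) * (((Real.sqrt 2)⁻¹ : ℝ) : ℂ) = 1 / 2 := by
  rw [← Complex.ofReal_mul, ← mul_inv, Real.mul_self_sqrt (by norm_num : (0:ℝ) ≤ 2)]
  norm_num

lemma cmTau_involutive (ρ m : ℕ) : Function.Involutive (cmTau ρ m) := by
  intro x
  funext i
  have htt := sqrt_two_inv_sq
  rcases i with ⟨k, b⟩ | j
  · cases b
    · rw [cmTau_apply_false, cmTau_apply_false, cmTau_apply_true]
      linear_combination (2 * x (Sum.inl (k, false))) * htt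
    · rw [cmTau_apply_true, cmTau_apply_false, cmTau_apply_true]
      linear_combination (2 * x (Sum.inl (k, true))) * htt
  · rfl

/-- `cmTau` as a linear equivalence. -/
noncomputable def cmTauEquiv (ρ m : ℕ) : (CMIndex ρ m → ℂ) ≃ₗ[ℂ] (CMIndex ρ m → ℂ) :=
  LinearEquiv.ofInvolutive (cmTau ρ m) (cmTau_involutive ρ m)

@[simp] lemma cmTauEquiv_apply (ρ m : ℕ) (x : CMIndex ρ m → ℂ) :
    cmTauEquiv ρ m x = cmTau ρ m x := rfl

/-- `cmTau` turns the diagonal form with pattern `cmDiag` into the standard form. -/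
lemma cmTau_form (ρ m r : ℕ) (x y : CMIndex ρ m → ℂ) :
    ∑ i, (cmDiag ρ m r i : ℂ) * (cmTau ρ m x) i * star ((cmTau ρ m y) i)
      = cmStdForm ρ m r x y := by
  unfold cmStdForm
  rw [Fintype.sum_sum_type, Fintype.sum_sum_type]
  congr 1
  · rw [Fintype.sum_prod_type, Fintype.sum_prod_type]
    refine Finset.sum_congr rfl fun k _ => ?_
    rw [Fintype.sum_bool, Fintype.sum_bool]
    have htt := sqrt_two_inv_sq
    have hst : star ((((Real.sqrt 2)⁻¹ : ℝ)) : ℂ) = (((Real.sqrt 2)⁻¹ : ℝ) : ℂ) :=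
      Complex.conj_ofReal _
    simp only [cmTau_apply_false, cmTau_apply_true, cmDiag, cmCoef, cmSwap, Bool.not_true,
      Bool.not_false, star_mul', star_add, star_sub, hst, Bool.false_eq_true, if_true, if_false,
      Complex.ofReal_neg, Complex.ofReal_one]
    push_cast
    push_cast at htt
    linear_combination (2 * x (Sum.inl (k, false)) * star (y (Sum.inl (k, true)))
      + 2 * x (Sum.inl (k, true)) * star (y (Sum.inl (k, false)))) * htt

lemma cmDiag_pm (ρ m r : ℕ) (i : CMIndex ρ m) :
    cmDiag ρ m r i = 1 ∨ cmDiag ρ m r i = -1 := by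
  rcases i with ⟨k, b⟩ | j
  · cases b <;> simp [cmDiag]
  · by_cases hj : (j : ℕ) < r <;> simp [cmDiag, hj]

def finLtEquiv {m r : ℕ} (hr : r ≤ m) : {j : Fin m // (j : ℕ) < r} ≃ Fin r where
  toFun j := ⟨j.1, j.2⟩
  invFun j := ⟨⟨j.1, lt_of_lt_of_le j.2 hr⟩, j.2⟩
  left_inv j := rfl
  right_inv j := rfl

lemma card_fin_lt {m r : ℕ} (hr : r ≤ m) :
    Fintype.card {j : Fin m // (j : ℕ) < r} = r := by
  rw [Fintype.card_congr (finLtEquiv hr), Fintype.card_fin]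

def cmDiagOneEquivPair (ρ m r : ℕ) :
    {kb : Fin ρ × Bool // cmDiag ρ m r (Sum.inl kb) = 1} ≃ Fin ρ where
  toFun x := x.1.1
  invFun k := ⟨(k, false), by norm_num [cmDiag]⟩
  left_inv := by
    rintro ⟨⟨k, b⟩, hb⟩
    cases b
    · rfl
    · exact absurd hb (by norm_num [cmDiag])
  right_inv k := rfl

def cmDiagNegEquivPair (ρ m r : ℕ) :
    {kb : Fin ρ × Bool // cmDiag ρ m r (Sum.inl kb) = -1} ≃ Fin ρ where
  toFun x := x.1.1
  invFun k := ⟨(k, true), by norm_num [cmDiag]⟩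
  left_inv := by
    rintro ⟨⟨k, b⟩, hb⟩
    cases b
    · exact absurd hb (by norm_num [cmDiag])
    · rfl
  right_inv k := rfl

lemma card_cmDiag_one (ρ m r : ℕ) (hr : r ≤ m) :
    Nat.card {i // cmDiag ρ m r i = 1} = r + ρ := by
  rw [Nat.card_eq_fintype_card,
    Fintype.card_congr (Equiv.subtypeSum (p := fun i : CMIndex ρ m => cmDiag ρ m r i = 1)),
    Fintype.card_sum, Fintype.card_congr (cmDiagOneEquivPair ρ m r), Fintype.card_fin]
  have e2 : {j : Fin m // cmDiag ρ m r (Sum.inr j) = 1} ≃ {j : Fin m // (j : ℕ) < r} :=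
    Equiv.subtypeEquivRight (fun j => by
      constructor
      · intro hj
        by_contra hc
        rw [show cmDiag ρ m r (Sum.inr j) = if (j:ℕ) < r then 1 else -1 from rfl, if_neg hc] at hj
        norm_num at hj
      · intro hj
        rw [show cmDiag ρ m r (Sum.inr j) = if (j:ℕ) < r then 1 else -1 from rfl, if_pos hj])
  rw [Fintype.card_congr e2, card_fin_lt hr]
  omega

lemma card_cmDiag_neg (ρ m r : ℕ) (hr : r ≤ m) :
    Nat.card {i // cmDiag ρ m r i = -1} = (m - r) + ρ := by
  rw [Nat.card_eq_fintype_card,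
    Fintype.card_congr (Equiv.subtypeSum (p := fun i : CMIndex ρ m => cmDiag ρ m r i = -1)),
    Fintype.card_sum, Fintype.card_congr (cmDiagNegEquivPair ρ m r), Fintype.card_fin]
  have e2 : {j : Fin m // cmDiag ρ m r (Sum.inr j) = -1} ≃ {j : Fin m // ¬ (j : ℕ) < r} :=
    Equiv.subtypeEquivRight (fun j => by
      constructor
      · intro hj hc
        rw [show cmDiag ρ m r (Sum.inr j) = if (j:ℕ) < r then 1 else -1 from rfl, if_pos hc] at hj
        norm_num at hj
      · intro hj
        rw [show cmDiag ρ m r (Sum.inr j) = if (j:ℕ) < r then 1 else -1 from rfl, if_neg hj])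
  rw [Fintype.card_congr e2, Fintype.card_subtype_compl, card_fin_lt hr, Fintype.card_fin]
  omega

lemma exists_equiv_subtype {ι : Type} [Fintype ι] [DecidableEq ι] (p q : ι → Prop)
    [DecidablePred p] [DecidablePred q]
    (hc : Fintype.card {i // p i} = Fintype.card {i // q i}) :
    ∃ g : ι ≃ ι, ∀ i, p (g i) ↔ q i := by
  have hc' : Fintype.card {i // ¬ p i} = Fintype.card {i // ¬ q i} := by
    rw [Fintype.card_subtype_compl, Fintype.card_subtype_compl, hc]
  let e1 : {i // q i} ≃ {i // p i} := Fintype.equivOfCardEq hc.symm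
  let e2 : {i // ¬ q i} ≃ {i // ¬ p i} := Fintype.equivOfCardEq hc'.symm
  refine ⟨(Equiv.sumCompl q).symm.trans ((e1.sumCongr e2).trans (Equiv.sumCompl p)), ?_⟩
  intro i
  by_cases hi : q i
  · rw [Equiv.trans_apply, Equiv.trans_apply, Equiv.sumCompl_symm_apply_of_pos hi]
    simp only [Equiv.sumCongr_apply, Sum.map_inl, Equiv.sumCompl_apply_inl]
    exact iff_of_true (e1 ⟨i, hi⟩).2 hi
  · rw [Equiv.trans_apply, Equiv.trans_apply, Equiv.sumCompl_symm_apply_of_neg hi]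
    simp only [Equiv.sumCongr_apply, Sum.map_inr, Equiv.sumCompl_apply_inr]
    exact iff_of_false (e2 ⟨i, hi⟩).2 hi

/-- Conjugation of the multiplication representation by a linear automorphism. -/
noncomputable def conjRep {ι : Type} [Fintype ι] [DecidableEq ι]
    (ψ : (ι → ℂ) ≃ₗ[ℂ] (ι → ℂ)) : (ι → ℂ) →ₐ[ℂ] Module.End ℂ (ι → ℂ) :=
  AlgHom.ofLinearMap
    { toFun := fun e => ψ.toLinearMap ∘ₗ LinearMap.mulLeft ℂ e ∘ₗ ψ.symm.toLinearMap
      map_add' := fun a b => by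
        ext x
        simp [LinearMap.mulLeft_apply, add_mul]
      map_smul' := fun c a => by
        ext x
        simp [LinearMap.mulLeft_apply, smul_mul_assoc] }
    (by
      ext x
      simp [LinearMap.mulLeft_apply])
    (fun a b => by
      ext x
      simp [LinearMap.mulLeft_apply, Module.End.mul_apply, mul_assoc])

lemma conjRep_apply {ι : Type} [Fintype ι] [DecidableEq ι]
    (ψ : (ι → ℂ) ≃ₗ[ℂ] (ι → ℂ)) (e : ι → ℂ) (x : ι → ℂ) :
    conjRep ψ e x = ψ (e * ψ.symm x) := rfl

lemma conjRep_injective {ι : Type} [Fintype ι] [DecidableEq ι]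
    (ψ : (ι → ℂ) ≃ₗ[ℂ] (ι → ℂ)) : Function.Injective (conjRep ψ) := by
  intro a b hab
  have h1 := congrArg (fun T : Module.End ℂ (ι → ℂ) => T (ψ 1)) hab
  simp only [conjRep_apply, LinearEquiv.symm_apply_apply, mul_one] at h1
  exact ψ.injective h1

lemma embedding_of_signature (ρ m r s : ℕ) (hrs : r + s = m)
    (h : (CMIndex ρ m → ℂ) → (CMIndex ρ m → ℂ) → ℂ)
    (hsig : HasSignature h (r + ρ) (s + ρ)) :
    ∃ f : (CMIndex ρ m → ℂ) →ₐ[ℂ] Module.End ℂ (CMIndex ρ m → ℂ),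
      Function.Injective f ∧
      ∀ (e : CMIndex ρ m → ℂ) (x y : CMIndex ρ m → ℂ),
        h (f e x) y = h x (f (cmInvolution ρ m e) y) := by
  classical
  obtain ⟨φ, d, hd, hform, hc1, hc2⟩ := hsig
  have hcount : Fintype.card {i // d i = 1}
      = Fintype.card {i // cmDiag ρ m r i = 1} := by
    rw [← Nat.card_eq_fintype_card, ← Nat.card_eq_fintype_card, hc1,
      card_cmDiag_one ρ m r (by omega)]
  obtain ⟨g, hg⟩ := exists_equiv_subtype (fun i => d i = 1) (fun i => cmDiag ρ m r i = 1) hcount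
  have hdg : ∀ i, d (g i) = cmDiag ρ m r i := by
    intro i
    rcases hd (g i) with h1 | h1
    · rw [h1, (hg i).1 h1]
    · have h2 : ¬ cmDiag ρ m r i = 1 := fun hc => by
        rw [(hg i).2 hc] at h1; norm_num at h1
      rcases cmDiag_pm ρ m r i with h3 | h3
      · exact absurd h3 h2
      · rw [h1, h3]
  set ψ : (CMIndex ρ m → ℂ) ≃ₗ[ℂ] (CMIndex ρ m → ℂ) :=
    (cmTauEquiv ρ m).trans ((LinearEquiv.funCongrLeft ℂ ℂ g.symm).trans φ) with hψ
  have hψ_apply : ∀ x, ψ x = φ (fun i => cmTau ρ m x (g.symm i)) := fun x => rfl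
  have hψform : ∀ x y, h (ψ x) (ψ y) = cmStdForm ρ m r x y := by
    intro x y
    rw [hψ_apply, hψ_apply, hform]
    rw [← Equiv.sum_comp g
      (fun i => (d i : ℂ) * (cmTau ρ m x (g.symm i)) * star (cmTau ρ m y (g.symm i)))]
    simp only [Equiv.symm_apply_apply]
    calc ∑ j, (d (g j) : ℂ) * cmTau ρ m x j * star (cmTau ρ m y j)
        = ∑ j, (cmDiag ρ m r j : ℂ) * cmTau ρ m x j * star (cmTau ρ m y j) :=
          Finset.sum_congr rfl fun j _ => by rw [hdg j]
      _ = cmStdForm ρ m r x y := cmTau_form ρ m r x y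
  refine ⟨conjRep ψ, conjRep_injective ψ, fun e x y => ?_⟩
  calc h (conjRep ψ e x) y
      = h (ψ (e * ψ.symm x)) (ψ (ψ.symm y)) := by rw [conjRep_apply, ψ.apply_symm_apply]
    _ = cmStdForm ρ m r (e * ψ.symm x) (ψ.symm y) := hψform _ _
    _ = cmStdForm ρ m r (ψ.symm x) (cmInvolution ρ m e * ψ.symm y) := cmStdForm_compat _ _ _ _ _ _
    _ = h (ψ (ψ.symm x)) (ψ (cmInvolution ρ m e * ψ.symm y)) := (hψform _ _).symm
    _ = h x (conjRep ψ (cmInvolution ρ m e) y) := by rw [ψ.apply_symm_apply, conjRep_apply]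

section SumLemmas

variable {ι : Type} [Fintype ι] [DecidableEq ι]
variable (h : (ι → ℂ) → (ι → ℂ) → ℂ)
variable (h_addl : ∀ x x' y, h (x + x') y = h x y + h x' y)
variable (h_addr : ∀ x y y', h x (y + y') = h x y + h x y')
variable (h_smull : ∀ (l : ℂ) x y, h (l • x) y = l * h x y)
variable (h_smulr : ∀ (l : ℂ) x y, h x (l • y) = star l * h x y)

private def hLmap' (y : ι → ℂ) : (ι → ℂ) →ₗ[ℂ] ℂ where
  toFun x := h x y
  map_add' a b := h_addl a b y
  map_smul' l x := h_smull l x y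

private def hRmap' (x : ι → ℂ) : (ι → ℂ) →ₗ[ℂ] ℂ where
  toFun y := star (h x y)
  map_add' a b := by
    show star (h x (a + b)) = star (h x a) + star (h x b)
    rw [h_addr, star_add]
  map_smul' l y := by
    show star (h x (l • y)) = (RingHom.id ℂ) l • star (h x y)
    rw [h_smulr, star_mul', star_star]
    rfl

include h_addl h_smull in
lemma h_sum_left {κ : Type} [Fintype κ] (cf : κ → ℂ) (u : κ → ι → ℂ) (y : ι → ℂ) :
    h (∑ k, cf k • u k) y = ∑ k, cf k * h (u k) y := by
  rw [show h (∑ k, cf k • u k) y = hLmap' h h_addl h_smull y (∑ k, cf k • u k) from rfl, map_sum]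
  simp [hLmap']

include h_addr h_smulr in
lemma h_sum_right {κ : Type} [Fintype κ] (cf : κ → ℂ) (u : κ → ι → ℂ) (x : ι → ℂ) :
    h x (∑ k, cf k • u k) = ∑ k, star (cf k) * h x (u k) := by
  have e : star (h x (∑ k, cf k • u k)) = ∑ k, cf k * star (h x (u k)) := by
    rw [show star (h x (∑ k, cf k • u k)) = hRmap' h h_addr h_smulr x (∑ k, cf k • u k) from rfl,
      map_sum]
    simp [hRmap']
  calc h x (∑ k, cf k • u k) = star (star (h x (∑ k, cf k • u k))) := (star_star _).symm
    _ = _ := by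
        rw [e, star_sum]
        refine Finset.sum_congr rfl fun k _ => ?_
        rw [star_mul', star_star]

include h_addr in
lemma h_zero_right' (u : ι → ℂ) : h u 0 = 0 := by
  have h0 := h_addr u 0 0
  rw [add_zero] at h0
  exact (left_eq_add.1 h0)

end SumLemmas


lemma rho_card_bound (ρ m : ℕ)
    (h : (CMIndex ρ m → ℂ) → (CMIndex ρ m → ℂ) → ℂ)
    (h_addl : ∀ x x' y, h (x + x') y = h x y + h x' y)
    (h_addr : ∀ x y y', h x (y + y') = h x y + h x y')
    (h_smull : ∀ (l : ℂ) x y, h (l • x) y = l * h x y)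
    (h_smulr : ∀ (l : ℂ) x y, h x (l • y) = star l * h x y)
    (f : (CMIndex ρ m → ℂ) →ₐ[ℂ] Module.End ℂ (CMIndex ρ m → ℂ))
    (hinj : Function.Injective f)
    (hcompat : ∀ (e : CMIndex ρ m → ℂ) (x y : CMIndex ρ m → ℂ),
      h (f e x) y = h x (f (cmInvolution ρ m e) y))
    (t : ℝ) (ht : t = 1 ∨ t = -1)
    (φ : (CMIndex ρ m → ℂ) ≃ₗ[ℂ] (CMIndex ρ m → ℂ)) (d : CMIndex ρ m → ℝ)
    (hform : ∀ x y, h (φ x) (φ y) = ∑ i, (d i : ℂ) * x i * star (y i)) :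
    ρ + Fintype.card {i // d i = t} ≤ Fintype.card (CMIndex ρ m) := by
  classical
  -- the isotropic idempotent
  set ε : CMIndex ρ m → ℂ := Sum.elim (fun kb => if kb.2 then 0 else 1) (fun _ => 0) with hε
  have hεinv : cmInvolution ρ m ε * ε = 0 := by
    funext i
    rcases i with ⟨k, b⟩ | j
    · cases b <;> simp [cmInvolution, hε]
    · simp [cmInvolution, hε]
  have hiso : ∀ u v, h (f ε u) (f ε v) = 0 := by
    intro u v
    rw [hcompat, show f (cmInvolution ρ m ε) (f ε v)
        = (f (cmInvolution ρ m ε) * f ε) v from rfl, ← map_mul, hεinv, map_zero,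
      LinearMap.zero_apply, h_zero_right' h h_addr]
  -- the idempotents
  set ev : Fin ρ → (CMIndex ρ m → ℂ) := fun k => Pi.single (Sum.inl (k, false)) 1 with hev
  have hev_ne : ∀ k, ev k ≠ 0 := by
    intro k hk
    have := congrFun hk (Sum.inl (k, false))
    rw [hev] at this
    simp [Pi.single_eq_same] at this
  have hee : ∀ k l, ev k * ev l = if k = l then ev k else 0 := by
    intro k l
    by_cases hkl : k = l
    · subst hkl
      rw [if_pos rfl]
      funext i
      simp only [Pi.mul_apply, hev]
      by_cases hi : i = Sum.inl (k, false)
      · subst hi; simp [Pi.single_eq_same]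
      · simp [Pi.single_eq_of_ne hi]
    · rw [if_neg hkl]
      funext i
      simp only [Pi.mul_apply, hev]
      rcases eq_or_ne i (Sum.inl (k, false)) with hi | hi
      · have hi' : i ≠ Sum.inl (l, false) := by rw [hi]; simp [hkl]
        rw [Pi.single_eq_of_ne hi', mul_zero, Pi.zero_apply]
      · rw [Pi.single_eq_of_ne hi, zero_mul, Pi.zero_apply]
  have hεe : ∀ k, ε * ev k = ev k := by
    intro k
    funext i
    simp only [Pi.mul_apply, hev]
    rcases eq_or_ne i (Sum.inl (k, false)) with hi | hi
    · subst hi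
      simp [hε, Pi.single_eq_same]
    · rw [Pi.single_eq_of_ne hi, mul_zero]
  -- choice of nonzero vectors in the ranges of the idempotents
  have hfek : ∀ k, ∃ w, f (ev k) w ≠ 0 := by
    intro k
    by_contra hc
    push_neg at hc
    have h0 : f (ev k) = f 0 := by
      rw [map_zero]; exact LinearMap.ext fun w => hc w
    exact hev_ne k (hinj h0)
  choose w hw using hfek
  set v : Fin ρ → (CMIndex ρ m → ℂ) := fun k => f (ev k) (w k) with hv
  have hv_fix : ∀ k, f ε (v k) = v k := by
    intro k
    rw [hv]
    rw [show f ε (f (ev k) (w k)) = (f ε * f (ev k)) (w k) from rfl, ← map_mul, hεe k]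
  have hviso : ∀ k l, h (v k) (v l) = 0 := fun k l => by
    rw [← hv_fix k, ← hv_fix l]; exact hiso _ _
  have hvv : ∀ k l, f (ev k) (v l) = if k = l then v l else 0 := by
    intro k l
    rw [hv, show f (ev k) (f (ev l) (w l)) = (f (ev k) * f (ev l)) (w l) from rfl, ← map_mul,
      hee k l]
    split_ifs with hkl
    · rw [hkl]
    · rw [map_zero, LinearMap.zero_apply]
  -- the combined linearly independent family
  set u : (Fin ρ ⊕ {i // d i = t}) → (CMIndex ρ m → ℂ) :=
    Sum.elim v (fun i => φ (Pi.single i.1 1)) with hu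
  have hindep : LinearIndependent ℂ u := by
    rw [Fintype.linearIndependent_iff]
    intro c hc
    rw [Fintype.sum_sum_type] at hc
    set z : CMIndex ρ m → ℂ := fun i => if hi : d i = t then c (Sum.inr ⟨i, hi⟩) else 0 with hz
    have hzsum : ∑ i : {i // d i = t}, c (Sum.inr i) • (Pi.single i.1 1 : CMIndex ρ m → ℂ)
        = z := by
      funext j
      rw [Finset.sum_apply]
      by_cases hj : d j = t
      · rw [show z j = c (Sum.inr ⟨j, hj⟩) from dif_pos hj]
        rw [Finset.sum_eq_single_of_mem (⟨j, hj⟩ : {i // d i = t}) (Finset.mem_univ _)]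
        · rw [Pi.smul_apply, Pi.single_eq_same, smul_eq_mul, mul_one]
        · intro i _ hne
          have hij : j ≠ i.1 := fun hij => hne (Subtype.ext hij.symm)
          rw [Pi.smul_apply, Pi.single_eq_of_ne hij, smul_zero]
      · rw [show z j = 0 from dif_neg hj]
        refine Finset.sum_eq_zero fun i _ => ?_
        have hij : j ≠ i.1 := fun hij => hj (hij ▸ i.2)
        rw [Pi.smul_apply, Pi.single_eq_of_ne hij, smul_zero]
    have hφz : ∑ i : {i // d i = t}, c (Sum.inr i) • u (Sum.inr i) = φ z := by
      calc ∑ i : {i // d i = t}, c (Sum.inr i) • u (Sum.inr i)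
          = ∑ i : {i // d i = t}, φ (c (Sum.inr i) • (Pi.single i.1 1 : CMIndex ρ m → ℂ)) := by
            refine Finset.sum_congr rfl fun i _ => ?_
            rw [hu, map_smul]
            rfl
        _ = φ (∑ i : {i // d i = t}, c (Sum.inr i) • (Pi.single i.1 1 : CMIndex ρ m → ℂ)) :=
            (map_sum φ _ _).symm
        _ = φ z := by rw [hzsum]
    set X : CMIndex ρ m → ℂ := ∑ k, c (Sum.inl k) • v k with hX
    have hcX : X + φ z = 0 := by
      rw [hX, ← hφz, ← hc]
      congr 1
    have hXiso : h X X = 0 := by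
      rw [hX, h_sum_left h h_addl h_smull]
      refine Finset.sum_eq_zero fun k _ => ?_
      rw [h_sum_right h h_addr h_smulr]
      rw [Finset.sum_eq_zero fun l _ => by rw [hviso k l, mul_zero], mul_zero]
    have hXz : X = (-1 : ℂ) • φ z := by
      rw [neg_one_smul]
      exact eq_neg_of_add_eq_zero_left hcX
    have hφzz : h (φ z) (φ z) = 0 := by
      have e1 : h X X = h (φ z) (φ z) := by
        rw [hXz, h_smull, h_smulr]
        simp
      rw [← e1, hXiso]
    have hsum0 : (t : ℂ) * ((∑ i, Complex.normSq (z i) : ℝ) : ℂ) = 0 := by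
      rw [← hφzz, hform]
      push_cast
      rw [Finset.mul_sum]
      refine (Finset.sum_congr rfl fun i _ => ?_).symm
      by_cases hi : d i = t
      · rw [hi, mul_assoc, Complex.star_def, Complex.mul_conj]
      · rw [show z i = 0 from dif_neg hi]
        simp
    have ht0 : (t : ℂ) ≠ 0 := by
      rcases ht with h1 | h1 <;> rw [h1] <;> norm_num
    have hsq : ∑ i, Complex.normSq (z i) = 0 := by
      have := mul_eq_zero.1 hsum0
      rcases this with h1 | h1
      · exact absurd h1 ht0
      · exact_mod_cast h1
    have hz0 : z = 0 := by
      funext i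
      have hnn : ∀ i ∈ Finset.univ, (0:ℝ) ≤ Complex.normSq (z i) :=
        fun i _ => Complex.normSq_nonneg _
      have := (Finset.sum_eq_zero_iff_of_nonneg hnn).1 hsq i (Finset.mem_univ i)
      exact Complex.normSq_eq_zero.1 this
    have hbzero : ∀ i : {i // d i = t}, c (Sum.inr i) = 0 := by
      rintro ⟨i, hi⟩
      have := congrFun hz0 i
      rw [show z i = c (Sum.inr ⟨i, hi⟩) from dif_pos hi] at this
      exact this
    have hX0 : X = 0 := by
      rw [hXz, hz0, map_zero, smul_zero]
    have havzero : ∀ k, c (Sum.inl k) = 0 := by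
      intro k
      have h1 : f (ev k) X = 0 := by rw [hX0, map_zero]
      rw [hX, map_sum] at h1
      have h2 : ∀ l, f (ev k) (c (Sum.inl l) • v l)
          = if k = l then c (Sum.inl l) • v l else 0 := by
        intro l
        rw [map_smul, hvv k l]
        split_ifs <;> simp
      rw [Finset.sum_congr rfl fun l _ => h2 l] at h1
      rw [Finset.sum_ite_eq Finset.univ k (fun l => c (Sum.inl l) • v l)] at h1
      rw [if_pos (Finset.mem_univ k)] at h1
      rcases smul_eq_zero.1 h1 with h3 | h3
      · exact h3
      · exact absurd h3 (by simpa [hv] using hw k)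
    intro i
    rcases i with k | i
    · exact havzero k
    · exact hbzero i
  have hcard := hindep.fintype_card_le_finrank
  rw [Module.finrank_fintype_fun_eq_card, Fintype.card_sum, Fintype.card_fin] at hcard
  exact hcard

/-- Let `E = ℂ^n` (`n = 2ρ + m`) with the involution `σ` built from `ρ`
split pairs and `m` conjugation factors, and let `h` be a nondegenerate hermitian form of rank
`n` over `ℂ/ℝ`.  Then `(E,σ)` embeds into `(M_n(ℂ), adjoint involution of h)` as an algebra
with involution if and only if the signature of `h` is `(r+ρ, s+ρ)` for some nonnegative
integers `r, s` with `r + s = m`. -/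
theorem cm_embedding_iff_signature
    (ρ m : ℕ)
    (h : (CMIndex ρ m → ℂ) → (CMIndex ρ m → ℂ) → ℂ)
    (h_addl : ∀ x x' y, h (x + x') y = h x y + h x' y)
    (h_addr : ∀ x y y', h x (y + y') = h x y + h x y')
    (h_smull : ∀ (l : ℂ) x y, h (l • x) y = l * h x y)
    (h_smulr : ∀ (l : ℂ) x y, h x (l • y) = star l * h x y)
    (h_herm : ∀ x y, h y x = star (h x y))
    (h_nd : ∀ x, (∀ y, h x y = 0) → x = 0) :
    (∃ f : (CMIndex ρ m → ℂ) →ₐ[ℂ] Module.End ℂ (CMIndex ρ m → ℂ),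
        Function.Injective f ∧
        ∀ (e : CMIndex ρ m → ℂ) (x y : CMIndex ρ m → ℂ),
          h (f e x) y = h x (f (cmInvolution ρ m e) y)) ↔
    (∃ r s : ℕ, r + s = m ∧ HasSignature h (r + ρ) (s + ρ)) := by
  constructor
  · rintro ⟨f, hinj, hcompat⟩
    obtain ⟨p, q, hpq, hsig⟩ := exists_signature h h_addl h_addr h_smull h_smulr h_herm h_nd
    have hcard : Fintype.card (CMIndex ρ m) = 2 * ρ + m := by
      simp [Fintype.card_sum, Fintype.card_prod]
      ring
    obtain ⟨φ, d, hd, hform, hc1, hc2⟩ := hsig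
    have hb1 := rho_card_bound ρ m h h_addl h_addr h_smull h_smulr f hinj hcompat 1
      (Or.inl rfl) φ d hform
    have hb2 := rho_card_bound ρ m h h_addl h_addr h_smull h_smulr f hinj hcompat (-1)
      (Or.inr rfl) φ d hform
    have hp : Fintype.card {i // d i = (1:ℝ)} = p := by rw [← Nat.card_eq_fintype_card, hc1]
    have hq : Fintype.card {i // d i = (-1:ℝ)} = q := by rw [← Nat.card_eq_fintype_card, hc2]
    rw [hp, hcard] at hb1
    rw [hq, hcard] at hb2
    rw [hcard] at hpq
    refine ⟨p - ρ, q - ρ, by omega, ?_⟩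
    have hρp : ρ ≤ p := by omega
    have hρq : ρ ≤ q := by omega
    rw [Nat.sub_add_cancel hρp, Nat.sub_add_cancel hρq]
    exact ⟨φ, d, hd, hform, hc1, hc2⟩
  · rintro ⟨r, s, hrs, hsig⟩
    exact embedding_of_signature ρ m r s hrs h hsig
end

section
/- Let K be a field of characteristic ≠ 2, A a central simple K-algebra of even degree 2r with orthogonal involution θ, and ε : (E,σ) → (A,θ) an embedding of an étale algebra with involution of rank 2r satisfying the dimension condition. Suppose γ ∈ A^× is a similitude of (A,θ) (i.e. γθ(γ) = λ ∈ K^×) such that Int(γ) ∘ ε ∘ σ = ε. Then γ is a proper similitude (Nrd(γ) = λ^r) if r is even, and an improper similitude (Nrd(γ) = −λ^r) if r is odd. -/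
/-- Let `K` be a field of characteristic `≠ 2`, `A` a central simple
`K`-algebra of even degree `2r` with orthogonal involution `θ`, and `ε : (E,σ) → (A,θ)` an
embedding of an étale algebra with involution of rank `2r` satisfying the dimension
condition (`E = F(√d)` with `σ(x) = −x` for `x = √d`).  Suppose `γ ∈ A^×` is a similitude of
`(A,θ)` (i.e. `γ·θ(γ) = λ ∈ K^×`) such that `Int(γ) ∘ ε ∘ σ = ε`.  Then `γ` is a proper
similitude (`Nrd(γ) = λ^r`) if `r` is even, and an improper similitude (`Nrd(γ) = −λ^r`) if
`r` is odd; uniformly: `Nrd(γ) = (−1)^r·λ^r`.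

The reduced norm `Nrd` and the generalized Pfaffian `π_θ : Skew(A,θ) → Z(A,θ)` are given as
data satisfying their characteristic properties (cf. [KMRT 98, §8]). -/
theorem similitude_proper_iff_even
    (K : Type u) [Field K] (h2 : (2 : K) ≠ 0)
    (A : Type u) [Ring A] [Algebra K A] [Algebra.IsCentral K A] [IsSimpleRing A]
    (r : ℕ) (hr : 0 < r) (hdeg : Module.finrank K A = (2 * r) ^ 2)
    -- the orthogonal involution θ
    (θ : A → A) (hθadd : ∀ x y, θ (x + y) = θ x + θ y)
    (hθmul : ∀ x y, θ (x * y) = θ y * θ x) (hθinv : ∀ x, θ (θ x) = x)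
    (hθsmul : ∀ (c : K) (x : A), θ (c • x) = c • θ x)
    -- the étale algebra with involution (E, σ), of rank 2r with fixed algebra of rank r,
    -- embedded in (A, θ) via ε
    (E : Type u) [CommRing E] [Algebra K E] [Module.Finite K E] [Algebra.Etale K E]
    (hE : Module.finrank K E = 2 * r)
    (σ : E →ₐ[K] E) (hσ : ∀ e, σ (σ e) = e)
    (ε : E →ₐ[K] A) (hεinj : Function.Injective ε)
    (hεθ : ∀ e : E, θ (ε e) = ε (σ e))
    -- E = F(√d): a σ-skew unit x
    (x : E) (hxσ : σ x = -x) (hxu : IsUnit x)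
    -- the reduced norm of A, as data with its characteristic properties
    (Nrd : A → K)
    (hNrd_unit : ∀ u : A, IsUnit u → Nrd u ≠ 0)
    -- the center Z(A,θ) of the Clifford algebra and the generalized Pfaffian π_θ
    (Z : Type u) [CommRing Z] [Algebra K Z]
    (hZinj : Function.Injective (algebraMap K Z))
    (hZunit : ∀ c : K, c ≠ 0 → IsUnit (algebraMap K Z c))
    (pf : A → Z)
    (hpf_transport : ∀ (g a : A), θ a = -a → pf (g * a * θ g) = Nrd g • pf a)
    (hpf_sq : ∀ a : A, θ a = -a → pf a ^ 2 = algebraMap K Z ((-1) ^ r * Nrd a))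
    (hpf_smul : ∀ (c : K) (a : A), θ a = -a → pf (c • a) = c ^ r • pf a)
    (hNrdx : Nrd (ε x) ≠ 0)
    -- γ is a similitude with multiplier λ, with Int(γ) ∘ ε ∘ σ = ε
    (γ γi : A) (hγi : γ * γi = 1) (hγi' : γi * γ = 1)
    (lam : K) (hlam : lam ≠ 0) (hsim : γ * θ γ = algebraMap K A lam)
    (hint : ∀ e : E, γ * ε (σ e) * γi = ε e) :
    Nrd γ = (-1) ^ r * lam ^ r := by
  set a := ε x with ha_def
  have ha : θ a = -a := by rw [ha_def, hεθ, hxσ, map_neg]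
  have hainv : γ * a * γi = -a := by
    have h := hint x
    rw [hxσ, map_neg] at h
    have h2' : γ * a * γi = -(γ * (-(ε x)) * γi) := by noncomm_ring
    rw [h2', h, ha_def]
  have hθγ : θ γ = lam • γi := by
    have h1 : γi * (γ * θ γ) = γi * algebraMap K A lam := by rw [hsim]
    rw [← mul_assoc, hγi', one_mul] at h1
    rw [h1, Algebra.smul_def, Algebra.commutes]
  have key : pf ((-lam) • a) = Nrd γ • pf a := by
    have h := hpf_transport γ a ha
    rw [hθγ, mul_smul_comm, hainv, smul_neg, ← neg_smul] at h
    exact h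
  have key2 : ((-lam) ^ r) • pf a = Nrd γ • pf a := by
    rw [← hpf_smul (-lam) a ha, key]
  have hNa : ((-1 : K) ^ r * Nrd a) ≠ 0 :=
    mul_ne_zero (pow_ne_zero _ (neg_ne_zero.mpr one_ne_zero)) hNrdx
  have hu : IsUnit (pf a) := by
    have h1 := hZunit _ hNa
    rw [← hpf_sq a ha, sq] at h1
    exact isUnit_of_mul_isUnit_left h1
  have heq : (-lam) ^ r = Nrd γ := by
    apply hZinj
    rw [Algebra.smul_def, Algebra.smul_def] at key2
    exact hu.mul_right_cancel key2
  rw [← heq, neg_pow]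
end
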